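/- arXiv:2510.20461 — 4 statements merged into one kernel-verified Lean document; each statement's English description precedes it below -/
import Mathlib

section
/- Let (c_x) be a monotone KCM constraint family of range r on Z^d satisfying the irreducibility assumption. Let μ and μ' be probability measures on Ω satisfying detailed balance, with μ' a product measure. Assume there is a stable configuration β such that μ({η : BP(η) = β}) = μ'({η : BP(η) = β}) = 1 (both measures are supported on the ergodic component of β) and lim_{N→∞} μ({η : BP^{Λ_N}(η|_{Λ_N}) = β|_{Λ_N}}) = lim_{N→∞} μ'({η : BP^{Λ_N}(η|_{Λ_N}) = β|_{Λ_N}}) = 1. Then μ = μ'. -/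
open MeasureTheory
open scoped Classical ENNReal

/-- Sites of the `d`-dimensional lattice `ℤ^d`. -/
abbrev Site (d : ℕ) : Type := Fin d → ℤ

/-- Configurations on `ℤ^d`: healthy = `true` (state 1), infected = `false` (state 0). -/
abbrev Cfg (d : ℕ) : Type := Site d → Bool

/-- The cylinder event of configurations agreeing with `ζ` on the finite set `Λ`. -/
def cyl (d : ℕ) (Λ : Finset (Site d)) (ζ : Cfg d) : Set (Cfg d) := {η | ∀ x ∈ Λ, η x = ζ x}

/-- A KCM constraint family of range `r`: `c x η` depends only on the states `η y`
for `0 < ‖y - x‖_∞ ≤ r` (in particular not on `η x`). -/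
def HasRange (d : ℕ) (c : Site d → Cfg d → ℝ) (r : ℕ) : Prop :=
  ∀ (x : Site d) (η η' : Cfg d),
    (∀ y : Site d, y ≠ x → (∀ i : Fin d, |y i - x i| ≤ (r : ℤ)) → η y = η' y) →
      c x η = c x η'

/-- The constraint family is monotone: more infections can only increase the rates. -/
def ConstraintMono (d : ℕ) (c : Site d → Cfg d → ℝ) : Prop :=
  ∀ (x : Site d) (η η' : Cfg d), η ≤ η' → c x η' ≤ c x η

/-- Extension of a configuration by healthy (`1`) boundary conditions outside `Λ`. -/
def extCfg (d : ℕ) (Λ : Finset (Site d)) (η : Cfg d) : Cfg d := fun x =>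
  if x ∈ Λ then η x else true

/-- One step of bootstrap percolation restricted to `Λ` (with healthy boundary conditions):
a site of `Λ` becomes infected if it is infected or its constraint is strictly positive. -/
noncomputable def bstepFin (d : ℕ) (c : Site d → Cfg d → ℝ) (Λ : Finset (Site d))
    (η : Cfg d) : Cfg d := fun x =>
  if x ∈ Λ then (η x && !decide (0 < c x η)) else η x

/-- `BP^Λ(η)`: the limit of bootstrap percolation restricted to `Λ`, applied to `η` extended
by `1` outside `Λ` (since each non-trivial step infects at least one new site of `Λ`,
`Λ.card` iterations reach the monotone limit). -/
noncomputable def BPfin (d : ℕ) (c : Site d → Cfg d → ℝ) (Λ : Finset (Site d))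
    (η : Cfg d) : Cfg d :=
  (bstepFin d c Λ)^[Λ.card] (extCfg d Λ η)

/-- One step of bootstrap percolation on the whole lattice. -/
noncomputable def bstep (d : ℕ) (c : Site d → Cfg d → ℝ) (η : Cfg d) : Cfg d := fun x =>
  η x && !decide (0 < c x η)

/-- `BP(η)`: the pointwise monotone limit of the bootstrap percolation iterates. -/
noncomputable def BP (d : ℕ) (c : Site d → Cfg d → ℝ) (η : Cfg d) : Cfg d := fun x =>
  decide (∀ n : ℕ, (bstep d c)^[n] η x = true)

/-- The configuration `η` flipped at `x`. -/
def flipAt (d : ℕ) (η : Cfg d) (x : Site d) : Cfg d := Function.update η x (!(η x))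

/-- A legal flip inside `Λ`: a flip at a site `x ∈ Λ` whose constraint (evaluated on the
current configuration, which is extended by `1` outside `Λ`) is strictly positive. -/
def LegalStep (d : ℕ) (c : Site d → Cfg d → ℝ) (Λ : Finset (Site d)) (η η' : Cfg d) : Prop :=
  ∃ x ∈ Λ, 0 < c x η ∧ η' = flipAt d η x

/-- Irreducibility assumption: within every finite volume `Λ` (with healthy boundary
conditions), any two configurations with the same restricted bootstrap limit are connected
by a chain of legal flips. -/
def IrreducibleKCM (d : ℕ) (c : Site d → Cfg d → ℝ) : Prop :=
  ∀ (Λ : Finset (Site d)) (ζ ζ' : Cfg d), BPfin d c Λ ζ = BPfin d c Λ ζ' →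
    Relation.ReflTransGen (LegalStep d c Λ) (extCfg d Λ ζ) (extCfg d Λ ζ')

/-- Detailed balance for `μ`: for every finite `Λ`, every `x` with `x + [-r,r]^d ⊆ Λ`, and
every `ζ ∈ {0,1}^Λ`, `c_x(ζ) π_Λ(ζ^x) μ(η|_Λ = ζ) = c_x(ζ) π_Λ(ζ) μ(η|_Λ = ζ^x)`. -/
def DetailedBalance (d : ℕ) (c : Site d → Cfg d → ℝ) (p : ℝ) (r : ℕ)
    (μ : Measure (Cfg d)) : Prop :=
  ∀ (Λ : Finset (Site d)) (x : Site d),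
    (∀ y : Site d, (∀ i : Fin d, |y i - x i| ≤ (r : ℤ)) → y ∈ Λ) →
    ∀ ζ : Cfg d,
      c x ζ * (∏ y ∈ Λ, if flipAt d ζ x y then p else 1 - p) * (μ (cyl d Λ ζ)).toReal
        = c x ζ * (∏ y ∈ Λ, if ζ y then p else 1 - p) *
            (μ (cyl d Λ (flipAt d ζ x))).toReal

/-- `ν` is the product measure on `{0,1}^{ℤ^d}` with marginals `ν(η_x = 1) = m x`. -/
def IsProd (d : ℕ) (m : Site d → ℝ) (ν : Measure (Cfg d)) : Prop :=
  IsProbabilityMeasure ν ∧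
    ∀ (Λ : Finset (Site d)) (ζ : Cfg d),
      ν (cyl d Λ ζ) = ∏ x ∈ Λ, ENNReal.ofReal (if ζ x then m x else 1 - m x)

/-- The box `Λ_N = [-N,N]^d ∩ ℤ^d`. -/
noncomputable def box (d : ℕ) (N : ℕ) : Finset (Site d) :=
  Fintype.piFinset fun _ : Fin d => Finset.Icc (-(N : ℤ)) (N : ℤ)

namespace KCMaux

variable {d : ℕ}

lemma mem_box {M : ℕ} {x : Site d} : x ∈ box d M ↔ ∀ i, |x i| ≤ (M : ℤ) := by
  simp [box, Fintype.mem_piFinset, Finset.mem_Icc, abs_le, neg_le, and_comm]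

lemma box_subset {M M' : ℕ} (h : M ≤ M') : box d M ⊆ box d M' := fun x hx => by
  rw [mem_box] at *
  intro i
  exact le_trans (hx i) (by exact_mod_cast h)

lemma box_nbhd {M r : ℕ} {x y : Site d} (hx : x ∈ box d M)
    (hy : ∀ i, |y i - x i| ≤ (r : ℤ)) : y ∈ box d (M + r) := by
  rw [mem_box] at *
  intro i
  have h1 : |y i| ≤ |x i| + |y i - x i| := by
    have := abs_add_le (x i) (y i - x i); simpa using this
  have h2 := hy i
  have h3 := hx i
  push_cast
  linarith

lemma measurableSet_cyl (Λ : Finset (Site d)) (ζ : Cfg d) : MeasurableSet (cyl d Λ ζ) := by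
  have : cyl d Λ ζ = ⋂ x ∈ Λ, (fun η : Cfg d => η x) ⁻¹' {ζ x} := by
    ext η; simp [cyl]
  rw [this]
  exact MeasurableSet.biInter Λ.countable_toSet fun x _ =>
    measurable_pi_apply x (measurableSet_singleton (ζ x))

lemma extCfg_congr {Λ : Finset (Site d)} {η η' : Cfg d} (h : ∀ x ∈ Λ, η x = η' x) :
    extCfg d Λ η = extCfg d Λ η' := by
  funext x; unfold extCfg; split_ifs with hx
  · exact h x hx
  · rfl

lemma BPfin_congr {c : Site d → Cfg d → ℝ} {Λ : Finset (Site d)} {η η' : Cfg d}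
    (h : ∀ x ∈ Λ, η x = η' x) : BPfin d c Λ η = BPfin d c Λ η' := by
  unfold BPfin; rw [extCfg_congr h]

lemma BPfin_not_mem {c : Site d → Cfg d → ℝ} {Λ : Finset (Site d)} {η : Cfg d} {x : Site d}
    (hx : x ∉ Λ) : BPfin d c Λ η x = true := by
  unfold BPfin
  have key : ∀ n, (bstepFin d c Λ)^[n] (extCfg d Λ η) x = extCfg d Λ η x := by
    intro n
    induction n with
    | zero => rfl
    | succ n ih =>
      rw [Function.iterate_succ_apply']
      show (if x ∈ Λ then _ else ((bstepFin d c Λ)^[n] (extCfg d Λ η)) x) = _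
      rw [if_neg hx, ih]
  rw [key]
  unfold extCfg
  rw [if_neg hx]

/-- Embedding of a finitely-supported pattern into a full configuration (healthy outside). -/
noncomputable def embF (B : Finset (Site d)) (σ : {x // x ∈ B} → Bool) : Cfg d :=
  fun x => if h : x ∈ B then σ ⟨x, h⟩ else true

lemma embF_mem {B : Finset (Site d)} {σ : {x // x ∈ B} → Bool} {x : Site d} (h : x ∈ B) :
    embF B σ x = σ ⟨x, h⟩ := dif_pos h

lemma embF_not_mem {B : Finset (Site d)} {σ : {x // x ∈ B} → Bool} {x : Site d} (h : x ∉ B) :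
    embF B σ x = true := dif_neg h

lemma cyl_embF_disjoint {B : Finset (Site d)} {σ σ' : {x // x ∈ B} → Bool} (h : σ ≠ σ') :
    Disjoint (cyl d B (embF B σ)) (cyl d B (embF B σ')) := by
  rw [Set.disjoint_left]
  intro η h1 h2
  apply h
  funext x
  have e1 := h1 x.1 x.2
  have e2 := h2 x.1 x.2
  rw [embF_mem x.2] at e1 e2
  rw [← e1, ← e2]

lemma measure_decomp (μ : Measure (Cfg d)) (B : Finset (Site d))
    (F : Finset ({x // x ∈ B} → Bool)) :
    μ (⋃ σ ∈ F, cyl d B (embF B σ)) = ∑ σ ∈ F, μ (cyl d B (embF B σ)) :=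
  measure_biUnion_finset (fun σ _ σ' _ hne => cyl_embF_disjoint hne)
    (fun σ _ => measurableSet_cyl _ _)

/-- Opaque membership predicate (kept as a plain `def` so that instance search only ever
finds the classical decidability instance for it). -/
def memPred (S : Set (Cfg d)) (B : Finset (Site d)) (σ : {x // x ∈ B} → Bool) : Prop :=
  embF B σ ∈ S

lemma set_eq_biUnion (B : Finset (Site d)) (S : Set (Cfg d))
    (hS : ∀ η η' : Cfg d, (∀ x ∈ B, η x = η' x) → η ∈ S → η' ∈ S) :
    S = ⋃ σ ∈ Finset.univ.filter (fun σ : {x // x ∈ B} → Bool => memPred S B σ),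
        cyl d B (embF B σ) := by
  ext η
  simp only [Set.mem_iUnion, Finset.mem_filter, Finset.mem_univ, true_and, exists_prop]
  constructor
  · intro hη
    refine ⟨fun x => η x, show embF B _ ∈ S from hS η _ (fun x hx => ?_) hη,
      fun x hx => ?_⟩ <;> rw [embF_mem hx]
  · rintro ⟨σ, hσ, hmem⟩
    exact hS _ η (fun x hx => (hmem x hx).symm) hσ

end KCMaux
namespace KCMaux

variable {d : ℕ}

/-- Product weight `π_Λ`. -/
noncomputable def wgt (p : ℝ) (Λ : Finset (Site d)) (η : Cfg d) : ℝ :=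
  ∏ y ∈ Λ, if η y then p else 1 - p

lemma wgt_pos {p : ℝ} (h0 : 0 < p) (h1 : p < 1) (Λ : Finset (Site d)) (η : Cfg d) :
    0 < wgt p Λ η :=
  Finset.prod_pos fun y _ => by by_cases h : η y <;> simp [h] <;> linarith

lemma wgt_congr {p : ℝ} {Λ : Finset (Site d)} {η η' : Cfg d} (h : ∀ x ∈ Λ, η x = η' x) :
    wgt p Λ η = wgt p Λ η' :=
  Finset.prod_congr rfl fun x hx => by rw [h x hx]

lemma wgt_sdiff {p : ℝ} {Λ B : Finset (Site d)} (h : Λ ⊆ B) (η : Cfg d) :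
    wgt p B η = wgt p (B \ Λ) η * wgt p Λ η := (Finset.prod_sdiff h).symm

lemma db_flip {q p : ℝ} (hq0 : 0 < q) (hq1 : q < 1) (hp : p = 1 - q)
    {r : ℕ} {c : Site d → Cfg d → ℝ} {μ : Measure (Cfg d)}
    (hdb : DetailedBalance d c p r μ) {Λ : Finset (Site d)} {x : Site d}
    (hx : ∀ y : Site d, (∀ i : Fin d, |y i - x i| ≤ (r : ℤ)) → y ∈ Λ)
    {ζ : Cfg d} (hc : 0 < c x ζ) :
    wgt p Λ (flipAt d ζ x) * (μ (cyl d Λ ζ)).toReal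
      = wgt p Λ ζ * (μ (cyl d Λ (flipAt d ζ x))).toReal := by
  have h := hdb Λ x hx ζ
  rw [mul_assoc, mul_assoc] at h
  exact mul_left_cancel₀ (ne_of_gt hc) h

lemma chain_ratio {q p : ℝ} (hq0 : 0 < q) (hq1 : q < 1) (hp : p = 1 - q)
    {r : ℕ} {c : Site d → Cfg d → ℝ} {μ : Measure (Cfg d)}
    (hdb : DetailedBalance d c p r μ) {Λs Λb : Finset (Site d)}
    (hsub : ∀ x ∈ Λs, ∀ y : Site d, (∀ i : Fin d, |y i - x i| ≤ (r : ℤ)) → y ∈ Λb)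
    {η η' : Cfg d} (h : Relation.ReflTransGen (LegalStep d c Λs) η η') :
    (μ (cyl d Λb η)).toReal * wgt p Λb η' = (μ (cyl d Λb η')).toReal * wgt p Λb η := by
  have hp0 : 0 < p := by rw [hp]; linarith
  have hp1 : p < 1 := by rw [hp]; linarith
  induction h with
  | refl => rfl
  | @tail b c' hab hbc ih =>
    obtain ⟨x, hxΛ, hcx, rfl⟩ := hbc
    have key := db_flip hq0 hq1 hp hdb (fun y hy => hsub x hxΛ y hy) hcx
    have hw : wgt p Λb b ≠ 0 := (wgt_pos hp0 hp1 Λb b).ne'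
    apply mul_right_cancel₀ hw
    calc (μ (cyl d Λb η)).toReal * wgt p Λb (flipAt d b x) * wgt p Λb b
        = ((μ (cyl d Λb η)).toReal * wgt p Λb b) * wgt p Λb (flipAt d b x) := by ring
      _ = ((μ (cyl d Λb b)).toReal * wgt p Λb η) * wgt p Λb (flipAt d b x) := by rw [ih]
      _ = (wgt p Λb (flipAt d b x) * (μ (cyl d Λb b)).toReal) * wgt p Λb η := by ring
      _ = (wgt p Λb b * (μ (cyl d Λb (flipAt d b x))).toReal) * wgt p Λb η := by rw [key]
      _ = (μ (cyl d Λb (flipAt d b x))).toReal * wgt p Λb η * wgt p Λb b := by ring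

lemma transport {c : Site d → Cfg d → ℝ} (hmono : ConstraintMono d c)
    (Λ : Finset (Site d)) (g : Cfg d) {η η' : Cfg d}
    (h : Relation.ReflTransGen (LegalStep d c Λ) η η')
    (hη : ∀ x, x ∉ Λ → η x = true) :
    (∀ x, x ∉ Λ → η' x = true) ∧
      Relation.ReflTransGen (LegalStep d c Λ)
        (fun x => if x ∈ Λ then η x else g x) (fun x => if x ∈ Λ then η' x else g x) := by
  induction h with
  | refl => exact ⟨hη, Relation.ReflTransGen.refl⟩
  | @tail b c' hab hbc ih =>
    obtain ⟨x, hxΛ, hcx, rfl⟩ := hbc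
    obtain ⟨hb, hchain⟩ := ih
    constructor
    · intro y hy
      rw [flipAt, Function.update_of_ne (by rintro rfl; exact hy hxΛ)]
      exact hb y hy
    · refine hchain.tail ⟨x, hxΛ, ?_, ?_⟩
      · have hle : (fun z => if z ∈ Λ then b z else g z) ≤ b := by
          intro z
          by_cases hz : z ∈ Λ
          · simp [hz]
          · simp only [if_neg hz, hb z hz]
            exact Bool.le_true _
        exact lt_of_lt_of_le hcx (hmono x _ b hle)
      · funext z
        by_cases hz : z ∈ Λ
        · by_cases hzx : z = x
          · subst hzx
            simp [flipAt, hz]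
          · simp [flipAt, Function.update_of_ne hzx, hz]
        · have hzx : z ≠ x := by rintro rfl; exact hz hxΛ
          simp [flipAt, Function.update_of_ne hzx, hz]

end KCMaux
namespace KCMaux

variable {d : ℕ}

/-- Combine bulk of `σ` (inside `box d M`) with collar of `τ`. -/
noncomputable def cmb (M : ℕ) (B : Finset (Site d)) (σ τ : {x // x ∈ B} → Bool) : {x // x ∈ B} → Bool :=
  fun x => if (x : Site d) ∈ box d M then σ x else τ x

lemma embF_cmb_mem {M : ℕ} {B : Finset (Site d)} {σ τ : {x // x ∈ B} → Bool}
    (hMB : box d M ⊆ B) {x : Site d} (hx : x ∈ box d M) :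
    embF B (cmb M B σ τ) x = embF B σ x := by
  rw [embF_mem (hMB hx), embF_mem (hMB hx)]
  unfold cmb
  rw [if_pos hx]

lemma embF_cmb_not_mem {M : ℕ} {B : Finset (Site d)} {σ τ : {x // x ∈ B} → Bool}
    {x : Site d} (hx : x ∉ box d M) :
    embF B (cmb M B σ τ) x = embF B τ x := by
  by_cases hB : x ∈ B
  · rw [embF_mem hB, embF_mem hB]
    unfold cmb
    rw [if_neg hx]
  · rw [embF_not_mem hB, embF_not_mem hB]

lemma wgt_swap {p : ℝ} {M : ℕ} {B : Finset (Site d)} (hMB : box d M ⊆ B)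
    (σ τ : {x // x ∈ B} → Bool) :
    wgt p B (embF B σ) * wgt p B (embF B τ)
      = wgt p B (embF B (cmb M B σ τ)) * wgt p B (embF B (cmb M B τ σ)) := by
  rw [wgt_sdiff hMB (embF B σ), wgt_sdiff hMB (embF B τ),
    wgt_sdiff hMB (embF B (cmb M B σ τ)), wgt_sdiff hMB (embF B (cmb M B τ σ))]
  have c1 : wgt p (box d M) (embF B (cmb M B σ τ)) = wgt p (box d M) (embF B σ) :=
    wgt_congr fun x hx => embF_cmb_mem hMB hx
  have c2 : wgt p (B \ box d M) (embF B (cmb M B σ τ)) = wgt p (B \ box d M) (embF B τ) :=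
    wgt_congr fun x hx => embF_cmb_not_mem (Finset.mem_sdiff.mp hx).2
  have c3 : wgt p (box d M) (embF B (cmb M B τ σ)) = wgt p (box d M) (embF B τ) :=
    wgt_congr fun x hx => embF_cmb_mem hMB hx
  have c4 : wgt p (B \ box d M) (embF B (cmb M B τ σ)) = wgt p (B \ box d M) (embF B σ) :=
    wgt_congr fun x hx => embF_cmb_not_mem (Finset.mem_sdiff.mp hx).2
  rw [c1, c2, c3, c4]
  ring

lemma chain_embF {c : Site d → Cfg d → ℝ} {β : Cfg d}
    (hmono : ConstraintMono d c) (hirr : IrreducibleKCM d c)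
    {M : ℕ} {B : Finset (Site d)} (hMB : box d M ⊆ B)
    {σ σ' : {x // x ∈ B} → Bool}
    (hQ : ∀ x ∈ box d M, BPfin d c (box d M) (embF B σ) x = β x)
    (hQ' : ∀ x ∈ box d M, BPfin d c (box d M) (embF B σ') x = β x)
    (hcol : ∀ x : {x // x ∈ B}, (x : Site d) ∉ box d M → σ x = σ' x) :
    Relation.ReflTransGen (LegalStep d c (box d M)) (embF B σ) (embF B σ') := by
  have hBP : BPfin d c (box d M) (embF B σ) = BPfin d c (box d M) (embF B σ') := by
    funext x
    by_cases hx : x ∈ box d M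
    · rw [hQ x hx, hQ' x hx]
    · rw [BPfin_not_mem hx, BPfin_not_mem hx]
  have hchain := hirr (box d M) _ _ hBP
  have hext : ∀ x, x ∉ box d M → extCfg d (box d M) (embF B σ) x = true :=
    fun x hx => if_neg hx
  obtain ⟨-, hc2⟩ := transport hmono (box d M) (embF B σ) hchain hext
  have e1 : (fun x => if x ∈ box d M then extCfg d (box d M) (embF B σ) x else embF B σ x)
      = embF B σ := by
    funext x
    by_cases hx : x ∈ box d M
    · simp [extCfg, hx]
    · simp [hx]
  have e2 : (fun x => if x ∈ box d M then extCfg d (box d M) (embF B σ') x else embF B σ x)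
      = embF B σ' := by
    funext x
    by_cases hx : x ∈ box d M
    · simp [extCfg, hx]
    · rw [if_neg hx]
      by_cases hxB : x ∈ B
      · rw [embF_mem hxB, embF_mem hxB, hcol ⟨x, hxB⟩ hx]
      · rw [embF_not_mem hxB, embF_not_mem hxB]
  rwa [e1, e2] at hc2

end KCMaux
namespace KCMaux

variable {d : ℕ}

set_option maxHeartbeats 1000000 in
lemma key_id {q p : ℝ} (hq0 : 0 < q) (hq1 : q < 1) (hp : p = 1 - q)
    {r : ℕ} {c : Site d → Cfg d → ℝ}
    (μ : Measure (Cfg d)) [IsProbabilityMeasure μ] (hdb : DetailedBalance d c p r μ)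
    (M : ℕ) (Λ : Finset (Site d)) (ζ : Cfg d) (hΛ : Λ ⊆ box d M)
    (A : Set (Cfg d))
    (hAonly : ∀ η η' : Cfg d, (∀ x ∈ box d M, η x = η' x) → η ∈ A → η' ∈ A)
    (hAchain : ∀ σ σ' : {x // x ∈ box d (M + r)} → Bool,
      embF (box d (M + r)) σ ∈ A → embF (box d (M + r)) σ' ∈ A →
      (∀ x : {x // x ∈ box d (M + r)}, (x : Site d) ∉ box d M → σ x = σ' x) →
      Relation.ReflTransGen (LegalStep d c (box d M))
        (embF (box d (M + r)) σ) (embF (box d (M + r)) σ')) :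
    (μ A).toReal
        * ∑ σ ∈ Finset.univ.filter
            (fun σ : {x // x ∈ box d (M + r)} → Bool =>
              memPred (A ∩ cyl d Λ ζ) (box d (M + r)) σ),
            wgt p (box d (M + r)) (embF (box d (M + r)) σ)
      = (μ (A ∩ cyl d Λ ζ)).toReal
          * ∑ σ ∈ Finset.univ.filter
              (fun σ : {x // x ∈ box d (M + r)} → Bool =>
                memPred A (box d (M + r)) σ),
              wgt p (box d (M + r)) (embF (box d (M + r)) σ) := by
  have hp0 : 0 < p := by rw [hp]; linarith
  have hp1 : p < 1 := by rw [hp]; linarith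
  set B := box d (M + r) with hBdef
  have hMB : box d M ⊆ B := box_subset (Nat.le_add_right M r)
  have hSA : ∀ η η' : Cfg d, (∀ x ∈ B, η x = η' x) → η ∈ A → η' ∈ A :=
    fun η η' hag => hAonly η η' fun x hx => hag x (hMB hx)
  have hSA2 : ∀ η η' : Cfg d, (∀ x ∈ B, η x = η' x) →
      η ∈ A ∩ cyl d Λ ζ → η' ∈ A ∩ cyl d Λ ζ := by
    intro η η' hag hη
    refine ⟨hSA η η' hag hη.1, fun x hx => ?_⟩
    rw [← hag x (hMB (hΛ hx))]
    exact hη.2 x hx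
  -- decompositions into cylinders on B
  have dec1 : (μ A).toReal
      = ∑ σ ∈ Finset.univ.filter (fun σ : {x // x ∈ B} → Bool => memPred A B σ),
          (μ (cyl d B (embF B σ))).toReal := by
    have e : μ A = ∑ σ ∈ Finset.univ.filter (fun σ : {x // x ∈ B} → Bool => memPred A B σ),
        μ (cyl d B (embF B σ)) := by
      conv_lhs => rw [set_eq_biUnion B A hSA]
      exact measure_decomp μ B _
    rw [e, ENNReal.toReal_sum fun σ _ => measure_ne_top μ _]
  have dec2 : (μ (A ∩ cyl d Λ ζ)).toReal
      = ∑ σ ∈ Finset.univ.filter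
          (fun σ : {x // x ∈ B} → Bool => memPred (A ∩ cyl d Λ ζ) B σ),
          (μ (cyl d B (embF B σ))).toReal := by
    have e : μ (A ∩ cyl d Λ ζ) = ∑ σ ∈ Finset.univ.filter
        (fun σ : {x // x ∈ B} → Bool => memPred (A ∩ cyl d Λ ζ) B σ),
        μ (cyl d B (embF B σ)) := by
      conv_lhs => rw [set_eq_biUnion B (A ∩ cyl d Λ ζ) hSA2]
      exact measure_decomp μ B
        (Finset.univ.filter fun σ : {x // x ∈ B} → Bool => memPred (A ∩ cyl d Λ ζ) B σ)
    rw [e, ENNReal.toReal_sum fun σ _ => measure_ne_top μ _]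
  -- membership transfer under cmb
  have hAcmb : ∀ σ τ : {x // x ∈ B} → Bool, embF B σ ∈ A → embF B (cmb M B σ τ) ∈ A := by
    intro σ τ hσ
    exact hAonly _ _ (fun x hx => (embF_cmb_mem hMB hx).symm) hσ
  have hCcmb : ∀ σ τ : {x // x ∈ B} → Bool, embF B σ ∈ cyl d Λ ζ →
      embF B (cmb M B σ τ) ∈ cyl d Λ ζ := by
    intro σ τ hσ x hx
    rw [embF_cmb_mem hMB (hΛ hx)]
    exact hσ x hx
  -- the core pair identity
  have hpair : ∀ σ σ' : {x // x ∈ B} → Bool, embF B σ ∈ A → embF B σ' ∈ A →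
      (μ (cyl d B (embF B σ))).toReal * wgt p B (embF B σ')
        = (μ (cyl d B (embF B (cmb M B σ' σ)))).toReal
            * wgt p B (embF B (cmb M B σ σ')) := by
    intro σ σ' hσ hσ'
    have hQα : embF B (cmb M B σ' σ) ∈ A := hAcmb σ' σ hσ'
    have hcol : ∀ x : {x // x ∈ B}, (x : Site d) ∉ box d M → σ x = cmb M B σ' σ x := by
      intro x hx
      unfold cmb
      rw [if_neg hx]
    have hchain := hAchain σ (cmb M B σ' σ) hσ hQα hcol
    have hratio := chain_ratio (Λb := B) hq0 hq1 hp hdb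
      (fun x hx y hy => box_nbhd hx hy) hchain
    have hswap := wgt_swap (p := p) hMB σ σ'
    have hw : wgt p B (embF B (cmb M B σ' σ)) ≠ 0 := (wgt_pos hp0 hp1 _ _).ne'
    apply mul_right_cancel₀ hw
    calc (μ (cyl d B (embF B σ))).toReal * wgt p B (embF B σ')
            * wgt p B (embF B (cmb M B σ' σ))
        = ((μ (cyl d B (embF B σ))).toReal * wgt p B (embF B (cmb M B σ' σ)))
            * wgt p B (embF B σ') := by ring
      _ = ((μ (cyl d B (embF B (cmb M B σ' σ)))).toReal * wgt p B (embF B σ))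
            * wgt p B (embF B σ') := by rw [hratio]
      _ = (μ (cyl d B (embF B (cmb M B σ' σ)))).toReal
            * (wgt p B (embF B σ) * wgt p B (embF B σ')) := by ring
      _ = (μ (cyl d B (embF B (cmb M B σ' σ)))).toReal
            * (wgt p B (embF B (cmb M B σ σ')) * wgt p B (embF B (cmb M B σ' σ))) := by
          rw [hswap]
      _ = (μ (cyl d B (embF B (cmb M B σ' σ)))).toReal
            * wgt p B (embF B (cmb M B σ σ')) * wgt p B (embF B (cmb M B σ' σ)) := by ring
  -- put everything together via a bijection of index pairs
  rw [dec1, dec2, Finset.sum_mul_sum, Finset.sum_mul_sum,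
    ← Finset.sum_product', ← Finset.sum_product']
  refine Finset.sum_nbij' (i := fun pr => (cmb M B pr.2 pr.1, cmb M B pr.1 pr.2))
    (j := fun pr => (cmb M B pr.2 pr.1, cmb M B pr.1 pr.2)) ?_ ?_ ?_ ?_ ?_
  · rintro ⟨σ, σ'⟩ hm
    rw [Finset.mem_product, Finset.mem_filter, Finset.mem_filter] at hm ⊢
    obtain ⟨⟨-, h1⟩, ⟨-, h2⟩⟩ := hm
    exact ⟨⟨Finset.mem_univ _, hAcmb σ' σ h2.1, hCcmb σ' σ h2.2⟩,
      ⟨Finset.mem_univ _, hAcmb σ σ' h1⟩⟩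
  · rintro ⟨σ, σ'⟩ hm
    rw [Finset.mem_product, Finset.mem_filter, Finset.mem_filter] at hm ⊢
    obtain ⟨⟨-, h1⟩, ⟨-, h2⟩⟩ := hm
    exact ⟨⟨Finset.mem_univ _, hAcmb σ' σ h2⟩,
      ⟨Finset.mem_univ _, hAcmb σ σ' h1.1, hCcmb σ σ' h1.2⟩⟩
  · rintro ⟨σ, σ'⟩ -
    have e1 : cmb M B (cmb M B σ σ') (cmb M B σ' σ) = σ := by
      funext x
      unfold cmb
      by_cases hx : (x : Site d) ∈ box d M <;> simp [hx]
    have e2 : cmb M B (cmb M B σ' σ) (cmb M B σ σ') = σ' := by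
      funext x
      unfold cmb
      by_cases hx : (x : Site d) ∈ box d M <;> simp [hx]
    simp only [Prod.mk.injEq]
    exact ⟨e1, e2⟩
  · rintro ⟨σ, σ'⟩ -
    have e1 : cmb M B (cmb M B σ σ') (cmb M B σ' σ) = σ := by
      funext x
      unfold cmb
      by_cases hx : (x : Site d) ∈ box d M <;> simp [hx]
    have e2 : cmb M B (cmb M B σ' σ) (cmb M B σ σ') = σ' := by
      funext x
      unfold cmb
      by_cases hx : (x : Site d) ∈ box d M <;> simp [hx]
    simp only [Prod.mk.injEq]
    exact ⟨e1, e2⟩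
  · rintro ⟨σ, σ'⟩ hm
    rw [Finset.mem_product, Finset.mem_filter, Finset.mem_filter] at hm
    obtain ⟨⟨-, h1⟩, ⟨-, h2⟩⟩ := hm
    exact hpair σ σ' h1 h2.1

end KCMaux
namespace KCMaux

variable {d : ℕ}

lemma measure_zero_of_filter_empty (μ : Measure (Cfg d)) (B : Finset (Site d))
    (A : Set (Cfg d)) (hSA : ∀ η η' : Cfg d, (∀ x ∈ B, η x = η' x) → η ∈ A → η' ∈ A)
    (h : Finset.univ.filter (fun σ : {x // x ∈ B} → Bool => memPred A B σ) = ∅) :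
    μ A = 0 := by
  rw [set_eq_biUnion B A hSA, h]
  simp

end KCMaux

open KCMaux

/-- internal spanning: let `(c_x)` be a monotone KCM constraint family of
range `r` on `ℤ^d` satisfying the irreducibility assumption, and let `μ, μ'` satisfy
detailed balance, with `μ'` a product measure. If both are supported on the ergodic
component of a stable configuration `β` and
`μ(BP^{Λ_N}(η|_{Λ_N}) = β|_{Λ_N}) → 1`, `μ'(BP^{Λ_N}(η|_{Λ_N}) = β|_{Λ_N}) → 1`
as `N → ∞`, then `μ = μ'`. -/
theorem stmt6 (d : ℕ) (q p : ℝ) (hq0 : 0 < q) (hq1 : q < 1) (hp : p = 1 - q)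
    (r : ℕ) (c : Site d → Cfg d → ℝ) (hrange : HasRange d c r)
    (hc0 : ∀ x η, 0 ≤ c x η) (hmono : ConstraintMono d c) (hirr : IrreducibleKCM d c)
    (μ μ' : Measure (Cfg d))
    (hμ : IsProbabilityMeasure μ) (hμ' : IsProbabilityMeasure μ')
    (hdb : DetailedBalance d c p r μ) (hdb' : DetailedBalance d c p r μ')
    (hprod : ∃ m : Site d → ℝ, (∀ x, 0 ≤ m x ∧ m x ≤ 1) ∧ IsProd d m μ')
    (β : Cfg d) (hβ : BP d c β = β)
    (hsupp : μ {η | BP d c η = β} = 1) (hsupp' : μ' {η | BP d c η = β} = 1)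
    (hlim : Filter.Tendsto
      (fun N : ℕ => μ {η | ∀ x ∈ box d N, BPfin d c (box d N) η x = β x})
      Filter.atTop (nhds 1))
    (hlim' : Filter.Tendsto
      (fun N : ℕ => μ' {η | ∀ x ∈ box d N, BPfin d c (box d N) η x = β x})
      Filter.atTop (nhds 1)) :
    μ = μ' := by
  haveI := hμ
  haveI := hμ'
  have hp0 : 0 < p := by rw [hp]; linarith
  have hp1 : p < 1 := by rw [hp]; linarith
  -- Step 1: the two measures agree on every finite cylinder.
  have hcylEq : ∀ (Λ : Finset (Site d)) (ζ : Cfg d), μ (cyl d Λ ζ) = μ' (cyl d Λ ζ) := by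
    intro Λ ζ
    set N₀ : ℕ := Λ.sup fun x => Finset.univ.sup fun i => (x i).natAbs with hN₀def
    have hΛbox : ∀ M : ℕ, N₀ ≤ M → Λ ⊆ box d M := by
      intro M hM x hx
      rw [mem_box]
      intro i
      have h1 : (x i).natAbs ≤ N₀ :=
        le_trans (Finset.le_sup (f := fun i : Fin d => (x i).natAbs) (Finset.mem_univ i))
          (Finset.le_sup (f := fun x : Site d => Finset.univ.sup fun i => (x i).natAbs) hx)
      have h2 : ((x i).natAbs : ℤ) ≤ (M : ℤ) := by exact_mod_cast le_trans h1 hM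
      rwa [Int.abs_eq_natAbs]
    set A : ℕ → Set (Cfg d) :=
      fun M => {η | ∀ x ∈ box d M, BPfin d c (box d M) η x = β x} with hAdef
    have hAonly : ∀ M, ∀ η η' : Cfg d, (∀ x ∈ box d M, η x = η' x) →
        η ∈ A M → η' ∈ A M := by
      intro M η η' hag hη x hx
      rw [← BPfin_congr hag]
      exact hη x hx
    have hAchain : ∀ M, ∀ σ σ' : {x // x ∈ box d (M + r)} → Bool,
        embF (box d (M + r)) σ ∈ A M → embF (box d (M + r)) σ' ∈ A M →
        (∀ x : {x // x ∈ box d (M + r)}, (x : Site d) ∉ box d M → σ x = σ' x) →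
        Relation.ReflTransGen (LegalStep d c (box d M))
          (embF (box d (M + r)) σ) (embF (box d (M + r)) σ') := by
      intro M σ σ' hσ hσ' hcol
      exact chain_embF hmono hirr (box_subset (Nat.le_add_right M r)) hσ hσ' hcol
    -- the cross-multiplied identity for large M
    have cross : ∀ M : ℕ, N₀ ≤ M →
        (μ (A M)).toReal * (μ' (A M ∩ cyl d Λ ζ)).toReal
          = (μ' (A M)).toReal * (μ (A M ∩ cyl d Λ ζ)).toReal := by
      intro M hM
      have h1 := key_id hq0 hq1 hp μ hdb M Λ ζ (hΛbox M hM) (A M) (hAonly M) (hAchain M)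
      have h2 := key_id hq0 hq1 hp μ' hdb' M Λ ζ (hΛbox M hM) (A M) (hAonly M) (hAchain M)
      by_cases hne : (Finset.univ.filter
          (fun σ : {x // x ∈ box d (M + r)} → Bool =>
            memPred (A M) (box d (M + r)) σ)).Nonempty
      · have hWpos : 0 < ∑ σ ∈ Finset.univ.filter
            (fun σ : {x // x ∈ box d (M + r)} → Bool =>
              memPred (A M) (box d (M + r)) σ),
            wgt p (box d (M + r)) (embF (box d (M + r)) σ) :=
          Finset.sum_pos (fun σ _ => wgt_pos hp0 hp1 _ _) hne
        apply mul_right_cancel₀ hWpos.ne'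
        calc (μ (A M)).toReal * (μ' (A M ∩ cyl d Λ ζ)).toReal
              * ∑ σ ∈ Finset.univ.filter
                  (fun σ : {x // x ∈ box d (M + r)} → Bool =>
                    memPred (A M) (box d (M + r)) σ),
                  wgt p (box d (M + r)) (embF (box d (M + r)) σ)
            = (μ (A M)).toReal * ((μ' (A M ∩ cyl d Λ ζ)).toReal
                * ∑ σ ∈ Finset.univ.filter
                    (fun σ : {x // x ∈ box d (M + r)} → Bool =>
                      memPred (A M) (box d (M + r)) σ),
                    wgt p (box d (M + r)) (embF (box d (M + r)) σ)) := by ring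
          _ = (μ (A M)).toReal * ((μ' (A M)).toReal
                * ∑ σ ∈ Finset.univ.filter
                    (fun σ : {x // x ∈ box d (M + r)} → Bool =>
                      memPred (A M ∩ cyl d Λ ζ) (box d (M + r)) σ),
                    wgt p (box d (M + r)) (embF (box d (M + r)) σ)) := by rw [← h2]
          _ = (μ' (A M)).toReal * ((μ (A M)).toReal
                * ∑ σ ∈ Finset.univ.filter
                    (fun σ : {x // x ∈ box d (M + r)} → Bool =>
                      memPred (A M ∩ cyl d Λ ζ) (box d (M + r)) σ),
                    wgt p (box d (M + r)) (embF (box d (M + r)) σ)) := by ring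
          _ = (μ' (A M)).toReal * ((μ (A M ∩ cyl d Λ ζ)).toReal
                * ∑ σ ∈ Finset.univ.filter
                    (fun σ : {x // x ∈ box d (M + r)} → Bool =>
                      memPred (A M) (box d (M + r)) σ),
                    wgt p (box d (M + r)) (embF (box d (M + r)) σ)) := by rw [h1]
          _ = (μ' (A M)).toReal * (μ (A M ∩ cyl d Λ ζ)).toReal
                * ∑ σ ∈ Finset.univ.filter
                    (fun σ : {x // x ∈ box d (M + r)} → Bool =>
                      memPred (A M) (box d (M + r)) σ),
                    wgt p (box d (M + r)) (embF (box d (M + r)) σ) := by ring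
      · rw [Finset.not_nonempty_iff_eq_empty] at hne
        have hSA : ∀ η η' : Cfg d, (∀ x ∈ box d (M + r), η x = η' x) → η ∈ A M → η' ∈ A M :=
          fun η η' hag => hAonly M η η'
            (fun x hx => hag x (box_subset (Nat.le_add_right M r) hx))
        have z1 : μ (A M) = 0 := measure_zero_of_filter_empty μ _ _ hSA hne
        have z2 : μ' (A M) = 0 := measure_zero_of_filter_empty μ' _ _ hSA hne
        rw [z1, z2]
        simp
    -- limits
    have ha : Filter.Tendsto (fun M => (μ (A M)).toReal) Filter.atTop (nhds 1) := by
      have h := (ENNReal.tendsto_toReal ENNReal.one_ne_top).comp hlim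
      rw [ENNReal.toReal_one] at h
      exact h
    have ha' : Filter.Tendsto (fun M => (μ' (A M)).toReal) Filter.atTop (nhds 1) := by
      have h := (ENNReal.tendsto_toReal ENNReal.one_ne_top).comp hlim'
      rw [ENNReal.toReal_one] at h
      exact h
    have hbnd : ∀ (ν : Measure (Cfg d)), IsProbabilityMeasure ν → ∀ M : ℕ,
        (ν (A M)).toReal + (ν (cyl d Λ ζ)).toReal - 1 ≤ (ν (A M ∩ cyl d Λ ζ)).toReal ∧
        (ν (A M ∩ cyl d Λ ζ)).toReal ≤ (ν (cyl d Λ ζ)).toReal := by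
      intro ν hν M
      haveI := hν
      have hui := measure_union_add_inter (μ := ν) (A M) (measurableSet_cyl Λ ζ)
      have h1 : ((ν (A M ∪ cyl d Λ ζ)) + ν (A M ∩ cyl d Λ ζ)).toReal
          = ((ν (A M)) + ν (cyl d Λ ζ)).toReal := by rw [hui]
      rw [ENNReal.toReal_add (measure_ne_top _ _) (measure_ne_top _ _),
        ENNReal.toReal_add (measure_ne_top _ _) (measure_ne_top _ _)] at h1
      have hle1 : (ν (A M ∪ cyl d Λ ζ)).toReal ≤ 1 := by
        rw [← ENNReal.toReal_one]
        exact ENNReal.toReal_mono ENNReal.one_ne_top prob_le_one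
      refine ⟨by linarith, ?_⟩
      exact ENNReal.toReal_mono (measure_ne_top _ _) (measure_mono Set.inter_subset_right)
    have hsq : ∀ (ν : Measure (Cfg d)), IsProbabilityMeasure ν →
        Filter.Tendsto (fun M => (ν (A M)).toReal) Filter.atTop (nhds 1) →
        Filter.Tendsto (fun M => (ν (A M ∩ cyl d Λ ζ)).toReal) Filter.atTop
          (nhds (ν (cyl d Λ ζ)).toReal) := by
      intro ν hν hta
      have hlow : Filter.Tendsto
          (fun M => (ν (A M)).toReal + (ν (cyl d Λ ζ)).toReal - 1) Filter.atTop
          (nhds ((1 : ℝ) + (ν (cyl d Λ ζ)).toReal - 1)) :=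
        (hta.add tendsto_const_nhds).sub tendsto_const_nhds
      rw [show (1 : ℝ) + (ν (cyl d Λ ζ)).toReal - 1 = (ν (cyl d Λ ζ)).toReal by ring] at hlow
      exact tendsto_of_tendsto_of_tendsto_of_le_of_le hlow tendsto_const_nhds
        (fun M => (hbnd ν hν M).1) (fun M => (hbnd ν hν M).2)
    have hb := hsq μ hμ ha
    have hb' := hsq μ' hμ' ha'
    have t1 : Filter.Tendsto
        (fun M => (μ (A M)).toReal * (μ' (A M ∩ cyl d Λ ζ)).toReal) Filter.atTop
        (nhds ((μ' (cyl d Λ ζ)).toReal)) := by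
      have h := ha.mul hb'
      rw [one_mul] at h
      exact h
    have t2 : Filter.Tendsto
        (fun M => (μ' (A M)).toReal * (μ (A M ∩ cyl d Λ ζ)).toReal) Filter.atTop
        (nhds ((μ (cyl d Λ ζ)).toReal)) := by
      have h := ha'.mul hb
      rw [one_mul] at h
      exact h
    have heq : Filter.Tendsto
        (fun M => (μ (A M)).toReal * (μ' (A M ∩ cyl d Λ ζ)).toReal) Filter.atTop
        (nhds ((μ (cyl d Λ ζ)).toReal)) := by
      refine t2.congr' ?_
      filter_upwards [Filter.eventually_ge_atTop N₀] with M hM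
      exact (cross M hM).symm
    have hfin : (μ' (cyl d Λ ζ)).toReal = (μ (cyl d Λ ζ)).toReal :=
      tendsto_nhds_unique t1 heq
    exact ((ENNReal.toReal_eq_toReal_iff' (measure_ne_top μ' _) (measure_ne_top μ _)).mp hfin).symm
  -- Step 2: extend from cylinders to all measurable sets.
  refine ext_of_generate_finite (measurableCylinders (fun _ : Site d => Bool))
    generateFrom_measurableCylinders.symm isPiSystem_measurableCylinders ?_ ?_
  · intro s hs
    obtain ⟨I, S, hSm, rfl⟩ := (mem_measurableCylinders s).mp hs
    have hrep : cylinder I S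
        = ⋃ σ ∈ Finset.univ.filter (fun σ : {x // x ∈ I} → Bool => σ ∈ S),
            cyl d I (embF I σ) := by
      ext η
      simp only [mem_cylinder, Set.mem_iUnion, Finset.mem_filter, Finset.mem_univ, true_and,
        exists_prop]
      constructor
      · intro hη
        refine ⟨I.restrict η, hη, fun x hx => ?_⟩
        rw [embF_mem hx]
        rfl
      · rintro ⟨σ, hσ, hmem⟩
        have hres : I.restrict η = σ := by
          funext i
          have h := hmem i.1 i.2
          rw [embF_mem i.2] at h
          exact h
        rwa [hres]
    rw [hrep, measure_decomp, measure_decomp]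
    exact Finset.sum_congr rfl fun σ _ => hcylEq I (embF I σ)
  · rw [measure_univ, measure_univ]
end

section
/- Let (c_x) be a monotone KCM constraint family of range r on Z^d satisfying the irreducibility assumption, and suppose that lim_{N→∞} π({η : BP^{Λ_N}(η|_{Λ_N}) = 0_{Λ_N}}) = 1, where 0_{Λ_N} is the fully infected configuration on Λ_N. Let μ be a probability measure on Ω satisfying detailed balance such that BP(η) = 0 (the fully infected configuration of Ω) μ-almost surely. Then μ = π. -/
open MeasureTheory
open scoped Classical ENNReal

namespace S7

variable {d : ℕ} {c : Site d → Cfg d → ℝ}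

/-- `η` is more healthy than `η'`... actually: `Cle η η'` means `η` healthy-implies `η'` healthy,
i.e. `η ≤ η'` pointwise (false = infected below true = healthy). -/
def Cle (η η' : Cfg d) : Prop := ∀ x, η x = true → η' x = true

lemma Cle.refl (η : Cfg d) : Cle η η := fun _ h => h

lemma Cle.trans {η₁ η₂ η₃ : Cfg d} (h1 : Cle η₁ η₂) (h2 : Cle η₂ η₃) : Cle η₁ η₃ :=
  fun x hx => h2 x (h1 x hx)

lemma Cle.false_of {η η' : Cfg d} (h : Cle η η') {x : Site d} (hx : η' x = false) :
    η x = false := by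
  cases hη : η x with
  | false => rfl
  | true => rw [h x hη] at hx; cases hx

lemma cle_to_le {η η' : Cfg d} (h : Cle η η') : η ≤ η' := by
  intro x
  rw [Bool.le_iff_imp]
  exact h x

lemma cle_antisymm {η η' : Cfg d} (h : Cle η η') (h' : Cle η' η) : η = η' := by
  funext x
  cases hη : η x with
  | true => exact (h x hη).symm
  | false => exact ((h'.false_of hη)).symm

lemma bstepFin_cle_self (Λ : Finset (Site d)) (η : Cfg d) :
    Cle (bstepFin d c Λ η) η := by
  intro x hx
  by_cases hΛ : x ∈ Λ
  · simp only [bstepFin, if_pos hΛ, Bool.and_eq_true] at hx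
    exact hx.1
  · simpa only [bstepFin, if_neg hΛ] using hx

lemma bstepFin_mono (hmono : ConstraintMono d c) (Λ : Finset (Site d)) {η η' : Cfg d}
    (h : Cle η η') : Cle (bstepFin d c Λ η) (bstepFin d c Λ η') := by
  intro x hx
  by_cases hΛ : x ∈ Λ
  · simp only [bstepFin, if_pos hΛ, Bool.and_eq_true] at hx ⊢
    refine ⟨h x hx.1, ?_⟩
    have h2 := hx.2
    simp only [Bool.not_eq_true', decide_eq_false_iff_not] at h2 ⊢
    intro hc
    exact h2 (lt_of_lt_of_le hc (hmono x η η' (cle_to_le h)))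
  · simp only [bstepFin, if_neg hΛ] at hx ⊢
    exact h x hx

lemma bstepFin_outside (Λ : Finset (Site d)) (η : Cfg d) {x : Site d} (hx : x ∉ Λ) :
    bstepFin d c Λ η x = η x := by
  simp only [bstepFin, if_neg hx]

lemma iter_outside (Λ : Finset (Site d)) (η : Cfg d) {x : Site d} (hx : x ∉ Λ) :
    ∀ n, (bstepFin d c Λ)^[n] η x = η x := by
  intro n
  induction n with
  | zero => rfl
  | succ n ih =>
    rw [Function.iterate_succ_apply', bstepFin_outside Λ _ hx, ih]

lemma iter_cle (hmono : ConstraintMono d c) (Λ : Finset (Site d)) {η η' : Cfg d}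
    (h : Cle η η') (n : ℕ) :
    Cle ((bstepFin d c Λ)^[n] η) ((bstepFin d c Λ)^[n] η') := by
  induction n with
  | zero => exact h
  | succ n ih =>
    rw [Function.iterate_succ_apply', Function.iterate_succ_apply']
    exact bstepFin_mono hmono Λ ih

lemma iter_cle_init (Λ : Finset (Site d)) (η : Cfg d) (k : ℕ) :
    Cle ((bstepFin d c Λ)^[k] η) η := by
  induction k with
  | zero => exact Cle.refl _
  | succ k ih =>
    rw [Function.iterate_succ_apply']
    exact Cle.trans (bstepFin_cle_self Λ _) ih

lemma iter_cle_self (hmono : ConstraintMono d c) (Λ : Finset (Site d)) (η : Cfg d)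
    {m n : ℕ} (h : n ≤ m) :
    Cle ((bstepFin d c Λ)^[m] η) ((bstepFin d c Λ)^[n] η) := by
  obtain ⟨k, rfl⟩ := Nat.exists_eq_add_of_le h
  rw [Function.iterate_add_apply]
  exact iter_cle hmono Λ (iter_cle_init Λ η k) n

lemma iterate_fix {α : Type*} {f : α → α} {ζ : α} (h : f ζ = ζ) : ∀ n, f^[n] ζ = ζ := by
  intro n
  induction n with
  | zero => rfl
  | succ n ih => rw [Function.iterate_succ_apply', ih, h]

lemma bstepFin_card_fix (hmono : ConstraintMono d c) (Λ : Finset (Site d)) (η : Cfg d) :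
    bstepFin d c Λ ((bstepFin d c Λ)^[Λ.card] η) = (bstepFin d c Λ)^[Λ.card] η := by
  by_contra hne
  set f := bstepFin d c Λ with hf
  -- every step up to card differs
  have hstep : ∀ j, j ≤ Λ.card → f^[j + 1] η ≠ f^[j] η := by
    intro j hj habs
    have hfix : f (f^[j] η) = f^[j] η := by
      rw [← Function.iterate_succ_apply' f j η]; exact habs
    have hcd : f^[Λ.card] η = f^[j] η := by
      obtain ⟨k, hk⟩ := Nat.exists_eq_add_of_le hj
      rw [hk, Nat.add_comm j k, Function.iterate_add_apply]
      exact iterate_fix hfix k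
    exact hne (by rw [hcd]; exact hfix)
  -- the set of infected sites in Λ strictly grows
  set S : ℕ → Finset (Site d) := fun j => Λ.filter (fun x => f^[j] η x = false) with hS
  have hgrow : ∀ j, j ≤ Λ.card → S j ⊂ S (j + 1) := by
    intro j hj
    have hsub : S j ⊆ S (j + 1) := by
      intro x hx
      simp only [hS, Finset.mem_filter] at hx ⊢
      exact ⟨hx.1, (iter_cle_self hmono Λ η (Nat.le_succ j)).false_of hx.2⟩
    obtain ⟨x, hxne⟩ := Function.ne_iff.mp (hstep j hj)
    have hxΛ : x ∈ Λ := by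
      by_contra hxΛ
      exact hxne (by rw [iter_outside Λ η hxΛ, iter_outside Λ η hxΛ])
    have hxfalse : f^[j + 1] η x = false := by
      cases h1 : f^[j+1] η x with
      | false => rfl
      | true => exact absurd ((iter_cle_self hmono Λ η (Nat.le_succ j)) x h1) (by
          intro h2; exact hxne (by rw [h1, h2]))
    have hxtrue : f^[j] η x = true := by
      cases h1 : f^[j] η x with
      | true => rfl
      | false => exact absurd (by rw [hxfalse, h1]) hxne
    refine Finset.ssubset_iff_of_subset hsub |>.mpr ⟨x, ?_, ?_⟩
    · simp only [hS, Finset.mem_filter]; exact ⟨hxΛ, hxfalse⟩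
    · simp only [hS, Finset.mem_filter]
      intro h
      rw [hxtrue] at h
      exact Bool.noConfusion h.2
  have hcard : ∀ j, j ≤ Λ.card + 1 → j ≤ (S j).card := by
    intro j
    induction j with
    | zero => intro _; exact Nat.zero_le _
    | succ j ih =>
      intro hj
      have h1 : j ≤ (S j).card := ih (Nat.le_of_succ_le hj)
      have h2 : (S j).card < (S (j + 1)).card :=
        Finset.card_lt_card (hgrow j (Nat.lt_succ_iff.mp hj))
      omega
  have h1 : Λ.card + 1 ≤ (S (Λ.card + 1)).card := hcard _ le_rfl
  have h2 : (S (Λ.card + 1)).card ≤ Λ.card := Finset.card_le_card (Finset.filter_subset _ _)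
  omega

lemma BPfin_fix (hmono : ConstraintMono d c) (Λ : Finset (Site d)) (η : Cfg d) :
    bstepFin d c Λ (BPfin d c Λ η) = BPfin d c Λ η :=
  bstepFin_card_fix hmono Λ _

lemma BPfin_eq_iter (hmono : ConstraintMono d c) (Λ : Finset (Site d)) (η : Cfg d)
    {n : ℕ} (hn : Λ.card ≤ n) :
    (bstepFin d c Λ)^[n] (extCfg d Λ η) = BPfin d c Λ η := by
  obtain ⟨k, rfl⟩ := Nat.exists_eq_add_of_le hn
  rw [Nat.add_comm, Function.iterate_add_apply]
  exact iterate_fix (BPfin_fix hmono Λ η) k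

lemma BPfin_cle_iter (hmono : ConstraintMono d c) (Λ : Finset (Site d)) (η : Cfg d) (n : ℕ) :
    Cle (BPfin d c Λ η) ((bstepFin d c Λ)^[n] (extCfg d Λ η)) := by
  rcases le_total n Λ.card with h | h
  · exact iter_cle_self hmono Λ _ h
  · rw [BPfin_eq_iter hmono Λ η h]; exact Cle.refl _

lemma extCfg_cle {Λ : Finset (Site d)} {η η' : Cfg d} (h : Cle η η') :
    Cle (extCfg d Λ η) (extCfg d Λ η') := by
  intro x hx
  by_cases hΛ : x ∈ Λ
  · simp only [extCfg, if_pos hΛ] at hx ⊢; exact h x hx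
  · simp only [extCfg, if_neg hΛ]

lemma BPfin_mono (hmono : ConstraintMono d c) (Λ : Finset (Site d)) {η η' : Cfg d}
    (h : Cle η η') : Cle (BPfin d c Λ η) (BPfin d c Λ η') :=
  iter_cle hmono Λ (extCfg_cle h) _

lemma BPfin_congr (Λ : Finset (Site d)) {η η' : Cfg d} (h : ∀ x ∈ Λ, η x = η' x) :
    BPfin d c Λ η = BPfin d c Λ η' := by
  unfold BPfin
  congr 1
  funext x
  by_cases hΛ : x ∈ Λ
  · simp only [extCfg, if_pos hΛ]; exact h x hΛ
  · simp only [extCfg, if_neg hΛ]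

lemma extCfg_eq_self {Λ : Finset (Site d)} {η : Cfg d} (h : ∀ x, x ∉ Λ → η x = true) :
    extCfg d Λ η = η := by
  funext x
  by_cases hΛ : x ∈ Λ
  · simp only [extCfg, if_pos hΛ]
  · simp only [extCfg, if_neg hΛ]; exact (h x hΛ).symm

lemma BPfin_cle_self {Λ : Finset (Site d)} {η : Cfg d} (h : ∀ x, x ∉ Λ → η x = true) :
    Cle (BPfin d c Λ η) η := by
  unfold BPfin
  rw [extCfg_eq_self h]
  exact iter_cle_init Λ η Λ.card

/-- The absorption (τ-) lemma: infecting sites that the restricted bootstrap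
would infect anyway does not change the bootstrap limit. -/
lemma BPfin_absorb (hmono : ConstraintMono d c) {Λ : Finset (Site d)} {σ σ' : Cfg d}
    (hσ : ∀ x, x ∉ Λ → σ x = true) (hσ' : ∀ x, x ∉ Λ → σ' x = true)
    (h1 : Cle σ' σ) (h2 : Cle (BPfin d c Λ σ) σ') :
    BPfin d c Λ σ' = BPfin d c Λ σ := by
  refine cle_antisymm (BPfin_mono hmono Λ h1) ?_
  -- BPfin σ ≤ BPfin σ' : iterate monotonicity from `Cle (BPfin σ) σ'`
  have h3 : Cle ((bstepFin d c Λ)^[Λ.card] (BPfin d c Λ σ))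
      ((bstepFin d c Λ)^[Λ.card] (extCfg d Λ σ')) := by
    refine iter_cle hmono Λ ?_ _
    rw [extCfg_eq_self hσ']
    exact h2
  rwa [iterate_fix (BPfin_fix hmono Λ σ) Λ.card] at h3

/-- Volume monotonicity of the restricted bootstrap map. -/
lemma bstepFin_vol_mono (hmono : ConstraintMono d c) {Λ Λ' : Finset (Site d)}
    (hΛ : Λ ⊆ Λ') {ζ ζ' : Cfg d} (h : Cle ζ ζ') :
    Cle (bstepFin d c Λ' ζ) (bstepFin d c Λ ζ') := by
  intro x hx
  by_cases hxΛ : x ∈ Λ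
  · have hxΛ' : x ∈ Λ' := hΛ hxΛ
    simp only [bstepFin, if_pos hxΛ, if_pos hxΛ', Bool.and_eq_true] at hx ⊢
    refine ⟨h x hx.1, ?_⟩
    have h2 := hx.2
    simp only [Bool.not_eq_true', decide_eq_false_iff_not] at h2 ⊢
    intro hc
    exact h2 (lt_of_lt_of_le hc (hmono x ζ ζ' (cle_to_le h)))
  · simp only [bstepFin, if_neg hxΛ]
    by_cases hxΛ' : x ∈ Λ'
    · simp only [bstepFin, if_pos hxΛ', Bool.and_eq_true] at hx
      exact h x hx.1
    · simp only [bstepFin, if_neg hxΛ'] at hx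
      exact h x hx

lemma extCfg_vol_cle {Λ Λ' : Finset (Site d)} (hΛ : Λ ⊆ Λ') (η : Cfg d) :
    Cle (extCfg d Λ' η) (extCfg d Λ η) := by
  intro x hx
  by_cases hxΛ : x ∈ Λ
  · simp only [extCfg, if_pos hxΛ, if_pos (hΛ hxΛ)] at hx ⊢; exact hx
  · simp only [extCfg, if_neg hxΛ]

lemma BPfin_vol_mono (hmono : ConstraintMono d c) {Λ Λ' : Finset (Site d)}
    (hΛ : Λ ⊆ Λ') (η : Cfg d) :
    Cle (BPfin d c Λ' η) (BPfin d c Λ η) := by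
  have key : ∀ n, Cle ((bstepFin d c Λ')^[n] (extCfg d Λ' η))
      ((bstepFin d c Λ)^[n] (extCfg d Λ η)) := by
    intro n
    induction n with
    | zero => exact extCfg_vol_cle hΛ η
    | succ n ih =>
      rw [Function.iterate_succ_apply', Function.iterate_succ_apply']
      exact bstepFin_vol_mono hmono hΛ ih
  have h1 : Cle (BPfin d c Λ' η) ((bstepFin d c Λ')^[max Λ.card Λ'.card] (extCfg d Λ' η)) :=
    BPfin_cle_iter hmono Λ' η _
  have h2 := key (max Λ.card Λ'.card)
  rw [BPfin_eq_iter hmono Λ η (le_max_left _ _)] at h2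
  exact Cle.trans h1 h2

lemma mem_box {N : ℕ} {x : Site d} : x ∈ box d N ↔ ∀ i, |x i| ≤ (N : ℤ) := by
  simp only [box, Fintype.mem_piFinset, Finset.mem_Icc]
  exact forall_congr' fun i => abs_le.symm

lemma box_mono {N M : ℕ} (h : N ≤ M) : box d N ⊆ box d M := by
  intro x hx
  rw [mem_box] at hx ⊢
  intro i
  exact le_trans (hx i) (by exact_mod_cast h)

lemma exists_box (Λ : Finset (Site d)) : ∃ N₀ : ℕ, ∀ N, N₀ ≤ N → Λ ⊆ box d N := by
  refine ⟨Λ.sup (fun x => Finset.univ.sup fun i => (x i).natAbs), fun N hN => ?_⟩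
  intro x hx
  rw [mem_box]
  intro i
  have h1 : (x i).natAbs ≤ Finset.univ.sup fun i => (x i).natAbs :=
    Finset.le_sup (f := fun i => (x i).natAbs) (Finset.mem_univ i)
  have h2 : (Finset.univ.sup fun i => (x i).natAbs) ≤ N :=
    le_trans (Finset.le_sup (f := fun x => Finset.univ.sup fun i => (x i).natAbs) hx) hN
  have : (x i).natAbs ≤ N := le_trans h1 h2
  rw [Int.abs_eq_natAbs]
  exact_mod_cast this

lemma bstep_cle_self (η : Cfg d) : Cle (bstep d c η) η := by
  intro x hx
  simp only [bstep, Bool.and_eq_true] at hx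
  exact hx.1

lemma bstep_mono (hmono : ConstraintMono d c) {η η' : Cfg d} (h : Cle η η') :
    Cle (bstep d c η) (bstep d c η') := by
  intro x hx
  simp only [bstep, Bool.and_eq_true] at hx ⊢
  refine ⟨h x hx.1, ?_⟩
  have h2 := hx.2
  simp only [Bool.not_eq_true', decide_eq_false_iff_not] at h2 ⊢
  intro hc
  exact h2 (lt_of_lt_of_le hc (hmono x η η' (cle_to_le h)))

lemma bstep_iter_cle (hmono : ConstraintMono d c) {η η' : Cfg d} (h : Cle η η') (n : ℕ) :
    Cle ((bstep d c)^[n] η) ((bstep d c)^[n] η') := by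
  induction n with
  | zero => exact h
  | succ n ih =>
    rw [Function.iterate_succ_apply', Function.iterate_succ_apply']
    exact bstep_mono hmono ih

lemma bstep_iter_cle_init (η : Cfg d) (k : ℕ) : Cle ((bstep d c)^[k] η) η := by
  induction k with
  | zero => exact Cle.refl _
  | succ k ih =>
    rw [Function.iterate_succ_apply']
    exact Cle.trans (bstep_cle_self _) ih

lemma bstep_iter_cle_self (hmono : ConstraintMono d c) (η : Cfg d) {m n : ℕ} (h : n ≤ m) :
    Cle ((bstep d c)^[m] η) ((bstep d c)^[n] η) := by
  obtain ⟨k, rfl⟩ := Nat.exists_eq_add_of_le h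
  rw [Function.iterate_add_apply]
  exact bstep_iter_cle hmono (bstep_iter_cle_init η k) n

lemma bstep_agree (hrange : HasRange d c r) :
    ∀ (n : ℕ) (η : Cfg d) (M : ℕ) (x : Site d),
      (∀ i, |x i| + (n : ℤ) * (r : ℤ) ≤ (M : ℤ)) →
      (bstep d c)^[n] η x = (bstepFin d c (box d M))^[n] (extCfg d (box d M) η) x := by
  intro n
  induction n with
  | zero =>
    intro η M x hx
    have hxM : x ∈ box d M := mem_box.mpr (fun i => by have := hx i; push_cast at this; linarith)
    simp only [Function.iterate_zero, id_eq, extCfg, if_pos hxM]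
  | succ n ih =>
    intro η M x hx
    have hrn : (0:ℤ) ≤ (n : ℤ) * (r : ℤ) := by positivity
    have hrr : (0:ℤ) ≤ (r : ℤ) := by positivity
    have hxM : x ∈ box d M := mem_box.mpr (fun i => by
      have h1 := hx i
      push_cast at h1
      nlinarith [abs_nonneg (x i)])
    rw [Function.iterate_succ_apply', Function.iterate_succ_apply']
    set A := (bstep d c)^[n] η with hA
    set B := (bstepFin d c (box d M))^[n] (extCfg d (box d M) η) with hB
    have hAB : ∀ y : Site d, (∀ i, |y i - x i| ≤ (r:ℤ)) → A y = B y := by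
      intro y hy
      refine ih η M y (fun i => ?_)
      have h1 := hx i
      have h2 := hy i
      have h3 : |y i| - |x i| ≤ |y i - x i| := abs_sub_abs_le_abs_sub (y i) (x i)
      push_cast at h1 ⊢
      nlinarith []
    have hx_eq : A x = B x := hAB x (fun i => by
      simp only [sub_self, abs_zero]; exact hrr)
    have hc_eq : c x A = c x B := hrange x A B (fun y _ hy => hAB y hy)
    simp only [bstep, bstepFin, if_pos hxM, hx_eq, hc_eq]

lemma BP_false {η : Cfg d} (h : BP d c η = fun _ => false) (x : Site d) :
    ∃ n, (bstep d c)^[n] η x = false := by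
  have hx : BP d c η x = false := by rw [h]
  simp only [BP, decide_eq_false_iff_not, not_forall] at hx
  obtain ⟨n, hn⟩ := hx
  refine ⟨n, ?_⟩
  revert hn
  cases ((bstep d c)^[n] η x) <;> simp

/-! ### Patterns and cylinders -/

def pat (Λ T : Finset (Site d)) : Cfg d := fun y => if y ∈ Λ then decide (y ∈ T) else true

lemma pat_outside {Λ T : Finset (Site d)} {y : Site d} (hy : y ∉ Λ) : pat Λ T y = true :=
  if_neg hy

lemma pat_mem {Λ T : Finset (Site d)} {y : Site d} (hy : y ∈ Λ) :
    pat Λ T y = decide (y ∈ T) := if_pos hy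

lemma cyl_congr {Λ : Finset (Site d)} {ζ ζ' : Cfg d} (h : ∀ x ∈ Λ, ζ x = ζ' x) :
    cyl d Λ ζ = cyl d Λ ζ' := by
  ext η
  constructor <;> intro hη x hx
  · rw [← h x hx]; exact hη x hx
  · rw [h x hx]; exact hη x hx

lemma measurableSet_cyl (Λ : Finset (Site d)) (ζ : Cfg d) : MeasurableSet (cyl d Λ ζ) := by
  have heq : cyl d Λ ζ = ⋂ x ∈ Λ, (fun η : Cfg d => η x) ⁻¹' {ζ x} := by
    ext η
    simp only [cyl, Set.mem_setOf_eq, Set.mem_iInter, Set.mem_preimage,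
      Set.mem_singleton_iff]
  rw [heq]
  exact Finset.measurableSet_biInter Λ
    (fun x _ => (measurable_pi_apply x) (measurableSet_singleton (ζ x)))

lemma cyl_disjoint {Λ : Finset (Site d)} {ζ ζ' : Cfg d} {x : Site d} (hx : x ∈ Λ)
    (h : ζ x ≠ ζ' x) : Disjoint (cyl d Λ ζ) (cyl d Λ ζ') := by
  rw [Set.disjoint_left]
  intro η hη hη'
  exact h ((hη x hx).symm.trans (hη' x hx))

lemma pat_disjoint {Λ T T' : Finset (Site d)} (hT : T ⊆ Λ) (hT' : T' ⊆ Λ)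
    (hne : T ≠ T') : Disjoint (cyl d Λ (pat Λ T)) (cyl d Λ (pat Λ T')) := by
  obtain ⟨a, ha⟩ : ∃ a, ¬(a ∈ T ↔ a ∈ T') := by
    by_contra hcon
    push_neg at hcon
    exact hne (Finset.ext fun a => hcon a)
  by_cases haT : a ∈ T
  · have haT' : a ∉ T' := fun h' => ha ⟨fun _ => h', fun _ => haT⟩
    refine cyl_disjoint (hT haT) ?_
    rw [pat_mem (hT haT), pat_mem (hT haT)]
    simp [haT, haT']
  · have haT' : a ∈ T' := by
      by_contra haT'
      exact ha ⟨fun h' => absurd h' haT, fun h' => absurd h' haT'⟩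
    refine cyl_disjoint (hT' haT') ?_
    rw [pat_mem (hT' haT'), pat_mem (hT' haT')]
    simp [haT, haT']

lemma measure_biUnion_pat (ν : Measure (Cfg d)) [IsFiniteMeasure ν] (Λ : Finset (Site d))
    (s : Finset (Finset (Site d))) (hs : ∀ T ∈ s, T ⊆ Λ) :
    (ν (⋃ T ∈ s, cyl d Λ (pat Λ T))).toReal
      = ∑ T ∈ s, (ν (cyl d Λ (pat Λ T))).toReal := by
  rw [measure_biUnion_finset ?hd (fun T _ => measurableSet_cyl Λ (pat Λ T)),
    ENNReal.toReal_sum (fun T _ => measure_ne_top ν _)]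
  case hd =>
    intro T hT T' hT' hne
    exact pat_disjoint (hs T (Finset.mem_coe.mp hT)) (hs T' (Finset.mem_coe.mp hT')) hne

lemma self_agree_pat (Λ : Finset (Site d)) (η : Cfg d) :
    ∀ x ∈ Λ, η x = pat Λ (Λ.filter (fun y => η y = true)) x := by
  intro x hx
  rw [pat_mem hx]
  cases hη : η x with
  | true => simp [Finset.mem_filter, hx, hη]
  | false => simp [Finset.mem_filter, hx, hη]

lemma univ_eq_biUnion_pat (Λ : Finset (Site d)) :
    (Set.univ : Set (Cfg d)) = ⋃ T ∈ Λ.powerset, cyl d Λ (pat Λ T) := by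
  ext η
  simp only [Set.mem_univ, true_iff, Set.mem_iUnion, exists_prop]
  exact ⟨Λ.filter (fun y => η y = true),
    Finset.mem_powerset.mpr (Finset.filter_subset _ _), self_agree_pat Λ η⟩

lemma event_eq_biUnion_pat (Λ : Finset (Site d)) (P : Cfg d → Prop)
    (hP : ∀ η η' : Cfg d, (∀ x ∈ Λ, η x = η' x) → (P η ↔ P η')) :
    {η : Cfg d | P η}
      = ⋃ T ∈ Λ.powerset.filter (fun T => P (pat Λ T)), cyl d Λ (pat Λ T) := by
  ext η
  simp only [Set.mem_setOf_eq, Set.mem_iUnion, Finset.mem_filter, Finset.mem_powerset,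
    exists_prop]
  constructor
  · intro hη
    exact ⟨Λ.filter (fun y => η y = true),
      ⟨Finset.filter_subset _ _, (hP η _ (self_agree_pat Λ η)).mp hη⟩, self_agree_pat Λ η⟩
  · rintro ⟨T, ⟨-, hPT⟩, hmem⟩
    exact (hP η (pat Λ T) hmem).mpr hPT

lemma measurableSet_event (Λ : Finset (Site d)) (P : Cfg d → Prop)
    (hP : ∀ η η' : Cfg d, (∀ x ∈ Λ, η x = η' x) → (P η ↔ P η')) :
    MeasurableSet {η : Cfg d | P η} := by
  rw [event_eq_biUnion_pat Λ P hP]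
  exact (Λ.powerset.filter (fun T => P (pat Λ T))).measurableSet_biUnion
    (fun T _ => measurableSet_cyl Λ (pat Λ T))

lemma measure_event (ν : Measure (Cfg d)) [IsFiniteMeasure ν] (Λ : Finset (Site d))
    (P : Cfg d → Prop)
    (hP : ∀ η η' : Cfg d, (∀ x ∈ Λ, η x = η' x) → (P η ↔ P η')) :
    (ν {η : Cfg d | P η}).toReal
      = ∑ T ∈ Λ.powerset.filter (fun T => P (pat Λ T)), (ν (cyl d Λ (pat Λ T))).toReal := by
  rw [event_eq_biUnion_pat Λ P hP]
  exact measure_biUnion_pat ν Λ _ (fun T hT => Finset.mem_powerset.mp (Finset.mem_filter.mp hT).1)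

lemma mu_cylfalse_eq (ν : Measure (Cfg d)) [IsFiniteMeasure ν]
    {BN BM : Finset (Site d)} (h : BN ⊆ BM) :
    (ν (cyl d BN (fun _ => false))).toReal
      = ∑ S ∈ (BM \ BN).powerset, (ν (cyl d BM (pat BM S))).toReal := by
  have heq : cyl d BN (fun _ => false)
      = ⋃ S ∈ (BM \ BN).powerset, cyl d BM (pat BM S) := by
    ext η
    simp only [cyl, Set.mem_setOf_eq, Set.mem_iUnion, Finset.mem_powerset, exists_prop]
    constructor
    · intro hη
      refine ⟨(BM \ BN).filter (fun y => η y = true), Finset.filter_subset _ _, ?_⟩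
      intro x hx
      rw [pat_mem hx]
      by_cases hxN : x ∈ BN
      · have : x ∉ (BM \ BN).filter (fun y => η y = true) := by
          simp [Finset.mem_filter, Finset.mem_sdiff, hxN]
        simp [this, hη x hxN]
      · have hxS : x ∈ BM \ BN := Finset.mem_sdiff.mpr ⟨hx, hxN⟩
        cases hη2 : η x with
        | true => simp [Finset.mem_filter, hxS, hη2]
        | false => simp [Finset.mem_filter, hxS, hη2]
    · rintro ⟨S, hS, hmem⟩
      intro x hxN
      have hxS : x ∉ S := fun hmemS => (Finset.mem_sdiff.mp (hS hmemS)).2 hxN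
      rw [hmem x (h hxN), pat_mem (h hxN)]
      simp [hxS]
  rw [heq]
  exact measure_biUnion_pat ν BM _
    (fun S hS => le_trans (Finset.mem_powerset.mp hS) (Finset.sdiff_subset))

lemma sum_powerset_union {X : Type*} [DecidableEq X] {s t : Finset X} (h : Disjoint s t)
    (f : Finset X → ℝ) :
    ∑ T ∈ (s ∪ t).powerset, f T = ∑ S ∈ s.powerset, ∑ J ∈ t.powerset, f (S ∪ J) := by
  rw [← Finset.sum_product']
  refine Finset.sum_nbij' (fun T => (T ∩ s, T ∩ t)) (fun P => P.1 ∪ P.2) ?_ ?_ ?_ ?_ ?_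
  · intro T hT
    rw [Finset.mem_powerset] at hT
    rw [Finset.mem_product]
    exact ⟨Finset.mem_powerset.mpr Finset.inter_subset_right,
      Finset.mem_powerset.mpr Finset.inter_subset_right⟩
  · intro P hP
    rw [Finset.mem_product] at hP
    rw [Finset.mem_powerset]
    exact Finset.union_subset_union (Finset.mem_powerset.mp hP.1) (Finset.mem_powerset.mp hP.2)
  · intro T hT
    rw [Finset.mem_powerset] at hT
    show T ∩ s ∪ T ∩ t = T
    rw [← Finset.inter_union_distrib_left, Finset.inter_eq_left.mpr hT]
  · intro P hP
    rw [Finset.mem_product] at hP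
    have h1 : P.1 ⊆ s := Finset.mem_powerset.mp hP.1
    have h2 : P.2 ⊆ t := Finset.mem_powerset.mp hP.2
    have e1 : (P.1 ∪ P.2) ∩ s = P.1 := by
      ext a
      simp only [Finset.mem_inter, Finset.mem_union]
      constructor
      · rintro ⟨h3 | h3, h4⟩
        · exact h3
        · exact absurd h4 (Finset.disjoint_left.mp h.symm (h2 h3))
      · intro h3
        exact ⟨Or.inl h3, h1 h3⟩
    have e2 : (P.1 ∪ P.2) ∩ t = P.2 := by
      ext a
      simp only [Finset.mem_inter, Finset.mem_union]
      constructor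
      · rintro ⟨h3 | h3, h4⟩
        · exact absurd h4 (Finset.disjoint_left.mp h (h1 h3))
        · exact h3
      · intro h3
        exact ⟨Or.inr h3, h2 h3⟩
    show ((P.1 ∪ P.2) ∩ s, (P.1 ∪ P.2) ∩ t) = P
    rw [e1, e2]
  · intro T hT
    rw [Finset.mem_powerset] at hT
    show f T = f (T ∩ s ∪ T ∩ t)
    rw [← Finset.inter_union_distrib_left, Finset.inter_eq_left.mpr hT]

lemma filter_inst_congr {α : Type*} (p : α → Prop) (h1 h2 : DecidablePred p)
    (s : Finset α) :
    @Finset.filter _ p h1 s = @Finset.filter _ p h2 s := by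
  rw [Subsingleton.elim h1 h2]

/-! ### Product weights -/

def piwt (p : ℝ) (Λ : Finset (Site d)) (ζ : Cfg d) : ℝ :=
  ∏ y ∈ Λ, (if ζ y then p else 1 - p)

lemma piwt_pos {p : ℝ} (h0 : 0 < p) (h1 : p < 1) (Λ : Finset (Site d)) (ζ : Cfg d) :
    0 < piwt p Λ ζ :=
  Finset.prod_pos (fun y _ => by split <;> linarith)

lemma piwt_congr {p : ℝ} {Λ : Finset (Site d)} {ζ ζ' : Cfg d}
    (h : ∀ y ∈ Λ, ζ y = ζ' y) : piwt p Λ ζ = piwt p Λ ζ' :=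
  Finset.prod_congr rfl (fun y hy => by rw [h y hy])

lemma piwt_union {p : ℝ} {Λ₁ Λ₂ : Finset (Site d)} (h : Disjoint Λ₁ Λ₂) (ζ : Cfg d) :
    piwt p (Λ₁ ∪ Λ₂) ζ = piwt p Λ₁ ζ * piwt p Λ₂ ζ :=
  Finset.prod_union h

lemma piwt_mem_eq {p : ℝ} {Λ J : Finset (Site d)} {ζ : Cfg d}
    (h : ∀ y ∈ Λ, ζ y = decide (y ∈ J)) :
    piwt p Λ ζ = ∏ y ∈ Λ, (if y ∈ J then p else 1 - p) := by
  refine Finset.prod_congr rfl (fun y hy => ?_)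
  rw [h y hy]
  by_cases hyJ : y ∈ J <;> simp [hyJ]

lemma sum_prod_ite_one {p : ℝ} (Λ : Finset (Site d)) :
    ∑ J ∈ Λ.powerset, (∏ y ∈ Λ, (if y ∈ J then p else 1 - p)) = 1 := by
  have h1 : ∀ J ∈ Λ.powerset, (∏ y ∈ Λ, (if y ∈ J then p else 1 - p))
      = (∏ y ∈ J, p) * ∏ y ∈ Λ \ J, (1 - p) := by
    intro J hJ
    rw [Finset.mem_powerset] at hJ
    rw [← Finset.union_sdiff_of_subset hJ, Finset.prod_union Finset.disjoint_sdiff]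
    rw [Finset.union_sdiff_of_subset hJ]
    congr 1
    · exact Finset.prod_congr rfl fun y hy => if_pos hy
    · exact Finset.prod_congr rfl fun y hy => if_neg (Finset.mem_sdiff.mp hy).2
  rw [Finset.sum_congr rfl h1, ← Finset.prod_add]
  simp

lemma pi_cyl_toReal {p : ℝ} (h0 : 0 ≤ p) (h1 : p ≤ 1) {ν : Measure (Cfg d)}
    (hν : ∀ (Λ : Finset (Site d)) (ζ : Cfg d),
      ν (cyl d Λ ζ) = ∏ x ∈ Λ, ENNReal.ofReal (if ζ x then p else 1 - p))
    (Λ : Finset (Site d)) (ζ : Cfg d) :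
    (ν (cyl d Λ ζ)).toReal = piwt p Λ ζ := by
  rw [hν, ENNReal.toReal_prod]
  exact Finset.prod_congr rfl fun y _ => ENNReal.toReal_ofReal (by split <;> linarith)

/-! ### Extensions of a configuration outside `Λ`, and the detailed-balance flip relation -/

def mixC (ζ : Cfg d) (S T : Finset (Site d)) : Cfg d :=
  fun y => if y ∈ S then decide (y ∈ T) else ζ y

lemma mixC_not_mem {ζ : Cfg d} {S T : Finset (Site d)} {y : Site d} (hy : y ∉ S) :
    mixC ζ S T y = ζ y := if_neg hy

lemma mixC_mem {ζ : Cfg d} {S T : Finset (Site d)} {y : Site d} (hy : y ∈ S) :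
    mixC ζ S T y = decide (y ∈ T) := if_pos hy

lemma flipAt_apply_ne {η : Cfg d} {x y : Site d} (h : y ≠ x) : flipAt d η x y = η y :=
  Function.update_of_ne h _ _

lemma flipAt_apply_self (η : Cfg d) (x : Site d) : flipAt d η x x = !(η x) :=
  Function.update_self _ _ _

lemma flip_mix_comm {ζ : Cfg d} {S T : Finset (Site d)} {x : Site d} (hx : x ∉ S) :
    flipAt d (mixC ζ S T) x = mixC (flipAt d ζ x) S T := by
  funext y
  by_cases hyS : y ∈ S
  · have hyx : y ≠ x := fun hc => hx (hc ▸ hyS)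
    rw [flipAt_apply_ne hyx, mixC_mem hyS, mixC_mem hyS]
  · by_cases hyx : y = x
    · subst hyx
      rw [flipAt_apply_self, mixC_not_mem hyS, mixC_not_mem hyS, flipAt_apply_self]
    · rw [flipAt_apply_ne hyx, mixC_not_mem hyS, mixC_not_mem hyS, flipAt_apply_ne hyx]

lemma mix_disjoint {Λ' S T T' : Finset (Site d)} (hS : S ⊆ Λ') (hT : T ⊆ S) (hT' : T' ⊆ S)
    (hne : T ≠ T') (ζ : Cfg d) :
    Disjoint (cyl d Λ' (mixC ζ S T)) (cyl d Λ' (mixC ζ S T')) := by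
  obtain ⟨a, ha⟩ : ∃ a, ¬(a ∈ T ↔ a ∈ T') := by
    by_contra hcon
    push_neg at hcon
    exact hne (Finset.ext fun a => hcon a)
  by_cases haT : a ∈ T
  · have haT' : a ∉ T' := fun h' => ha ⟨fun _ => h', fun _ => haT⟩
    refine cyl_disjoint (hS (hT haT)) ?_
    rw [mixC_mem (hT haT), mixC_mem (hT haT)]
    simp [haT, haT']
  · have haT' : a ∈ T' := by
      by_contra haT'
      exact ha ⟨fun h' => absurd h' haT, fun h' => absurd h' haT'⟩
    have hd : Disjoint (cyl d Λ' (mixC ζ S T')) (cyl d Λ' (mixC ζ S T)) := by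
      refine cyl_disjoint (hS (hT' haT')) ?_
      rw [mixC_mem (hT' haT'), mixC_mem (hT' haT')]
      simp [haT, haT']
    exact hd.symm

lemma cyl_eq_biUnion_mix (Λ Λ' : Finset (Site d)) (hsub : Λ ⊆ Λ') (ζ : Cfg d) :
    cyl d Λ ζ = ⋃ T ∈ (Λ' \ Λ).powerset, cyl d Λ' (mixC ζ (Λ' \ Λ) T) := by
  ext η
  simp only [cyl, Set.mem_setOf_eq, Set.mem_iUnion, Finset.mem_powerset, exists_prop]
  constructor
  · intro hη
    refine ⟨(Λ' \ Λ).filter (fun y => η y = true), Finset.filter_subset _ _, ?_⟩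
    intro x hx
    by_cases hxS : x ∈ Λ' \ Λ
    · rw [mixC_mem hxS]
      cases hη2 : η x with
      | true => simp [Finset.mem_filter, hxS, hη2]
      | false => simp [Finset.mem_filter, hxS, hη2]
    · have hxΛ : x ∈ Λ := by
        by_contra hc
        exact hxS (Finset.mem_sdiff.mpr ⟨hx, hc⟩)
      rw [mixC_not_mem hxS]
      exact hη x hxΛ
  · rintro ⟨T, hT, hmem⟩
    intro x hxΛ
    have hxS : x ∉ Λ' \ Λ := fun hc => (Finset.mem_sdiff.mp hc).2 hxΛ
    rw [hmem x (hsub hxΛ), mixC_not_mem hxS]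

lemma mu_cyl_split (ν : Measure (Cfg d)) [IsFiniteMeasure ν] {Λ Λ' : Finset (Site d)}
    (hsub : Λ ⊆ Λ') (ζ : Cfg d) :
    (ν (cyl d Λ ζ)).toReal
      = ∑ T ∈ (Λ' \ Λ).powerset, (ν (cyl d Λ' (mixC ζ (Λ' \ Λ) T))).toReal := by
  rw [cyl_eq_biUnion_mix Λ Λ' hsub ζ,
    measure_biUnion_finset ?hd (fun T _ => measurableSet_cyl Λ' _),
    ENNReal.toReal_sum (fun T _ => measure_ne_top ν _)]
  case hd =>
    intro T hT T' hT' hne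
    exact mix_disjoint Finset.sdiff_subset (Finset.mem_powerset.mp (Finset.mem_coe.mp hT))
      (Finset.mem_powerset.mp (Finset.mem_coe.mp hT')) hne ζ

noncomputable def rbox (r : ℕ) (x : Site d) : Finset (Site d) :=
  Fintype.piFinset fun i => Finset.Icc (x i - (r : ℤ)) (x i + (r : ℤ))

lemma mem_rbox {r : ℕ} {y x : Site d} : y ∈ rbox r x ↔ ∀ i, |y i - x i| ≤ (r : ℤ) := by
  simp only [rbox, Fintype.mem_piFinset, Finset.mem_Icc]
  refine forall_congr' fun i => ?_
  rw [abs_le]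
  constructor <;> (intro h; constructor <;> linarith [h.1, h.2])

/-- Single legal flip: detailed balance relation for the reduced weights. -/
lemma flip_rel {q p : ℝ} (hq0 : 0 < q) (hq1 : q < 1) (hp : p = 1 - q)
    {r : ℕ} (hmono : ConstraintMono d c)
    {μ : Measure (Cfg d)} [IsFiniteMeasure μ] (hdb : DetailedBalance d c p r μ)
    {Λ : Finset (Site d)} {η : Cfg d} {x : Site d}
    (hout : ∀ y, y ∉ Λ → η y = true) (hx : x ∈ Λ) (hcx : 0 < c x η) :
    (μ (cyl d Λ η)).toReal * piwt p Λ (flipAt d η x)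
      = (μ (cyl d Λ (flipAt d η x))).toReal * piwt p Λ η := by
  have hp0 : 0 < p := by rw [hp]; linarith
  have hp1 : p < 1 := by rw [hp]; linarith
  classical
  set Λ' := Λ ∪ rbox r x with hΛ'
  have hsub : Λ ⊆ Λ' := Finset.subset_union_left
  set S := Λ' \ Λ with hS
  have hScond : ∀ y, y ∈ S → y ∉ Λ := fun y hy => (Finset.mem_sdiff.mp hy).2
  have hxS : x ∉ S := fun hc => (Finset.mem_sdiff.mp hc).2 hx
  have hdisj : Disjoint Λ S := Finset.disjoint_sdiff
  have hunion : Λ ∪ S = Λ' := Finset.union_sdiff_of_subset hsub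
  have hcond : ∀ y : Site d, (∀ i : Fin d, |y i - x i| ≤ (r : ℤ)) → y ∈ Λ' :=
    fun y hy => Finset.mem_union_right Λ (mem_rbox.mpr hy)
  have key : ∀ T ∈ S.powerset,
      piwt p Λ (flipAt d η x) * (μ (cyl d Λ' (mixC η S T))).toReal
        = piwt p Λ η * (μ (cyl d Λ' (mixC (flipAt d η x) S T))).toReal := by
    intro T hT
    set ηT := mixC η S T with hηT
    have hflipT : flipAt d ηT x = mixC (flipAt d η x) S T := flip_mix_comm hxS
    have hcle : Cle ηT η := by
      intro y hy
      by_cases hyS : y ∈ S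
      · exact hout y (hScond y hyS)
      · rw [hηT, mixC_not_mem hyS] at hy; exact hy
    have hcT : 0 < c x ηT := lt_of_lt_of_le hcx (hmono x ηT η (cle_to_le hcle))
    have hdbT := hdb Λ' x hcond ηT
    rw [mul_assoc, mul_assoc] at hdbT
    have hdbT2 := mul_left_cancel₀ (ne_of_gt hcT) hdbT
    -- hdbT2 : piwt p Λ' (flipAt ηT x) * μT(cyl Λ' ηT) = piwt p Λ' ηT * μT(cyl Λ' (flipAt ηT x))
    have split1 : (∏ y ∈ Λ', if flipAt d ηT x y then p else 1 - p)
        = piwt p Λ (flipAt d η x) * piwt p S ηT := by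
      show piwt p Λ' (flipAt d ηT x) = _
      rw [← hunion, piwt_union hdisj]
      congr 1
      · refine piwt_congr (fun y hy => ?_)
        by_cases hyx : y = x
        · subst hyx
          rw [flipAt_apply_self, flipAt_apply_self, hηT, mixC_not_mem hxS]
        · rw [flipAt_apply_ne hyx, flipAt_apply_ne hyx, hηT,
            mixC_not_mem (fun hc => (hScond y hc) hy)]
      · refine piwt_congr (fun y hy => ?_)
        have hyx : y ≠ x := fun hc => hxS (hc ▸ hy)
        rw [flipAt_apply_ne hyx]
    have split2 : (∏ y ∈ Λ', if ηT y then p else 1 - p)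
        = piwt p Λ η * piwt p S ηT := by
      show piwt p Λ' ηT = _
      rw [← hunion, piwt_union hdisj]
      congr 1
      refine piwt_congr (fun y hy => ?_)
      rw [hηT, mixC_not_mem (fun hc => (hScond y hc) hy)]
    rw [split1, split2, hflipT] at hdbT2
    have hw : piwt p S ηT ≠ 0 := ne_of_gt (piwt_pos hp0 hp1 S ηT)
    have goal2 : piwt p S ηT * (piwt p Λ (flipAt d η x) * (μ (cyl d Λ' ηT)).toReal)
        = piwt p S ηT * (piwt p Λ η * (μ (cyl d Λ' (mixC (flipAt d η x) S T))).toReal) := by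
      linear_combination hdbT2
    exact mul_left_cancel₀ hw goal2
  -- sum over extensions
  have lhs_eq : (μ (cyl d Λ η)).toReal * piwt p Λ (flipAt d η x)
      = ∑ T ∈ S.powerset, piwt p Λ (flipAt d η x) * (μ (cyl d Λ' (mixC η S T))).toReal := by
    rw [mu_cyl_split μ hsub η, ← hS, Finset.sum_mul]
    exact Finset.sum_congr rfl fun T _ => mul_comm _ _
  have rhs_eq : (μ (cyl d Λ (flipAt d η x))).toReal * piwt p Λ η
      = ∑ T ∈ S.powerset, piwt p Λ η * (μ (cyl d Λ' (mixC (flipAt d η x) S T))).toReal := by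
    rw [mu_cyl_split μ hsub (flipAt d η x), ← hS, Finset.sum_mul]
    exact Finset.sum_congr rfl fun T _ => mul_comm _ _
  rw [lhs_eq, rhs_eq]
  exact Finset.sum_congr rfl key

/-- Invariance of reduced weights along chains of legal flips. -/
lemma chain_rel {q p : ℝ} (hq0 : 0 < q) (hq1 : q < 1) (hp : p = 1 - q)
    {r : ℕ} (hmono : ConstraintMono d c)
    {μ : Measure (Cfg d)} [IsFiniteMeasure μ] (hdb : DetailedBalance d c p r μ)
    {Λ : Finset (Site d)} {η η' : Cfg d}
    (hout : ∀ y, y ∉ Λ → η y = true)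
    (h : Relation.ReflTransGen (LegalStep d c Λ) η η') :
    (∀ y, y ∉ Λ → η' y = true) ∧
      (μ (cyl d Λ η)).toReal * piwt p Λ η' = (μ (cyl d Λ η')).toReal * piwt p Λ η := by
  have hp0 : 0 < p := by rw [hp]; linarith
  have hp1 : p < 1 := by rw [hp]; linarith
  induction h with
  | refl => exact ⟨hout, rfl⟩
  | @tail b c' hab hbc ih =>
    obtain ⟨x, hxΛ, hcx, rfl⟩ := hbc
    have houtb : ∀ y, y ∉ Λ → b y = true := ih.1
    have houtc : ∀ y, y ∉ Λ → flipAt d b x y = true := by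
      intro y hy
      have hyx : y ≠ x := fun hc => hy (hc ▸ hxΛ)
      rw [flipAt_apply_ne hyx]
      exact houtb y hy
    refine ⟨houtc, ?_⟩
    have l1 := flip_rel hq0 hq1 hp hmono hdb houtb hxΛ hcx
    have hb : piwt p Λ b ≠ 0 := ne_of_gt (piwt_pos hp0 hp1 Λ b)
    have key : ((μ (cyl d Λ η)).toReal * piwt p Λ (flipAt d b x)) * piwt p Λ b
        = ((μ (cyl d Λ (flipAt d b x))).toReal * piwt p Λ η) * piwt p Λ b := by
      linear_combination piwt p Λ (flipAt d b x) * ih.2 + piwt p Λ η * l1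
    exact mul_right_cancel₀ hb key

/-- Configurations with the same restricted bootstrap limit have proportional weights. -/
lemma class_rel {q p : ℝ} (hq0 : 0 < q) (hq1 : q < 1) (hp : p = 1 - q)
    {r : ℕ} (hmono : ConstraintMono d c) (hirr : IrreducibleKCM d c)
    {μ : Measure (Cfg d)} [IsFiniteMeasure μ] (hdb : DetailedBalance d c p r μ)
    {Λ : Finset (Site d)} {ζ ζ' : Cfg d} (h : BPfin d c Λ ζ = BPfin d c Λ ζ') :
    (μ (cyl d Λ ζ)).toReal * piwt p Λ ζ' = (μ (cyl d Λ ζ')).toReal * piwt p Λ ζ := by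
  have hchain := hirr Λ ζ ζ' h
  have hout : ∀ y, y ∉ Λ → extCfg d Λ ζ y = true := fun y hy => by
    simp only [extCfg, if_neg hy]
  have hres := (chain_rel hq0 hq1 hp hmono hdb hout hchain).2
  have hagree : ∀ x ∈ Λ, extCfg d Λ ζ x = ζ x := fun x hx => by
    simp only [extCfg, if_pos hx]
  have hagree' : ∀ x ∈ Λ, extCfg d Λ ζ' x = ζ' x := fun x hx => by
    simp only [extCfg, if_pos hx]
  rwa [cyl_congr hagree, cyl_congr hagree', piwt_congr hagree, piwt_congr hagree'] at hres

/-! ### The pivot identity and the key bound -/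

/-- Pivot identity: if the volume-`BM` bootstrap of a pattern kills `BN`, the pattern's
weight is proportional to the weight of the pattern with `BN` entirely infected. -/
lemma pivot_identity {q p : ℝ} (hq0 : 0 < q) (hq1 : q < 1) (hp : p = 1 - q)
    {r : ℕ} (hmono : ConstraintMono d c) (hirr : IrreducibleKCM d c)
    {μ : Measure (Cfg d)} [IsFiniteMeasure μ] (hdb : DetailedBalance d c p r μ)
    {BN BM : Finset (Site d)} (hNM : BN ⊆ BM) {T : Finset (Site d)}
    (hE : ∀ x ∈ BN, BPfin d c BM (pat BM T) x = false) :
    (μ (cyl d BM (pat BM T))).toReal * piwt p BN (fun _ => false)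
      = (μ (cyl d BM (pat BM (T \ BN)))).toReal * piwt p BN (pat BM T) := by
  have hp0 : 0 < p := by rw [hp]; linarith
  have hp1 : p < 1 := by rw [hp]; linarith
  set σ := pat BM T with hσdef
  set σ' := pat BM (T \ BN) with hσ'def
  have houtσ : ∀ y, y ∉ BM → σ y = true := fun y hy => pat_outside hy
  have houtσ' : ∀ y, y ∉ BM → σ' y = true := fun y hy => pat_outside hy
  have h1 : Cle σ' σ := by
    intro y hy
    by_cases hyM : y ∈ BM
    · rw [hσ'def, pat_mem hyM] at hy
      rw [hσdef, pat_mem hyM]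
      have : y ∈ T \ BN := of_decide_eq_true hy
      exact decide_eq_true (Finset.mem_sdiff.mp this).1
    · exact houtσ y hyM
  have h2 : Cle (BPfin d c BM σ) σ' := by
    intro y hy
    by_cases hyM : y ∈ BM
    · by_cases hyN : y ∈ BN
      · rw [hE y hyN] at hy; cases hy
      · rw [hσ'def, pat_mem hyM]
        have hσy : σ y = true := BPfin_cle_self houtσ y hy
        rw [hσdef, pat_mem hyM] at hσy
        have hyT : y ∈ T := of_decide_eq_true hσy
        exact decide_eq_true (Finset.mem_sdiff.mpr ⟨hyT, hyN⟩)
    · exact houtσ' y hyM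
  have hBP : BPfin d c BM σ' = BPfin d c BM σ := BPfin_absorb hmono houtσ houtσ' h1 h2
  have hrel := class_rel hq0 hq1 hp hmono hirr hdb hBP.symm
  -- hrel : μT(cyl BM σ) * piwt BM σ' = μT(cyl BM σ') * piwt BM σ
  have hdisj : Disjoint BN (BM \ BN) := Finset.disjoint_sdiff
  have hu : BN ∪ (BM \ BN) = BM := Finset.union_sdiff_of_subset hNM
  have hsplit : ∀ ρ : Cfg d, piwt p BM ρ = piwt p BN ρ * piwt p (BM \ BN) ρ := by
    intro ρ
    calc piwt p BM ρ = piwt p (BN ∪ (BM \ BN)) ρ := by rw [hu]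
      _ = _ := piwt_union hdisj ρ
  have hQ : piwt p BN σ' = piwt p BN (fun _ => false) := by
    refine piwt_congr (fun y hy => ?_)
    rw [hσ'def, pat_mem (hNM hy)]
    simp [Finset.mem_sdiff, hy]
  have hO : piwt p (BM \ BN) σ' = piwt p (BM \ BN) σ := by
    refine piwt_congr (fun y hy => ?_)
    have hyM : y ∈ BM := (Finset.mem_sdiff.mp hy).1
    have hyN : y ∉ BN := (Finset.mem_sdiff.mp hy).2
    rw [hσ'def, pat_mem hyM, hσdef, pat_mem hyM]
    rw [decide_eq_decide]
    simp [Finset.mem_sdiff, hyN]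
  rw [hsplit σ, hsplit σ', hQ, hO] at hrel
  have hw : piwt p (BM \ BN) σ ≠ 0 := ne_of_gt (piwt_pos hp0 hp1 _ _)
  have goal2 : ((μ (cyl d BM σ)).toReal * piwt p BN (fun _ => false)) * piwt p (BM \ BN) σ
      = ((μ (cyl d BM σ')).toReal * piwt p BN σ) * piwt p (BM \ BN) σ := by
    linear_combination hrel
  exact mul_right_cancel₀ hw goal2

/-- The key bound: the weight of a cylinder dominates the `E`-event weight times the
reduced good weight. -/
lemma key_bound {q p : ℝ} (hq0 : 0 < q) (hq1 : q < 1) (hp : p = 1 - q)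
    {r : ℕ} (hmono : ConstraintMono d c) (hirr : IrreducibleKCM d c)
    {μ : Measure (Cfg d)} [IsProbabilityMeasure μ] (hdb : DetailedBalance d c p r μ)
    {Λ₀ : Finset (Site d)} (a : Cfg d) {N M : ℕ}
    (hΛ₀ : Λ₀ ⊆ box d N) (hNM : box d N ⊆ box d M) :
    (μ {η | ∀ x ∈ box d N, BPfin d c (box d M) η x = false}).toReal
        * (∑ J ∈ (box d N).powerset.filter
            (fun J => (∀ x ∈ box d N, BPfin d c (box d N) (pat (box d N) J) x = false)
              ∧ (∀ x ∈ Λ₀, pat (box d N) J x = a x)),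
            piwt p (box d N) (pat (box d N) J))
      ≤ (μ (cyl d Λ₀ a)).toReal := by
  classical
  have hp0 : 0 < p := by rw [hp]; linarith
  have hp1 : p < 1 := by rw [hp]; linarith
  set BN := box d N with hBNdef
  set BM := box d M with hBMdef
  set OUT := BM \ BN with hOUTdef
  have hdisjON : Disjoint OUT BN := Finset.sdiff_disjoint
  have hBMu : OUT ∪ BN = BM := Finset.sdiff_union_of_subset hNM
  set QN : ℝ := piwt p BN (fun _ => false) with hQNdef
  have hQNpos : 0 < QN := piwt_pos hp0 hp1 _ _
  set F : Finset (Site d) → ℝ := fun T => (μ (cyl d BM (pat BM T))).toReal with hFdef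
  have hFnn : ∀ T, 0 ≤ F T := fun T => ENNReal.toReal_nonneg
  set PP : Cfg d → Prop := fun η =>
    (∀ x ∈ BN, BPfin d c BN η x = false) ∧ (∀ x ∈ Λ₀, η x = a x) with hPPdef
  set inE : Cfg d → Prop := fun η => ∀ x ∈ BN, BPfin d c BM η x = false with hinEdef
  -- common facts about the (S, J) splitting
  have hsd : ∀ S : Finset (Site d), S ⊆ OUT → ∀ J : Finset (Site d), J ⊆ BN →
      (S ∪ J) \ BN = S := by
    intro S hS J hJ
    ext y
    simp only [Finset.mem_sdiff, Finset.mem_union]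
    constructor
    · rintro ⟨h1 | h1, h2⟩
      · exact h1
      · exact absurd (hJ h1) h2
    · intro hy
      exact ⟨Or.inl hy, (Finset.mem_sdiff.mp (hS hy)).2⟩
  have hagreeJ : ∀ S : Finset (Site d), S ⊆ OUT → ∀ J : Finset (Site d), ∀ x ∈ BN,
      pat BM (S ∪ J) x = pat BN J x := by
    intro S hS J x hx
    rw [pat_mem (hNM hx), pat_mem hx, decide_eq_decide]
    have hxS : x ∉ S := fun hc => (Finset.mem_sdiff.mp (hS hc)).2 hx
    simp [Finset.mem_union, hxS]
  have hpiwtJ : ∀ S : Finset (Site d), S ⊆ OUT → ∀ J : Finset (Site d),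
      piwt p BN (pat BM (S ∪ J)) = piwt p BN (pat BN J) := by
    intro S hS J
    exact piwt_congr (fun y hy => hagreeJ S hS J y hy)
  -- the sum over J of a pattern weight is 1
  have hsumJ : ∑ J ∈ BN.powerset, piwt p BN (pat BN J) = 1 := by
    have h1 : ∀ J ∈ BN.powerset, piwt p BN (pat BN J)
        = ∏ y ∈ BN, (if y ∈ J then p else 1 - p) :=
      fun J _ => piwt_mem_eq (fun y hy => pat_mem hy)
    exact (Finset.sum_congr rfl h1).trans (sum_prod_ite_one BN)
  -- pivot per pattern
  have hpivot : ∀ T : Finset (Site d), (∀ x ∈ BN, BPfin d c BM (pat BM T) x = false) →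
      F T * QN = F (T \ BN) * piwt p BN (pat BM T) := by
    intro T hE
    exact pivot_identity hq0 hq1 hp hmono hirr hdb hNM hE
  -- goodness implies E-membership
  have hGtoE : ∀ T : Finset (Site d), PP (pat BM T) → ∀ x ∈ BN, BPfin d c BM (pat BM T) x = false := by
    intro T hT x hx
    exact (BPfin_vol_mono hmono hNM (pat BM T)).false_of (hT.1 x hx)
  -- PP is determined on BN
  have hPPdet : ∀ η η' : Cfg d, (∀ x ∈ BN, η x = η' x) → (PP η ↔ PP η') := by
    intro η η' hagree
    have hBP : BPfin d c BN η = BPfin d c BN η' := BPfin_congr BN hagree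
    simp only [hPPdef]
    rw [hBP]
    refine and_congr Iff.rfl ?_
    exact forall₂_congr (fun x hx => by rw [hagree x (hΛ₀ hx)])
  have hPPdetM : ∀ η η' : Cfg d, (∀ x ∈ BM, η x = η' x) → (PP η ↔ PP η') :=
    fun η η' h => hPPdet η η' (fun x hx => h x (hNM hx))
  have hinEdet : ∀ η η' : Cfg d, (∀ x ∈ BM, η x = η' x) → (inE η ↔ inE η') := by
    intro η η' hagree
    simp only [hinEdef]
    rw [BPfin_congr BM hagree]
  -- PP of the pattern depends only on J
  have hPPJ : ∀ S : Finset (Site d), S ⊆ OUT → ∀ J : Finset (Site d),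
      (PP (pat BM (S ∪ J)) ↔ PP (pat BN J)) := by
    intro S hS J
    exact hPPdet _ _ (fun x hx => hagreeJ S hS J x hx)
  -- mu0
  set mu0 : ℝ := (μ (cyl d BN (fun _ => false))).toReal with hmu0def
  have hmu0 : mu0 = ∑ S ∈ OUT.powerset, F S := mu_cylfalse_eq μ hNM
  -- STEP III : the good sum
  set gsum : ℝ := ∑ J ∈ BN.powerset.filter (fun J => PP (pat BN J)), piwt p BN (pat BN J)
    with hgsumdef
  have hgsumnn : 0 ≤ gsum := Finset.sum_nonneg (fun J _ => le_of_lt (piwt_pos hp0 hp1 _ _))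
  have step3 : (∑ T ∈ BM.powerset.filter (fun T => PP (pat BM T)), F T) * QN
      = mu0 * gsum := by
    rw [Finset.sum_mul, Finset.sum_filter]
    have congr1 : ∀ T ∈ BM.powerset,
        (if PP (pat BM T) then F T * QN else 0)
          = (if PP (pat BM T) then F (T \ BN) * piwt p BN (pat BM T) else 0) := by
      intro T hT
      by_cases hPT : PP (pat BM T)
      · rw [if_pos hPT, if_pos hPT, hpivot T (hGtoE T hPT)]
      · rw [if_neg hPT, if_neg hPT]
    have hps : BM.powerset = (OUT ∪ BN).powerset := by rw [hBMu]
    rw [Finset.sum_congr rfl congr1, hps, sum_powerset_union hdisjON]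
    have congr2 : ∀ S ∈ OUT.powerset, ∀ J ∈ BN.powerset,
        (if PP (pat BM (S ∪ J)) then F ((S ∪ J) \ BN) * piwt p BN (pat BM (S ∪ J)) else 0)
          = F S * (if PP (pat BN J) then piwt p BN (pat BN J) else 0) := by
      intro S hS J hJ
      rw [Finset.mem_powerset] at hS hJ
      rw [hsd S hS J hJ, hpiwtJ S hS J]
      by_cases hPJ : PP (pat BN J)
      · rw [if_pos ((hPPJ S hS J).mpr hPJ), if_pos hPJ]
      · rw [if_neg (fun hc => hPJ ((hPPJ S hS J).mp hc)), if_neg hPJ, mul_zero]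
    rw [Finset.sum_congr rfl (fun S hS => Finset.sum_congr rfl (fun J hJ => congr2 S hS J hJ))]
    rw [hmu0, Finset.sum_mul]
    refine Finset.sum_congr rfl (fun S hS => ?_)
    rw [← Finset.mul_sum, ← Finset.sum_filter]
  -- STEP I : the E-event bound
  have step1 : (μ {η | inE η}).toReal * QN ≤ mu0 := by
    rw [measure_event μ BM inE hinEdet, Finset.sum_mul]
    have e1 : ∀ T ∈ BM.powerset.filter (fun T => inE (pat BM T)),
        (μ (cyl d BM (pat BM T))).toReal * QN = F (T \ BN) * piwt p BN (pat BM T) := by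
      intro T hT
      exact hpivot T (Finset.mem_filter.mp hT).2
    rw [Finset.sum_congr (filter_inst_congr _ _ _ _) e1]
    have e2 : ∑ T ∈ BM.powerset.filter (fun T => inE (pat BM T)),
          F (T \ BN) * piwt p BN (pat BM T)
        ≤ ∑ T ∈ BM.powerset, F (T \ BN) * piwt p BN (pat BM T) := by
      refine Finset.sum_le_sum_of_subset_of_nonneg (Finset.filter_subset _ _) ?_
      intro T _ _
      exact mul_nonneg (hFnn _) (le_of_lt (piwt_pos hp0 hp1 _ _))
    refine le_trans e2 ?_
    have hps : BM.powerset = (OUT ∪ BN).powerset := by rw [hBMu]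
    rw [hps, sum_powerset_union hdisjON]
    have e3 : ∀ S ∈ OUT.powerset, ∀ J ∈ BN.powerset,
        F ((S ∪ J) \ BN) * piwt p BN (pat BM (S ∪ J)) = F S * piwt p BN (pat BN J) := by
      intro S hS J hJ
      rw [Finset.mem_powerset] at hS hJ
      rw [hsd S hS J hJ, hpiwtJ S hS J]
    rw [Finset.sum_congr rfl (fun S hS => Finset.sum_congr rfl (fun J hJ => e3 S hS J hJ))]
    rw [hmu0]
    refine le_of_eq ?_
    refine Finset.sum_congr rfl (fun S _ => ?_)
    rw [← Finset.mul_sum, hsumJ, mul_one]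
  -- STEP: the union of good cylinders is inside the target cylinder
  have sum1 : ∑ T ∈ BM.powerset.filter (fun T => PP (pat BM T)), F T
      ≤ (μ (cyl d Λ₀ a)).toReal := by
    have hsubs : ∀ T ∈ BM.powerset.filter (fun T => PP (pat BM T)), T ⊆ BM :=
      fun T hT => Finset.mem_powerset.mp (Finset.mem_filter.mp hT).1
    have hb := measure_biUnion_pat μ BM (BM.powerset.filter (fun T => PP (pat BM T))) hsubs
    have hsub2 : (⋃ T ∈ BM.powerset.filter (fun T => PP (pat BM T)), cyl d BM (pat BM T))
        ⊆ cyl d Λ₀ a := by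
      intro η hη
      simp only [Set.mem_iUnion, exists_prop, Finset.mem_filter] at hη
      obtain ⟨T, ⟨hTpow, hPT⟩, hmem⟩ := hη
      intro x hx
      rw [hmem x (hNM (hΛ₀ hx))]
      exact hPT.2 x hx
    have hmono2 : (μ (⋃ T ∈ BM.powerset.filter (fun T => PP (pat BM T)),
          cyl d BM (pat BM T))).toReal ≤ (μ (cyl d Λ₀ a)).toReal :=
      ENNReal.toReal_mono (measure_ne_top μ _) (measure_mono hsub2)
    calc ∑ T ∈ BM.powerset.filter (fun T => PP (pat BM T)), F T
        = (μ (⋃ T ∈ BM.powerset.filter (fun T => PP (pat BM T)),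
            cyl d BM (pat BM T))).toReal := hb.symm
      _ ≤ _ := hmono2
  -- combine
  have main : (μ {η | inE η}).toReal * gsum * QN ≤ (μ (cyl d Λ₀ a)).toReal * QN := by
    calc (μ {η | inE η}).toReal * gsum * QN
        = ((μ {η | inE η}).toReal * QN) * gsum := by ring
      _ ≤ mu0 * gsum := mul_le_mul_of_nonneg_right step1 hgsumnn
      _ = (∑ T ∈ BM.powerset.filter (fun T => PP (pat BM T)), F T) * QN := step3.symm
      _ ≤ (μ (cyl d Λ₀ a)).toReal * QN :=
          mul_le_mul_of_nonneg_right sum1 (le_of_lt hQNpos)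
  exact le_of_mul_le_mul_right main hQNpos

/-! ### Convergence of the `E`-event measure -/

lemma mu_E_tendsto {r : ℕ} (hrange : HasRange d c r) (hmono : ConstraintMono d c)
    {μ : Measure (Cfg d)} [IsProbabilityMeasure μ]
    (h0 : μ {η | BP d c η = fun _ => false} = 1) (N : ℕ) :
    Filter.Tendsto
      (fun M : ℕ => (μ {η | ∀ x ∈ box d N, BPfin d c (box d M) η x = false}).toReal)
      Filter.atTop (nhds 1) := by
  classical
  set E : ℕ → Set (Cfg d) :=
    fun M => {η | ∀ x ∈ box d N, BPfin d c (box d M) η x = false} with hEdef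
  have hEdet : ∀ M : ℕ, ∀ η η' : Cfg d, (∀ x ∈ box d M, η x = η' x) →
      ((∀ x ∈ box d N, BPfin d c (box d M) η x = false)
        ↔ (∀ x ∈ box d N, BPfin d c (box d M) η' x = false)) := by
    intro M η η' h
    rw [BPfin_congr (box d M) h]
  have hEmeas : ∀ M, MeasurableSet (E M) := fun M =>
    measurableSet_event (box d M) _ (hEdet M)
  set F : ℕ → Set (Cfg d) := fun K => ⋂ M, ⋂ (_ : K ≤ M), E M with hFdef
  have hFmeas : ∀ K, MeasurableSet (F K) := fun K =>
    MeasurableSet.iInter (fun M => MeasurableSet.iInter (fun _ => hEmeas M))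
  have hFmono : Monotone F := by
    intro K K' hKK' η hη
    simp only [hFdef, Set.mem_iInter] at hη ⊢
    intro M hM
    exact hη M (le_trans hKK' hM)
  have hsub : {η | BP d c η = fun _ => false} ⊆ ⋃ K, F K := by
    intro η hη
    simp only [Set.mem_setOf_eq] at hη
    have hx : ∀ x ∈ box d N, ∃ n, (bstep d c)^[n] η x = false := fun x _ => BP_false hη x
    choose! f hf using hx
    set n0 := (box d N).sup f with hn0
    have hdead : ∀ x ∈ box d N, (bstep d c)^[n0] η x = false := by
      intro x hx'
      exact (bstep_iter_cle_self hmono η (Finset.le_sup hx')).false_of (hf x hx')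
    refine Set.mem_iUnion.mpr ⟨N + n0 * r, ?_⟩
    simp only [hFdef, Set.mem_iInter]
    intro M hM
    intro x hxN
    have hagr : (bstep d c)^[n0] η x
        = (bstepFin d c (box d M))^[n0] (extCfg d (box d M) η) x := by
      refine bstep_agree hrange n0 η M x (fun i => ?_)
      have h1 : |x i| ≤ (N : ℤ) := mem_box.mp hxN i
      have h2 : ((N : ℤ) + (n0 : ℤ) * (r : ℤ)) ≤ (M : ℤ) := by exact_mod_cast hM
      linarith
    exact (BPfin_cle_iter hmono (box d M) η n0).false_of
      (by rw [← hagr]; exact hdead x hxN)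
  have h1 : Filter.Tendsto (fun K => μ (F K)) Filter.atTop (nhds (μ (⋃ K, F K))) :=
    tendsto_measure_iUnion_atTop hFmono
  have h2 : μ (⋃ K, F K) = 1 := by
    refine le_antisymm prob_le_one ?_
    have := measure_mono (μ := μ) hsub
    rw [h0] at this
    exact this
  rw [h2] at h1
  have h3 : Filter.Tendsto (fun K => (μ (F K)).toReal) Filter.atTop (nhds 1) := by
    have := (ENNReal.tendsto_toReal ENNReal.one_ne_top).comp h1
    simpa [Function.comp_def] using this
  refine tendsto_of_tendsto_of_tendsto_of_le_of_le h3 tendsto_const_nhds ?_ ?_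
  · intro M
    refine ENNReal.toReal_mono (measure_ne_top μ _) (measure_mono ?_)
    intro η hη
    simp only [hFdef, Set.mem_iInter] at hη
    exact hη M le_rfl
  · intro M
    have := ENNReal.toReal_mono (ENNReal.one_ne_top) (prob_le_one (μ := μ) (s := E M))
    simpa using this

end S7

set_option maxHeartbeats 1000000 in
/-- let `(c_x)` be a monotone KCM constraint family of range `r` on `ℤ^d`
satisfying the irreducibility assumption, and suppose
`π(BP^{Λ_N}(η|_{Λ_N}) = 0_{Λ_N}) → 1` as `N → ∞`, where `π` is the Bernoulli(`p`)
product measure. If `μ` is a probability measure satisfying detailed balance with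
`BP(η) = 0` `μ`-almost surely, then `μ = π`. -/
theorem stmt7 (d : ℕ) (q p : ℝ) (hq0 : 0 < q) (hq1 : q < 1) (hp : p = 1 - q)
    (r : ℕ) (c : Site d → Cfg d → ℝ) (hrange : HasRange d c r)
    (hc0 : ∀ x η, 0 ≤ c x η) (hmono : ConstraintMono d c) (hirr : IrreducibleKCM d c)
    (π : Measure (Cfg d)) (hπ : IsProd d (fun _ => p) π)
    (hπlim : Filter.Tendsto
      (fun N : ℕ => π {η | ∀ x ∈ box d N, BPfin d c (box d N) η x = false})
      Filter.atTop (nhds 1))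
    (μ : Measure (Cfg d)) (hμ : IsProbabilityMeasure μ)
    (hdb : DetailedBalance d c p r μ)
    (h0 : μ {η | BP d c η = fun _ => false} = 1) :
    μ = π := by
  classical
  have hp0 : 0 < p := by rw [hp]; linarith
  have hp1 : p < 1 := by rw [hp]; linarith
  haveI hπprob : IsProbabilityMeasure π := hπ.1
  -- the cylinder lower bound
  have lower : ∀ (Λ₀ : Finset (Site d)) (a : Cfg d),
      (π (cyl d Λ₀ a)).toReal ≤ (μ (cyl d Λ₀ a)).toReal := by
    intro Λ₀ a
    refine le_of_forall_pos_le_add ?_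
    intro ε hε
    by_cases hεbig : 1 ≤ ε
    · have h1 : (π (cyl d Λ₀ a)).toReal ≤ 1 := by
        have := ENNReal.toReal_mono ENNReal.one_ne_top (prob_le_one (μ := π) (s := cyl d Λ₀ a))
        simpa using this
      have h2 : 0 ≤ (μ (cyl d Λ₀ a)).toReal := ENNReal.toReal_nonneg
      linarith
    push_neg at hεbig
    obtain ⟨N₀, hN₀⟩ := S7.exists_box Λ₀
    -- choose the scale N
    have hπT : Filter.Tendsto
        (fun N : ℕ => (π {η | ∀ x ∈ box d N, BPfin d c (box d N) η x = false}).toReal)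
        Filter.atTop (nhds 1) := by
      have := (ENNReal.tendsto_toReal ENNReal.one_ne_top).comp hπlim
      simpa [Function.comp_def] using this
    have hev1 : ∀ᶠ N in Filter.atTop,
        1 - ε / 2 < (π {η | ∀ x ∈ box d N, BPfin d c (box d N) η x = false}).toReal :=
      hπT.eventually (eventually_gt_nhds (by linarith))
    obtain ⟨N, hN1, hN2⟩ := (hev1.and (Filter.eventually_ge_atTop N₀)).exists
    have hΛ₀N : Λ₀ ⊆ box d N := hN₀ N hN2
    set G : Set (Cfg d) := {η | ∀ x ∈ box d N, BPfin d c (box d N) η x = false} with hGdef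
    have hGdet : ∀ η η' : Cfg d, (∀ x ∈ box d N, η x = η' x) →
        ((∀ x ∈ box d N, BPfin d c (box d N) η x = false)
          ↔ (∀ x ∈ box d N, BPfin d c (box d N) η' x = false)) := by
      intro η η' h
      rw [S7.BPfin_congr (box d N) h]
    have hGmeas : MeasurableSet G := S7.measurableSet_event (box d N) _ hGdet
    -- the good-and-matching event
    set PP : Cfg d → Prop := fun η =>
      (∀ x ∈ box d N, BPfin d c (box d N) η x = false) ∧ (∀ x ∈ Λ₀, η x = a x) with hPPdef
    have hPPdet : ∀ η η' : Cfg d, (∀ x ∈ box d N, η x = η' x) → (PP η ↔ PP η') := by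
      intro η η' h
      simp only [hPPdef]
      rw [S7.BPfin_congr (box d N) h]
      refine and_congr Iff.rfl (forall₂_congr (fun x hx => by rw [h x (hΛ₀N hx)]))
    -- identification of the reduced good weight with the π-measure
    have hgsum : (∑ J ∈ (box d N).powerset.filter (fun J => PP (S7.pat (box d N) J)),
          S7.piwt p (box d N) (S7.pat (box d N) J))
        = (π {η | PP η}).toReal := by
      rw [S7.measure_event π (box d N) PP hPPdet]
      exact Finset.sum_congr (S7.filter_inst_congr _ _ _ _) fun J _ =>
        (S7.pi_cyl_toReal hp0.le hp1.le (hπ.2) (box d N) (S7.pat (box d N) J)).symm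
    -- the good event bound
    have hsetGA : {η | PP η} = G ∩ cyl d Λ₀ a := by
      ext η
      simp only [hPPdef, Set.mem_setOf_eq, Set.mem_inter_iff, hGdef, cyl]
    have hGA : (π (cyl d Λ₀ a)).toReal - ε / 2 ≤ (π {η | PP η}).toReal := by
      have e0 : π (cyl d Λ₀ a ∩ G) + π (cyl d Λ₀ a \ G) = π (cyl d Λ₀ a) :=
        measure_inter_add_diff _ hGmeas
      have e1 : π (cyl d Λ₀ a \ G) ≤ π Gᶜ := measure_mono (fun η hη => hη.2)
      have e2 : (π Gᶜ).toReal = 1 - (π G).toReal := by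
        rw [measure_compl hGmeas (measure_ne_top π G), measure_univ,
          ENNReal.toReal_sub_of_le prob_le_one ENNReal.one_ne_top]
        simp
      have e3 : (π (cyl d Λ₀ a)).toReal
          = (π (cyl d Λ₀ a ∩ G)).toReal + (π (cyl d Λ₀ a \ G)).toReal := by
        rw [← ENNReal.toReal_add (measure_ne_top _ _) (measure_ne_top _ _), e0]
      have e4 : π {η | PP η} = π (cyl d Λ₀ a ∩ G) := by
        rw [hsetGA, Set.inter_comm]
      have e5 : (π (cyl d Λ₀ a \ G)).toReal ≤ (π Gᶜ).toReal :=
        ENNReal.toReal_mono (measure_ne_top π _) e1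
      have e6 : 1 - ε / 2 < (π G).toReal := hN1
      rw [e4]
      rw [e2] at e5
      linarith [e3, e5, e6]
    -- choose the scale M
    have hEt := S7.mu_E_tendsto hrange hmono h0 N
    have hev2 : ∀ᶠ M in Filter.atTop,
        1 - ε / 2 < (μ {η | ∀ x ∈ box d N, BPfin d c (box d M) η x = false}).toReal :=
      hEt.eventually (eventually_gt_nhds (by linarith))
    obtain ⟨M, hM1, hM2⟩ := (hev2.and (Filter.eventually_ge_atTop N)).exists
    have hNM : box d N ⊆ box d M := S7.box_mono hM2
    have hkey := S7.key_bound hq0 hq1 hp hmono hirr hdb a hΛ₀N hNM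
    -- final arithmetic
    set X : ℝ := (π (cyl d Λ₀ a)).toReal with hXdef
    set g : ℝ := ∑ J ∈ (box d N).powerset.filter (fun J => PP (S7.pat (box d N) J)),
      S7.piwt p (box d N) (S7.pat (box d N) J) with hgdef
    set Ev : ℝ := (μ {η | ∀ x ∈ box d N, BPfin d c (box d M) η x = false}).toReal with hEvdef
    have hgnn : 0 ≤ g := Finset.sum_nonneg (fun J _ => le_of_lt (S7.piwt_pos hp0 hp1 _ _))
    have hEvnn : 0 ≤ Ev := ENNReal.toReal_nonneg
    have hgval : g = (π {η | PP η}).toReal := hgdef.trans hgsum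
    have hgX : X - ε / 2 ≤ g := by rw [hgval]; exact hGA
    have hEv : 1 - ε / 2 ≤ Ev := le_of_lt hM1
    have hkey2 : Ev * g ≤ (μ (cyl d Λ₀ a)).toReal := hkey
    have hX1 : X ≤ 1 := by
      have := ENNReal.toReal_mono ENNReal.one_ne_top (prob_le_one (μ := π) (s := cyl d Λ₀ a))
      simpa using this
    have hmunn : 0 ≤ (μ (cyl d Λ₀ a)).toReal := ENNReal.toReal_nonneg
    -- conclude X ≤ μT + ε
    by_cases hXsmall : X - ε / 2 ≤ 0
    · linarith
    · push_neg at hXsmall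
      have f1 : (1 - ε / 2) * (X - ε / 2) ≤ Ev * g := by
        have first : (1 - ε / 2) * (X - ε / 2) ≤ Ev * (X - ε / 2) :=
          mul_le_mul_of_nonneg_right hEv (le_of_lt hXsmall)
        have second : Ev * (X - ε / 2) ≤ Ev * g :=
          mul_le_mul_of_nonneg_left hgX hEvnn
        linarith
      nlinarith [f1, hkey2, hX1, hε.le]
  -- equality of all cylinder measures
  have equal : ∀ (Λ₀ : Finset (Site d)) (a : Cfg d), μ (cyl d Λ₀ a) = π (cyl d Λ₀ a) := by
    intro Λ₀ a
    have hpatcase : ∀ T ∈ Λ₀.powerset,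
        (π (cyl d Λ₀ (S7.pat Λ₀ T))).toReal = (μ (cyl d Λ₀ (S7.pat Λ₀ T))).toReal := by
      have hsum_mu : ∑ T ∈ Λ₀.powerset, (μ (cyl d Λ₀ (S7.pat Λ₀ T))).toReal = 1 := by
        rw [← S7.measure_biUnion_pat μ Λ₀ Λ₀.powerset (fun T hT => Finset.mem_powerset.mp hT),
          ← S7.univ_eq_biUnion_pat, measure_univ]
        simp
      have hsum_pi : ∑ T ∈ Λ₀.powerset, (π (cyl d Λ₀ (S7.pat Λ₀ T))).toReal = 1 := by
        rw [← S7.measure_biUnion_pat π Λ₀ Λ₀.powerset (fun T hT => Finset.mem_powerset.mp hT),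
          ← S7.univ_eq_biUnion_pat, measure_univ]
        simp
      have hle : ∀ T ∈ Λ₀.powerset,
          (π (cyl d Λ₀ (S7.pat Λ₀ T))).toReal ≤ (μ (cyl d Λ₀ (S7.pat Λ₀ T))).toReal :=
        fun T _ => lower Λ₀ (S7.pat Λ₀ T)
      exact (Finset.sum_eq_sum_iff_of_le hle).mp (by rw [hsum_mu, hsum_pi])
    have hrw : cyl d Λ₀ a = cyl d Λ₀ (S7.pat Λ₀ (Λ₀.filter (fun y => a y = true))) :=
      S7.cyl_congr (S7.self_agree_pat Λ₀ a)
    rw [hrw]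
    have hT := hpatcase (Λ₀.filter (fun y => a y = true))
      (Finset.mem_powerset.mpr (Finset.filter_subset _ _))
    exact ((ENNReal.toReal_eq_toReal_iff' (measure_ne_top μ _) (measure_ne_top π _)).mp hT.symm)
  -- conclude by the π-system argument
  set C : Set (Set (Cfg d)) := {s | ∃ Λ ζ, s = cyl d Λ ζ} with hCdef
  have key : ∀ (x : Site d) (s : Set Bool),
      MeasurableSet[MeasurableSpace.generateFrom C] ((fun η : Cfg d => η x) ⁻¹' s) := by
    intro x s
    have hcylmem : ∀ b : Bool, ((fun η : Cfg d => η x) ⁻¹' {b}) ∈ C := by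
      intro b
      refine ⟨{x}, fun _ => b, ?_⟩
      ext η
      simp [cyl]
    by_cases ht : true ∈ s <;> by_cases hf : false ∈ s
    · have hs : s = Set.univ := by
        ext b; cases b <;> simp [ht, hf]
      have huniv : ((fun η : Cfg d => η x) ⁻¹' Set.univ) ∈ C := by
        refine ⟨∅, fun _ => true, ?_⟩
        ext η
        simp [cyl]
      rw [hs]
      exact MeasurableSpace.measurableSet_generateFrom huniv
    · have hs : s = {true} := by
        ext b; cases b <;> simp [ht, hf]
      rw [hs]
      exact MeasurableSpace.measurableSet_generateFrom (hcylmem true)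
    · have hs : s = {false} := by
        ext b; cases b <;> simp [ht, hf]
      rw [hs]
      exact MeasurableSpace.measurableSet_generateFrom (hcylmem false)
    · have hs : s = ∅ := by
        ext b; cases b <;> simp [ht, hf]
      rw [hs, Set.preimage_empty]
      exact @MeasurableSet.empty _ (MeasurableSpace.generateFrom C)
  have hgen : (inferInstance : MeasurableSpace (Cfg d)) = MeasurableSpace.generateFrom C := by
    refine le_antisymm ?_ (MeasurableSpace.generateFrom_le ?_)
    · have h2 : ∀ x : Site d,
          @Measurable (Cfg d) Bool (MeasurableSpace.generateFrom C) _ (fun η => η x) :=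
        fun x s _ => key x s
      have hmeas : Measurable[MeasurableSpace.generateFrom C] (id : Cfg d → Cfg d) :=
        (@measurable_pi_iff (Cfg d) (Site d) (fun _ => Bool)
          (MeasurableSpace.generateFrom C) (fun _ => inferInstance) id).mpr h2
      intro s hs
      exact hmeas hs
    · rintro s ⟨Λ, ζ, rfl⟩
      exact S7.measurableSet_cyl Λ ζ
  have hpisys : IsPiSystem C := by
    rintro s ⟨Λ, ζ, rfl⟩ t ⟨Λ', ζ', rfl⟩ hne
    obtain ⟨η₀, hη₀⟩ := hne
    refine ⟨Λ ∪ Λ', η₀, ?_⟩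
    ext η
    simp only [Set.mem_inter_iff, cyl, Set.mem_setOf_eq, Finset.mem_union]
    constructor
    · rintro ⟨h1, h2⟩ x hx
      rcases hx with hx | hx
      · rw [h1 x hx, ← hη₀.1 x hx]
      · rw [h2 x hx, ← hη₀.2 x hx]
    · intro h
      constructor
      · intro x hx
        rw [h x (Or.inl hx)]
        exact hη₀.1 x hx
      · intro x hx
        rw [h x (Or.inr hx)]
        exact hη₀.2 x hx
  refine ext_of_generate_finite C hgen hpisys ?_ ?_
  · rintro s ⟨Λ, ζ, rfl⟩
    exact equal Λ ζ
  · rw [measure_univ, measure_univ]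
end

section
/- Let (c_x) be a monotone KCM constraint family of range r on Z^d satisfying the irreducibility assumption, and let μ be a probability measure on Ω satisfying detailed balance. Then for every finite L and every set E ⊆ {0,1}^{Λ_L}: μ({η : η|_{Λ_L} ∈ E}) = Σ_β π({η : η|_{Λ_L} ∈ E} | BP^{Λ_L}(η|_{Λ_L}) = β) · μ({η : BP^{Λ_L}(η|_{Λ_L}) = β}), the sum ranging over all β in the image of BP^{Λ_L}. Equivalently, whenever μ({η : BP^{Λ_L}(η|_{Λ_L}) = β}) > 0, the conditional law of η|_{Λ_L} under μ given BP^{Λ_L}(η|_{Λ_L}) = β equals the conditional law of η|_{Λ_L} under π given the same event. -/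
open MeasureTheory
open scoped Classical ENNReal

namespace Stmt9Aux
variable {d : ℕ}

noncomputable def embΛ (Λ : Finset (Site d)) (f : ↥Λ → Bool) : Cfg d := fun y =>
  if h : y ∈ Λ then f ⟨y, h⟩ else true

lemma embΛ_mem {Λ : Finset (Site d)} (f : ↥Λ → Bool) {y : Site d} (h : y ∈ Λ) :
    embΛ Λ f y = f ⟨y, h⟩ := dif_pos h

lemma embΛ_not_mem {Λ : Finset (Site d)} (f : ↥Λ → Bool) {y : Site d} (h : y ∉ Λ) :
    embΛ Λ f y = true := dif_neg h

lemma measurable_cyl (Λ : Finset (Site d)) (ζ : Cfg d) : MeasurableSet (cyl d Λ ζ) := by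
  have h : cyl d Λ ζ = ⋂ x ∈ (Λ : Set (Site d)), (fun η : Cfg d => η x) ⁻¹' {ζ x} := by
    ext η; simp [cyl]
  rw [h]
  exact MeasurableSet.biInter Λ.countable_toSet fun x _ =>
    measurable_pi_apply x (measurableSet_singleton (ζ x))

lemma mem_cyl_embΛ (Λ : Finset (Site d)) (η : Cfg d) :
    η ∈ cyl d Λ (embΛ Λ fun x : ↥Λ => η x) := by
  intro x hx; exact (embΛ_mem (fun x : ↥Λ => η ↑x) hx).symm

lemma embΛ_eq_of_mem {Λ : Finset (Site d)} {f g : ↥Λ → Bool} {η : Cfg d}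
    (hf : η ∈ cyl d Λ (embΛ Λ f)) (hg : η ∈ cyl d Λ (embΛ Λ g)) : f = g := by
  funext x
  have h1 := hf x x.2
  have h2 := hg x x.2
  rw [embΛ_mem f x.2] at h1
  rw [embΛ_mem g x.2] at h2
  exact h1 ▸ h2

lemma measure_eq_sum_part (ν : Measure (Cfg d)) (Λ : Finset (Site d))
    {A : Set (Cfg d)} (hA : MeasurableSet A) :
    ν A = ∑ f : ↥Λ → Bool, ν (A ∩ cyl d Λ (embΛ Λ f)) := by
  have hcover : A = ⋃ f ∈ (Finset.univ : Finset (↥Λ → Bool)), A ∩ cyl d Λ (embΛ Λ f) := by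
    ext η
    simp only [Set.mem_iUnion, Finset.mem_univ, Set.mem_inter_iff, exists_prop, true_and]
    constructor
    · intro hη; exact ⟨fun x => η x, hη, mem_cyl_embΛ Λ η⟩
    · rintro ⟨f, hη, -⟩; exact hη
  have hdisj : ((Finset.univ : Finset (↥Λ → Bool)) : Set (↥Λ → Bool)).PairwiseDisjoint
      (fun f => A ∩ cyl d Λ (embΛ Λ f)) := fun f _ g _ hfg =>
    Set.disjoint_left.2 fun η h1 h2 => hfg (embΛ_eq_of_mem h1.2 h2.2)
  have hmeas : ∀ f ∈ (Finset.univ : Finset (↥Λ → Bool)),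
      MeasurableSet (A ∩ cyl d Λ (embΛ Λ f)) := fun f _ => hA.inter (measurable_cyl _ _)
  conv_lhs => rw [hcover]
  exact measure_biUnion_finset hdisj hmeas

lemma measure_local (ν : Measure (Cfg d)) (Λ : Finset (Site d))
    {A : Set (Cfg d)} (hA : MeasurableSet A)
    (hloc : ∀ (f : ↥Λ → Bool) (η : Cfg d), η ∈ cyl d Λ (embΛ Λ f) → (η ∈ A ↔ embΛ Λ f ∈ A)) :
    ν A = ∑ f ∈ Finset.univ.filter (fun f : ↥Λ → Bool => embΛ Λ f ∈ A),
      ν (cyl d Λ (embΛ Λ f)) := by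
  rw [measure_eq_sum_part ν Λ hA, Finset.sum_filter]
  refine Finset.sum_congr rfl fun f _ => ?_
  by_cases hf : embΛ Λ f ∈ A
  · rw [if_pos hf]
    congr 1
    ext η
    exact ⟨fun h => h.2, fun h => ⟨(hloc f η h).2 hf, h⟩⟩
  · rw [if_neg hf]
    have : A ∩ cyl d Λ (embΛ Λ f) = ∅ := by
      ext η
      simp only [Set.mem_inter_iff, Set.mem_empty_iff_false, iff_false, not_and]
      intro hη hc; exact hf ((hloc f η hc).1 hη)
    rw [this, measure_empty]

end Stmt9Aux

namespace Stmt9Aux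
variable {d : ℕ}

noncomputable def Wgt (p : ℝ) (Λ : Finset (Site d)) (η : Cfg d) : ℝ :=
  ∏ y ∈ Λ, if η y then p else 1 - p

lemma Wgt_pos {p : ℝ} (h0 : 0 < p) (h1 : p < 1) (Λ : Finset (Site d)) (η : Cfg d) :
    0 < Wgt p Λ η :=
  Finset.prod_pos fun y _ => by split <;> linarith

lemma Wgt_congr {p : ℝ} {Λ : Finset (Site d)} {η η' : Cfg d}
    (h : ∀ y ∈ Λ, η y = η' y) : Wgt p Λ η = Wgt p Λ η' :=
  Finset.prod_congr rfl fun y hy => by rw [h y hy]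

def modOn (Λ : Finset (Site d)) (ξ η : Cfg d) : Cfg d := fun y =>
  if y ∈ Λ then η y else ξ y

lemma step_ratio {r : ℕ} {c : Site d → Cfg d → ℝ} {p : ℝ} {μ : Measure (Cfg d)}
    (hdb : DetailedBalance d c p r μ) {Λ' : Finset (Site d)} {x : Site d}
    (hx : ∀ y : Site d, (∀ i : Fin d, |y i - x i| ≤ (r : ℤ)) → y ∈ Λ')
    {η : Cfg d} (hc : 0 < c x η) :
    (μ (cyl d Λ' η)).toReal * Wgt p Λ' (flipAt d η x)
      = (μ (cyl d Λ' (flipAt d η x))).toReal * Wgt p Λ' η := by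
  have h := hdb Λ' x hx η
  have hc' : c x η ≠ 0 := ne_of_gt hc
  unfold Wgt
  apply mul_left_cancel₀ hc'
  calc c x η * ((μ (cyl d Λ' η)).toReal * ∏ y ∈ Λ', if flipAt d η x y then p else 1 - p)
      = c x η * (∏ y ∈ Λ', if flipAt d η x y then p else 1 - p) * (μ (cyl d Λ' η)).toReal := by
        ring
    _ = c x η * (∏ y ∈ Λ', if η y then p else 1 - p) * (μ (cyl d Λ' (flipAt d η x))).toReal := h
    _ = c x η * ((μ (cyl d Λ' (flipAt d η x))).toReal * ∏ y ∈ Λ', if η y then p else 1 - p) := by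
        ring

lemma legal_outside {c : Site d → Cfg d → ℝ} {Λ : Finset (Site d)} {a b : Cfg d}
    (h : LegalStep d c Λ a b) : ∀ y, y ∉ Λ → a y = b y := by
  obtain ⟨x, hx, -, rfl⟩ := h
  intro y hy
  rw [flipAt, Function.update_of_ne (fun hyx : y = x => hy (hyx ▸ hx))]

lemma chain_outside {c : Site d → Cfg d → ℝ} {Λ : Finset (Site d)} {a b : Cfg d}
    (h : Relation.ReflTransGen (LegalStep d c Λ) a b) : ∀ y, y ∉ Λ → a y = b y := by
  induction h with
  | refl => intro y _; rfl
  | tail _ hstep ih => intro y hy; rw [ih y hy, legal_outside hstep y hy]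

lemma chain_ratio {r : ℕ} {c : Site d → Cfg d → ℝ} {p : ℝ} {μ : Measure (Cfg d)}
    (hp0 : 0 < p) (hp1 : p < 1)
    (hmono : ConstraintMono d c) (hdb : DetailedBalance d c p r μ)
    {Λ Λ' : Finset (Site d)}
    (hnb : ∀ x ∈ Λ, ∀ y : Site d, (∀ i : Fin d, |y i - x i| ≤ (r : ℤ)) → y ∈ Λ')
    {η η' : Cfg d} (h : Relation.ReflTransGen (LegalStep d c Λ) η η')
    (hout : ∀ y, y ∉ Λ → η y = true) (ξ : Cfg d) :
    (μ (cyl d Λ' (modOn Λ ξ η))).toReal * Wgt p Λ' (modOn Λ ξ η')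
      = (μ (cyl d Λ' (modOn Λ ξ η'))).toReal * Wgt p Λ' (modOn Λ ξ η) := by
  induction h with
  | refl => rfl
  | @tail b η'' hab hstep ih =>
      obtain ⟨x, hxΛ, hc, rfl⟩ := hstep
      have hbout : ∀ y, y ∉ Λ → b y = true := fun y hy =>
        (chain_outside hab y hy) ▸ hout y hy
      have hle : modOn Λ ξ b ≤ b := by
        intro y
        by_cases hy : y ∈ Λ
        · simp [modOn, hy]
        · rw [hbout y hy]; exact Bool.le_true _
      have hc2 : 0 < c x (modOn Λ ξ b) := lt_of_lt_of_le hc (hmono x _ _ hle)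
      have hflip : modOn Λ ξ (flipAt d b x) = flipAt d (modOn Λ ξ b) x := by
        funext y
        by_cases hyx : y = x
        · subst hyx
          simp [modOn, hxΛ, flipAt, Function.update_self]
        · simp [modOn, flipAt, Function.update_of_ne hyx]
      have hstep' := step_ratio hdb (hnb x hxΛ) hc2
      rw [hflip]
      have hWB : Wgt p Λ' (modOn Λ ξ b) ≠ 0 := ne_of_gt (Wgt_pos hp0 hp1 _ _)
      apply mul_right_cancel₀ hWB
      calc (μ (cyl d Λ' (modOn Λ ξ η))).toReal * Wgt p Λ' (flipAt d (modOn Λ ξ b) x)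
            * Wgt p Λ' (modOn Λ ξ b)
          = ((μ (cyl d Λ' (modOn Λ ξ η))).toReal * Wgt p Λ' (modOn Λ ξ b))
            * Wgt p Λ' (flipAt d (modOn Λ ξ b) x) := by ring
        _ = ((μ (cyl d Λ' (modOn Λ ξ b))).toReal * Wgt p Λ' (modOn Λ ξ η))
            * Wgt p Λ' (flipAt d (modOn Λ ξ b) x) := by rw [ih]
        _ = ((μ (cyl d Λ' (modOn Λ ξ b))).toReal * Wgt p Λ' (flipAt d (modOn Λ ξ b) x))
            * Wgt p Λ' (modOn Λ ξ η) := by ring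
        _ = ((μ (cyl d Λ' (flipAt d (modOn Λ ξ b) x))).toReal * Wgt p Λ' (modOn Λ ξ b))
            * Wgt p Λ' (modOn Λ ξ η) := by rw [hstep']
        _ = (μ (cyl d Λ' (flipAt d (modOn Λ ξ b) x))).toReal * Wgt p Λ' (modOn Λ ξ η)
            * Wgt p Λ' (modOn Λ ξ b) := by ring

end Stmt9Aux


namespace Stmt9Aux
variable {d : ℕ}

/-- Replace the `Λ`-part of a pattern on `Λ'` by `ζ`. -/
noncomputable def repl (Λ : Finset (Site d)) (Λ' : Finset (Site d)) (ζ : Cfg d)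
    (F : ↥Λ' → Bool) : ↥Λ' → Bool := fun x => if (x : Site d) ∈ Λ then ζ x else F x

lemma embΛ_repl_mem {Λ Λ' : Finset (Site d)} (hΛ : Λ ⊆ Λ') (ζ : Cfg d) (F : ↥Λ' → Bool)
    {y : Site d} (hy : y ∈ Λ) : embΛ Λ' (repl Λ Λ' ζ F) y = ζ y := by
  rw [embΛ_mem _ (hΛ hy)]
  simp [repl, hy]

lemma embΛ_repl_not_mem {Λ Λ' : Finset (Site d)} (ζ : Cfg d) (F : ↥Λ' → Bool)
    {y : Site d} (hy' : y ∈ Λ') (hy : y ∉ Λ) :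
    embΛ Λ' (repl Λ Λ' ζ F) y = embΛ Λ' F y := by
  rw [embΛ_mem _ hy', embΛ_mem _ hy']
  simp [repl, hy]

lemma class_ratio {r : ℕ} {c : Site d → Cfg d → ℝ} {p : ℝ} {μ : Measure (Cfg d)}
    [IsProbabilityMeasure μ]
    (hp0 : 0 < p) (hp1 : p < 1)
    (hmono : ConstraintMono d c) (hirr : IrreducibleKCM d c)
    (hdb : DetailedBalance d c p r μ)
    {Λ Λ' : Finset (Site d)} (hΛ : Λ ⊆ Λ')
    (hnb : ∀ x ∈ Λ, ∀ y : Site d, (∀ i : Fin d, |y i - x i| ≤ (r : ℤ)) → y ∈ Λ')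
    {ζ ζ' : Cfg d} (hBP : BPfin d c Λ ζ = BPfin d c Λ ζ') :
    (μ (cyl d Λ ζ)).toReal * Wgt p Λ ζ' = (μ (cyl d Λ ζ')).toReal * Wgt p Λ ζ := by
  classical
  have hchain := hirr Λ ζ ζ' hBP
  have hext_out : ∀ y, y ∉ Λ → extCfg d Λ ζ y = true := fun y hy => if_neg hy
  -- decomposition of Λ-cylinders into Λ'-cylinders
  have hdec : ∀ ζ₀ : Cfg d, (μ (cyl d Λ ζ₀)).toReal =
      ∑ F ∈ Finset.univ.filter (fun F : ↥Λ' → Bool => embΛ Λ' F ∈ cyl d Λ ζ₀),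
        (μ (cyl d Λ' (embΛ Λ' F))).toReal := by
    intro ζ₀
    have hloc : ∀ (F : ↥Λ' → Bool) (η : Cfg d), η ∈ cyl d Λ' (embΛ Λ' F) →
        (η ∈ cyl d Λ ζ₀ ↔ embΛ Λ' F ∈ cyl d Λ ζ₀) := by
      intro F η hη
      constructor
      · intro hA y hy; rw [← hη y (hΛ hy)]; exact hA y hy
      · intro hA y hy; rw [hη y (hΛ hy)]; exact hA y hy
    rw [measure_local μ Λ' (measurable_cyl Λ ζ₀) hloc,
      ENNReal.toReal_sum (fun F _ => measure_ne_top μ _)]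
  -- per-pattern identity coming from the chain of legal flips
  have hkey : ∀ F ∈ Finset.univ.filter (fun F : ↥Λ' → Bool => embΛ Λ' F ∈ cyl d Λ ζ),
      (μ (cyl d Λ' (embΛ Λ' F))).toReal * Wgt p Λ ζ'
        = (μ (cyl d Λ' (embΛ Λ' (repl Λ Λ' ζ' F)))).toReal * Wgt p Λ ζ := by
    intro F hF
    have hFζ : ∀ y ∈ Λ, embΛ Λ' F y = ζ y := (Finset.mem_filter.1 hF).2
    have e1 : modOn Λ (embΛ Λ' F) (extCfg d Λ ζ) = embΛ Λ' F := by
      funext y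
      by_cases hy : y ∈ Λ
      · simp [modOn, hy, extCfg, hFζ y hy]
      · simp [modOn, hy]
    have e2 : modOn Λ (embΛ Λ' F) (extCfg d Λ ζ') = embΛ Λ' (repl Λ Λ' ζ' F) := by
      funext y
      by_cases hy : y ∈ Λ
      · rw [embΛ_repl_mem hΛ ζ' F hy]
        simp [modOn, hy, extCfg]
      · by_cases hy' : y ∈ Λ'
        · rw [embΛ_repl_not_mem ζ' F hy' hy]
          simp [modOn, hy]
        · have hyn : y ∉ Λ := fun h => hy' (hΛ h)
          rw [embΛ_not_mem _ hy']
          simp [modOn, hyn, embΛ_not_mem _ hy']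
    have hcr := chain_ratio hp0 hp1 hmono hdb hnb hchain hext_out (embΛ Λ' F)
    rw [e1, e2] at hcr
    have hWsplit : ∀ (ζ₀ : Cfg d) (G : ↥Λ' → Bool), (∀ y ∈ Λ, embΛ Λ' G y = ζ₀ y) →
        Wgt p Λ' (embΛ Λ' G)
          = (∏ y ∈ Λ' \ Λ, if embΛ Λ' G y then p else 1 - p) * Wgt p Λ ζ₀ := by
      intro ζ₀ G hG
      unfold Wgt
      rw [← Finset.prod_sdiff hΛ]
      congr 1
      exact Finset.prod_congr rfl fun y hy => by rw [hG y hy]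
    have hφF : ∀ y ∈ Λ, embΛ Λ' (repl Λ Λ' ζ' F) y = ζ' y :=
      fun y hy => embΛ_repl_mem hΛ ζ' F hy
    have hBsame : (∏ y ∈ Λ' \ Λ, if embΛ Λ' (repl Λ Λ' ζ' F) y then p else 1 - p)
        = ∏ y ∈ Λ' \ Λ, if embΛ Λ' F y then p else 1 - p := by
      refine Finset.prod_congr rfl fun y hy => ?_
      obtain ⟨hy', hyn⟩ := Finset.mem_sdiff.1 hy
      rw [embΛ_repl_not_mem ζ' F hy' hyn]
    rw [hWsplit ζ F hFζ, hWsplit ζ' (repl Λ Λ' ζ' F) hφF, hBsame] at hcr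
    have hBpos : (0:ℝ) < ∏ y ∈ Λ' \ Λ, if embΛ Λ' F y then p else 1 - p :=
      Finset.prod_pos fun y _ => by split <;> linarith
    apply mul_left_cancel₀ (ne_of_gt hBpos)
    calc (∏ y ∈ Λ' \ Λ, if embΛ Λ' F y then p else 1 - p)
          * ((μ (cyl d Λ' (embΛ Λ' F))).toReal * Wgt p Λ ζ')
        = (μ (cyl d Λ' (embΛ Λ' F))).toReal
          * ((∏ y ∈ Λ' \ Λ, if embΛ Λ' F y then p else 1 - p) * Wgt p Λ ζ') := by ring
      _ = (μ (cyl d Λ' (embΛ Λ' (repl Λ Λ' ζ' F)))).toReal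
          * ((∏ y ∈ Λ' \ Λ, if embΛ Λ' F y then p else 1 - p) * Wgt p Λ ζ) := hcr
      _ = (∏ y ∈ Λ' \ Λ, if embΛ Λ' F y then p else 1 - p)
          * ((μ (cyl d Λ' (embΛ Λ' (repl Λ Λ' ζ' F)))).toReal * Wgt p Λ ζ) := by ring
  -- reindexing the sum over patterns
  have hsum2 : ∑ F ∈ Finset.univ.filter (fun F : ↥Λ' → Bool => embΛ Λ' F ∈ cyl d Λ ζ),
      (μ (cyl d Λ' (embΛ Λ' (repl Λ Λ' ζ' F)))).toReal
      = ∑ G ∈ Finset.univ.filter (fun G : ↥Λ' → Bool => embΛ Λ' G ∈ cyl d Λ ζ'),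
        (μ (cyl d Λ' (embΛ Λ' G))).toReal := by
    refine Finset.sum_nbij' (repl Λ Λ' ζ') (repl Λ Λ' ζ) ?_ ?_ ?_ ?_ ?_
    · intro F _
      exact Finset.mem_filter.2 ⟨Finset.mem_univ _, fun y hy => embΛ_repl_mem hΛ ζ' F hy⟩
    · intro G _
      exact Finset.mem_filter.2 ⟨Finset.mem_univ _, fun y hy => embΛ_repl_mem hΛ ζ G hy⟩
    · intro F hF
      have hFζ : ∀ y ∈ Λ, embΛ Λ' F y = ζ y := (Finset.mem_filter.1 hF).2
      funext x
      by_cases hx : (x : Site d) ∈ Λ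
      · have h1 := hFζ x hx
        rw [embΛ_mem F x.2] at h1
        simp only [repl, hx, if_pos]
        exact h1.symm
      · simp only [repl, hx, if_neg, ite_false]
    · intro G hG
      have hGζ : ∀ y ∈ Λ, embΛ Λ' G y = ζ' y := (Finset.mem_filter.1 hG).2
      funext x
      by_cases hx : (x : Site d) ∈ Λ
      · have h1 := hGζ x hx
        rw [embΛ_mem G x.2] at h1
        simp only [repl, hx, if_pos]
        exact h1.symm
      · simp only [repl, hx, if_neg, ite_false]
    · intro F _; rfl
  calc (μ (cyl d Λ ζ)).toReal * Wgt p Λ ζ'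
      = ∑ F ∈ Finset.univ.filter (fun F : ↥Λ' → Bool => embΛ Λ' F ∈ cyl d Λ ζ),
          (μ (cyl d Λ' (embΛ Λ' F))).toReal * Wgt p Λ ζ' := by
        rw [hdec ζ, Finset.sum_mul]
    _ = ∑ F ∈ Finset.univ.filter (fun F : ↥Λ' → Bool => embΛ Λ' F ∈ cyl d Λ ζ),
          (μ (cyl d Λ' (embΛ Λ' (repl Λ Λ' ζ' F)))).toReal * Wgt p Λ ζ :=
        Finset.sum_congr rfl hkey
    _ = (∑ F ∈ Finset.univ.filter (fun F : ↥Λ' → Bool => embΛ Λ' F ∈ cyl d Λ ζ),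
          (μ (cyl d Λ' (embΛ Λ' (repl Λ Λ' ζ' F)))).toReal) * Wgt p Λ ζ := by
        rw [Finset.sum_mul]
    _ = (μ (cyl d Λ ζ')).toReal * Wgt p Λ ζ := by rw [hsum2, ← hdec ζ']

end Stmt9Aux

open Stmt9Aux


set_option maxHeartbeats 1000000 in
/-- let `(c_x)` be a monotone KCM constraint family of range `r` on `ℤ^d`
satisfying the irreducibility assumption, and let `μ` satisfy detailed balance. Then, for
every box `Λ_L` and every (measurable) event `E` depending only on the coordinates in
`Λ_L`, `μ(E) = ∑_β π(E | BP^{Λ_L}(η|_{Λ_L}) = β) μ(BP^{Λ_L}(η|_{Λ_L}) = β)`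
(terms with `β` outside the range of `BP^{Λ_L}` vanish); equivalently, conditionally on
each ergodic component, `μ` coincides with the Bernoulli(`p`) product measure `π`. -/
theorem stmt9 (d : ℕ) (q p : ℝ) (hq0 : 0 < q) (hq1 : q < 1) (hp : p = 1 - q)
    (r : ℕ) (c : Site d → Cfg d → ℝ) (hrange : HasRange d c r)
    (hc0 : ∀ x η, 0 ≤ c x η) (hmono : ConstraintMono d c) (hirr : IrreducibleKCM d c)
    (π : Measure (Cfg d)) (hπ : IsProd d (fun _ => p) π)
    (μ : Measure (Cfg d)) (hμ : IsProbabilityMeasure μ)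
    (hdb : DetailedBalance d c p r μ) :
    ∀ (L : ℕ) (E : Set (Cfg d)), MeasurableSet E →
      (∀ η η' : Cfg d, (∀ x ∈ box d L, η x = η' x) → (η ∈ E ↔ η' ∈ E)) →
      μ E = ∑' β : Cfg d,
        (ProbabilityTheory.cond π {η | BPfin d c (box d L) η = β}) E *
          μ {η | BPfin d c (box d L) η = β} := by
  classical
  haveI := hμ
  obtain ⟨hπprob, hπcyl⟩ := hπ
  haveI := hπprob
  have hp0 : 0 < p := by rw [hp]; linarith
  have hp1 : p < 1 := by rw [hp]; linarith
  intro L E hE hEloc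
  set Λ : Finset (Site d) := box d L with hΛdef
  have hmem : ∀ (N : ℕ) (x : Site d), x ∈ box d N ↔ ∀ i, -(N : ℤ) ≤ x i ∧ x i ≤ N := by
    intro N x
    simp [box, Fintype.mem_piFinset, Finset.mem_Icc]
  have hΛsub : Λ ⊆ box d (L + r) := by
    intro x hx
    rw [hΛdef, hmem] at hx
    rw [hmem]
    intro i
    have h := hx i
    push_cast at h ⊢
    omega
  have hnb : ∀ x ∈ Λ, ∀ y : Site d, (∀ i : Fin d, |y i - x i| ≤ (r : ℤ)) → y ∈ box d (L + r) := by
    intro x hx y hy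
    rw [hΛdef, hmem] at hx
    rw [hmem]
    intro i
    have h1 := hx i
    have h2 := abs_le.1 (hy i)
    push_cast at h1 ⊢
    omega
  -- BP is a cylinder function
  have hBPcyl : ∀ (f : ↥Λ → Bool) (η : Cfg d), η ∈ cyl d Λ (embΛ Λ f) →
      BPfin d c Λ η = BPfin d c Λ (embΛ Λ f) := by
    intro f η hη
    unfold BPfin
    congr 1
    funext y
    unfold extCfg
    by_cases hy : y ∈ Λ
    · simp only [hy, if_pos]
      exact hη y hy
    · simp [hy]
  set val : (↥Λ → Bool) → Cfg d := fun f => BPfin d c Λ (embΛ Λ f) with hval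
  set T : Finset (Cfg d) := Finset.univ.image val with hT
  -- D β as union of cylinders and its measurability
  have hDeq : ∀ β : Cfg d, {η : Cfg d | BPfin d c Λ η = β}
      = ⋃ f ∈ Finset.univ.filter (fun f : ↥Λ → Bool => val f = β), cyl d Λ (embΛ Λ f) := by
    intro β
    ext η
    simp only [Set.mem_setOf_eq, Set.mem_iUnion, Finset.mem_filter, Finset.mem_univ,
      true_and, exists_prop]
    constructor
    · intro hβ
      refine ⟨fun x : ↥Λ => η x, ?_, mem_cyl_embΛ Λ η⟩
      show BPfin d c Λ (embΛ Λ fun x : ↥Λ => η x) = β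
      rw [← hBPcyl _ η (mem_cyl_embΛ Λ η)]
      exact hβ
    · rintro ⟨f, hfβ, hη⟩
      rw [hBPcyl f η hη]
      exact hfβ
  have hDmeas : ∀ β : Cfg d, MeasurableSet {η : Cfg d | BPfin d c Λ η = β} := by
    intro β
    rw [hDeq β]
    exact Finset.measurableSet_biUnion _ (fun f _ => measurable_cyl Λ _)
  have hDloc : ∀ (β : Cfg d) (f : ↥Λ → Bool) (η : Cfg d), η ∈ cyl d Λ (embΛ Λ f) →
      (η ∈ {η : Cfg d | BPfin d c Λ η = β} ↔ embΛ Λ f ∈ {η : Cfg d | BPfin d c Λ η = β}) := by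
    intro β f η hη
    simp only [Set.mem_setOf_eq]
    rw [hBPcyl f η hη]
  have hEloc' : ∀ (f : ↥Λ → Bool) (η : Cfg d), η ∈ cyl d Λ (embΛ Λ f) →
      (η ∈ E ↔ embΛ Λ f ∈ E) := fun f η hη => hEloc η (embΛ Λ f) hη
  -- value of π on cylinders
  have hπW : ∀ f : ↥Λ → Bool,
      π (cyl d Λ (embΛ Λ f)) = ENNReal.ofReal (Wgt p Λ (embΛ Λ f)) := by
    intro f
    rw [hπcyl Λ (embΛ Λ f)]
    unfold Wgt
    exact (ENNReal.ofReal_prod_of_nonneg (fun y _ => by split <;> linarith)).symm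
  have hWnn : ∀ f : ↥Λ → Bool, 0 ≤ Wgt p Λ (embΛ Λ f) :=
    fun f => le_of_lt (Wgt_pos hp0 hp1 _ _)
  -- per-class identity
  have hperβ : ∀ β ∈ T, (ProbabilityTheory.cond π {η : Cfg d | BPfin d c Λ η = β}) E
      * μ {η : Cfg d | BPfin d c Λ η = β}
      = μ (E ∩ {η : Cfg d | BPfin d c Λ η = β}) := by
    intro β hβ
    obtain ⟨f₀, -, hf₀⟩ := Finset.mem_image.1 hβ
    set Sβ := Finset.univ.filter
      (fun f : ↥Λ → Bool => embΛ Λ f ∈ {η : Cfg d | BPfin d c Λ η = β}) with hSβ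
    set SEβ := Finset.univ.filter
      (fun f : ↥Λ → Bool => embΛ Λ f ∈ E ∩ {η : Cfg d | BPfin d c Λ η = β}) with hSEβ
    have hSβsub : SEβ ⊆ Sβ := by
      intro f hf
      simp only [hSEβ, hSβ, Finset.mem_filter, Set.mem_inter_iff] at hf ⊢
      exact ⟨hf.1, hf.2.2⟩
    have hmemSβ : ∀ f, f ∈ Sβ ↔ BPfin d c Λ (embΛ Λ f) = β := by
      intro f
      simp [hSβ, Set.mem_setOf_eq]
    have hμD : (μ {η : Cfg d | BPfin d c Λ η = β}).toReal
        = ∑ f ∈ Sβ, (μ (cyl d Λ (embΛ Λ f))).toReal := by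
      rw [measure_local μ Λ (hDmeas β) (hDloc β),
        ENNReal.toReal_sum (fun _ _ => measure_ne_top μ _)]
    have hπD : π {η : Cfg d | BPfin d c Λ η = β}
        = ENNReal.ofReal (∑ f ∈ Sβ, Wgt p Λ (embΛ Λ f)) := by
      rw [measure_local π Λ (hDmeas β) (hDloc β),
        ENNReal.ofReal_sum_of_nonneg (fun f _ => hWnn f)]
      exact Finset.sum_congr rfl fun f _ => hπW f
    have hEDmeas : MeasurableSet (E ∩ {η : Cfg d | BPfin d c Λ η = β}) := hE.inter (hDmeas β)
    have hEDloc : ∀ (f : ↥Λ → Bool) (η : Cfg d), η ∈ cyl d Λ (embΛ Λ f) →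
        (η ∈ E ∩ {η : Cfg d | BPfin d c Λ η = β}
          ↔ embΛ Λ f ∈ E ∩ {η : Cfg d | BPfin d c Λ η = β}) := by
      intro f η hη
      rw [Set.mem_inter_iff, Set.mem_inter_iff, hEloc' f η hη, hDloc β f η hη]
    have hμED : (μ (E ∩ {η : Cfg d | BPfin d c Λ η = β})).toReal
        = ∑ f ∈ SEβ, (μ (cyl d Λ (embΛ Λ f))).toReal := by
      rw [measure_local μ Λ hEDmeas hEDloc,
        ENNReal.toReal_sum (fun _ _ => measure_ne_top μ _)]
      refine Finset.sum_congr ?_ (fun f _ => rfl)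
      ext f
      simp [hSEβ]
    have hπED : π (E ∩ {η : Cfg d | BPfin d c Λ η = β})
        = ENNReal.ofReal (∑ f ∈ SEβ, Wgt p Λ (embΛ Λ f)) := by
      rw [measure_local π Λ hEDmeas hEDloc,
        ENNReal.ofReal_sum_of_nonneg (fun f _ => hWnn f)]
      refine Finset.sum_congr ?_ (fun f _ => hπW f)
      ext f
      simp [hSEβ]
    have hf₀Sβ : f₀ ∈ Sβ := (hmemSβ f₀).2 hf₀
    have hZpos : 0 < ∑ f ∈ Sβ, Wgt p Λ (embΛ Λ f) :=
      Finset.sum_pos (fun f _ => Wgt_pos hp0 hp1 _ _) ⟨f₀, hf₀Sβ⟩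
    have hZEnn : 0 ≤ ∑ f ∈ SEβ, Wgt p Λ (embΛ Λ f) :=
      Finset.sum_nonneg fun f _ => hWnn f
    -- proportionality from the irreducibility chain (class_ratio)
    have hprop : ∀ f ∈ Sβ, (μ (cyl d Λ (embΛ Λ f))).toReal * (∑ g ∈ Sβ, Wgt p Λ (embΛ Λ g))
        = (μ {η : Cfg d | BPfin d c Λ η = β}).toReal * Wgt p Λ (embΛ Λ f) := by
      intro f hf
      rw [Finset.mul_sum, hμD, Finset.sum_mul]
      refine Finset.sum_congr rfl fun g hg => ?_
      have h1 : BPfin d c Λ (embΛ Λ f) = BPfin d c Λ (embΛ Λ g) := by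
        rw [(hmemSβ f).1 hf, (hmemSβ g).1 hg]
      exact class_ratio hp0 hp1 hmono hirr hdb hΛsub hnb h1
    have hreal : (μ (E ∩ {η : Cfg d | BPfin d c Λ η = β})).toReal
          * (∑ g ∈ Sβ, Wgt p Λ (embΛ Λ g))
        = (∑ f ∈ SEβ, Wgt p Λ (embΛ Λ f))
          * (μ {η : Cfg d | BPfin d c Λ η = β}).toReal := by
      rw [hμED, Finset.sum_mul, Finset.sum_mul]
      refine Finset.sum_congr rfl fun f hf => ?_
      rw [hprop f (hSβsub hf)]
      ring
    -- put everything together in ℝ≥0∞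
    rw [ProbabilityTheory.cond_apply (hDmeas β) π E, Set.inter_comm {η : Cfg d | BPfin d c Λ η = β} E]
    rw [hπED, hπD]
    rw [← ENNReal.ofReal_toReal (measure_ne_top μ {η : Cfg d | BPfin d c Λ η = β}),
      ← ENNReal.ofReal_toReal (measure_ne_top μ (E ∩ {η : Cfg d | BPfin d c Λ η = β}))]
    rw [← ENNReal.ofReal_inv_of_pos hZpos,
      ← ENNReal.ofReal_mul (inv_nonneg.2 hZpos.le),
      ← ENNReal.ofReal_mul (mul_nonneg (inv_nonneg.2 hZpos.le) hZEnn)]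
    congr 1
    have hZne : (∑ g ∈ Sβ, Wgt p Λ (embΛ Λ g)) ≠ 0 := ne_of_gt hZpos
    rw [inv_mul_eq_div, div_mul_eq_mul_div, div_eq_iff hZne]
    linear_combination -hreal
  -- total decomposition of μ E over the classes
  have hTotal : μ E = ∑ β ∈ T, μ (E ∩ {η : Cfg d | BPfin d c Λ η = β}) := by
    have hcover : E = ⋃ β ∈ T, E ∩ {η : Cfg d | BPfin d c Λ η = β} := by
      ext η
      simp only [Set.mem_iUnion, Set.mem_inter_iff, Set.mem_setOf_eq, exists_prop]
      constructor
      · intro hη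
        refine ⟨val (fun x : ↥Λ => η x), ?_, hη, ?_⟩
        · rw [hT]
          exact Finset.mem_image_of_mem val (Finset.mem_univ _)
        · show BPfin d c Λ η = BPfin d c Λ (embΛ Λ fun x : ↥Λ => η x)
          exact hBPcyl _ η (mem_cyl_embΛ Λ η)
      · rintro ⟨β, -, hη, -⟩
        exact hη
    have hdisj : (↑T : Set (Cfg d)).PairwiseDisjoint
        (fun β => E ∩ {η : Cfg d | BPfin d c Λ η = β}) := by
      intro β1 _ β2 _ hne
      exact Set.disjoint_left.2 fun η hη1 hη2 => hne (hη1.2.symm.trans hη2.2)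
    conv_lhs => rw [hcover]
    exact measure_biUnion_finset hdisj (fun β _ => hE.inter (hDmeas β))
  have hvanish : ∀ β : Cfg d, β ∉ T →
      (ProbabilityTheory.cond π {η : Cfg d | BPfin d c Λ η = β}) E
        * μ {η : Cfg d | BPfin d c Λ η = β} = 0 := by
    intro β hβ
    have hempty : {η : Cfg d | BPfin d c Λ η = β} = ∅ := by
      ext η
      simp only [Set.mem_setOf_eq, Set.mem_empty_iff_false, iff_false]
      intro hη
      apply hβ
      rw [hT, ← hη, hBPcyl (fun x : ↥Λ => η x) η (mem_cyl_embΛ Λ η)]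
      exact Finset.mem_image_of_mem val (Finset.mem_univ _)
    rw [hempty, measure_empty, mul_zero]
  rw [tsum_eq_sum hvanish, hTotal]
  exact Finset.sum_congr rfl fun β hβ => (hperβ β hβ).symm
end

section
/- Let (c_x) be a monotone KCM constraint family of range r on Z^d. Fix integers L > N and a configuration β ∈ {0,1}^{Λ_L} in the image of BP^{Λ_L} such that β is identically 0 on Λ_N. Then π( BP^{Λ_N}(η|_{Λ_N}) = 0_{Λ_N} | BP^{Λ_L}(η|_{Λ_L}) = β ) ≥ π( BP^{Λ_N}(η|_{Λ_N}) = 0_{Λ_N} ). In particular, if π(BP^{Λ_N}(η|_{Λ_N}) = 0_{Λ_N}) → 1 as N → ∞, the left-hand side is at least 1 − o_N(1) uniformly in L and β. -/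
open MeasureTheory
open scoped Classical ENNReal

section BPlemmas

variable {d : ℕ} {c : Site d → Cfg d → ℝ}

lemma bool_and_le_and {a a' b b' : Bool} (h1 : a ≤ a') (h2 : b ≤ b') : (a && b) ≤ (a' && b') := by
  revert h1 h2; revert a a' b b'; decide

lemma bstepFin_le (Λ : Finset (Site d)) (η : Cfg d) : bstepFin d c Λ η ≤ η := by
  intro x
  unfold bstepFin
  split
  · exact Bool.and_le_left _ _
  · exact le_rfl

lemma bstepFin_outside (Λ : Finset (Site d)) (η : Cfg d) {x : Site d} (hx : x ∉ Λ) :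
    bstepFin d c Λ η x = η x := by
  unfold bstepFin; simp [hx]

lemma bstepFin_mono (hc0 : ∀ x η, 0 ≤ c x η) (hmono : ConstraintMono d c)
    (Λ : Finset (Site d)) {η η' : Cfg d} (h : η ≤ η') :
    bstepFin d c Λ η ≤ bstepFin d c Λ η' := by
  intro x
  unfold bstepFin
  split
  · refine bool_and_le_and (h x) ?_
    have hc := hmono x η η' h
    by_cases hpos : 0 < c x η'
    · have hpos' : 0 < c x η := lt_of_lt_of_le hpos hc
      simp [hpos, hpos']
    · simp [hpos]
  · exact h x

lemma iter_mono (hc0 : ∀ x η, 0 ≤ c x η) (hmono : ConstraintMono d c)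
    (Λ : Finset (Site d)) (n : ℕ) {η η' : Cfg d} (h : η ≤ η') :
    (bstepFin d c Λ)^[n] η ≤ (bstepFin d c Λ)^[n] η' := by
  induction n generalizing η η' with
  | zero => exact h
  | succ n ih =>
    rw [Function.iterate_succ_apply, Function.iterate_succ_apply]
    exact ih (bstepFin_mono hc0 hmono Λ h)

lemma iter_le (Λ : Finset (Site d)) (n : ℕ) (η : Cfg d) :
    (bstepFin d c Λ)^[n] η ≤ η := by
  induction n with
  | zero => exact le_rfl
  | succ n ih =>
    rw [Function.iterate_succ_apply']
    exact le_trans (bstepFin_le Λ _) ih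

lemma iter_outside (Λ : Finset (Site d)) (n : ℕ) (η : Cfg d) {x : Site d} (hx : x ∉ Λ) :
    (bstepFin d c Λ)^[n] η x = η x := by
  induction n with
  | zero => rfl
  | succ n ih => rw [Function.iterate_succ_apply', bstepFin_outside Λ _ hx, ih]

lemma exists_stab (Λ : Finset (Site d)) (η₀ : Cfg d) :
    ∃ k ≤ Λ.card, (bstepFin d c Λ)^[k + 1] η₀ = (bstepFin d c Λ)^[k] η₀ := by
  by_contra hcon
  push_neg at hcon
  set f := bstepFin d c Λ with hf
  set s : ℕ → Finset (Site d) := fun n => Λ.filter (fun x => f^[n] η₀ x = true) with hs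
  have hkey : ∀ n, n ≤ Λ.card + 1 → (s n).card + n ≤ Λ.card := by
    intro n
    induction n with
    | zero => intro _; simpa using Finset.card_filter_le Λ _
    | succ n ih =>
      intro hn
      have hne : f^[n + 1] η₀ ≠ f^[n] η₀ := hcon n (by omega)
      have hsub : s (n + 1) ⊆ s n := by
        intro x hx
        rw [hs] at hx ⊢
        simp only [Finset.mem_filter] at hx ⊢
        refine ⟨hx.1, ?_⟩
        have hle : f^[n+1] η₀ x ≤ f^[n] η₀ x := by
          rw [Function.iterate_succ_apply']
          exact bstepFin_le Λ _ x
        rw [hx.2] at hle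
        exact le_antisymm (Bool.le_true _) hle
      have : ∃ x, f^[n+1] η₀ x ≠ f^[n] η₀ x := Function.ne_iff.mp hne
      obtain ⟨x, hxne⟩ := this
      have hxΛ : x ∈ Λ := by
        by_contra hxΛ
        exact hxne (by rw [iter_outside Λ _ _ hxΛ, iter_outside Λ _ _ hxΛ])
      have hle : f^[n+1] η₀ x ≤ f^[n] η₀ x := by
        rw [Function.iterate_succ_apply']
        exact bstepFin_le Λ _ x
      have hxn : x ∈ s n := by
        rw [hs]; simp only [Finset.mem_filter]
        refine ⟨hxΛ, ?_⟩
        cases h1 : f^[n] η₀ x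
        · rw [h1] at hle
          have h2 : f^[n+1] η₀ x = false := le_antisymm hle (Bool.false_le _)
          exact absurd (h2.trans h1.symm) hxne
        · rfl
      have hxn1 : x ∉ s (n + 1) := by
        rw [hs]; simp only [Finset.mem_filter]
        rintro ⟨-, h2⟩
        have h1 : f^[n] η₀ x = true := (Finset.mem_filter.mp hxn).2
        exact hxne (h2.trans h1.symm)
      have hss : s (n + 1) ⊂ s n := ⟨hsub, fun hcontra => hxn1 (hcontra hxn)⟩
      have hcard : (s (n + 1)).card < (s n).card := Finset.card_lt_card hss
      have := ih (by omega)
      omega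
  have := hkey (Λ.card + 1) le_rfl
  omega

lemma bstepFin_BPfin (Λ : Finset (Site d)) (η : Cfg d) :
    bstepFin d c Λ (BPfin d c Λ η) = BPfin d c Λ η := by
  obtain ⟨k, hk, hfix⟩ := exists_stab (c := c) Λ (extCfg d Λ η)
  have hfix' : bstepFin d c Λ ((bstepFin d c Λ)^[k] (extCfg d Λ η))
      = (bstepFin d c Λ)^[k] (extCfg d Λ η) :=
    (Function.iterate_succ_apply' (bstepFin d c Λ) k (extCfg d Λ η)).symm.trans hfix
  have heq : BPfin d c Λ η = (bstepFin d c Λ)^[k] (extCfg d Λ η) := by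
    unfold BPfin
    have : Λ.card = (Λ.card - k) + k := by omega
    rw [this, Function.iterate_add_apply]
    exact Function.iterate_fixed hfix' _
  rw [heq, hfix']

lemma BPfin_outside (Λ : Finset (Site d)) (η : Cfg d) {x : Site d} (hx : x ∉ Λ) :
    BPfin d c Λ η x = true := by
  unfold BPfin
  rw [iter_outside Λ _ _ hx]
  unfold extCfg
  simp [hx]

lemma extCfg_BPfin (Λ : Finset (Site d)) (η : Cfg d) :
    extCfg d Λ (BPfin d c Λ η) = BPfin d c Λ η := by
  funext x
  unfold extCfg
  split
  · rfl
  · rw [BPfin_outside Λ η (by assumption)]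

lemma BPfin_idem (Λ : Finset (Site d)) (η : Cfg d) :
    BPfin d c Λ (BPfin d c Λ η) = BPfin d c Λ η := by
  conv_lhs => rw [BPfin, extCfg_BPfin]
  exact Function.iterate_fixed (bstepFin_BPfin Λ η) _

lemma BPfin_congr (Λ : Finset (Site d)) {η η' : Cfg d} (h : ∀ x ∈ Λ, η x = η' x) :
    BPfin d c Λ η = BPfin d c Λ η' := by
  unfold BPfin
  congr 1
  funext x
  unfold extCfg
  split
  · exact h x (by assumption)
  · rfl

lemma BPfin_le_extCfg (Λ : Finset (Site d)) (η : Cfg d) :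
    BPfin d c Λ η ≤ extCfg d Λ η := iter_le Λ _ _

/-- The squeeze lemma: if `BPfin T η = β` with `β ≡ false` on `S`, and `η'` agrees with
`η` off `S` and `η' ≤ η`, then `BPfin T η' = β` as well. -/
lemma squeeze (hc0 : ∀ x η, 0 ≤ c x η) (hmono : ConstraintMono d c)
    (S T : Finset (Site d)) (β : Cfg d) (hβ0 : ∀ x ∈ S, β x = false)
    {η η' : Cfg d} (hB : BPfin d c T η = β)
    (hout : ∀ x, x ∉ S → η' x = η x) (hle : η' ≤ η) :
    BPfin d c T η' = β := by
  have hββ : BPfin d c T β = β := by rw [← hB, BPfin_idem]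
  have hextβ : extCfg d T β = β := by rw [← hB, extCfg_BPfin]
  have he1 : extCfg d T η' ≤ extCfg d T η := by
    intro x; unfold extCfg; split
    · exact hle x
    · exact le_rfl
  have he2 : β ≤ extCfg d T η' := by
    intro x
    by_cases hxS : x ∈ S
    · rw [hβ0 x hxS]; exact Bool.false_le _
    · have : extCfg d T η' x = extCfg d T η x := by
        unfold extCfg; split
        · exact hout x hxS
        · rfl
      rw [this]
      calc β x = BPfin d c T η x := by rw [hB]
        _ ≤ extCfg d T η x := BPfin_le_extCfg T η x
  have hup : BPfin d c T η' ≤ β := by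
    calc BPfin d c T η' ≤ (bstepFin d c T)^[T.card] (extCfg d T η) :=
          iter_mono hc0 hmono T _ he1
      _ = β := hB
  have hdown : β ≤ BPfin d c T η' := by
    calc β = BPfin d c T β := hββ.symm
      _ = (bstepFin d c T)^[T.card] (extCfg d T β) := rfl
      _ = (bstepFin d c T)^[T.card] β := by rw [hextβ]
      _ ≤ (bstepFin d c T)^[T.card] (extCfg d T η') := iter_mono hc0 hmono T _ (hextβ ▸ he2)
      _ = BPfin d c T η' := rfl
  exact le_antisymm hup hdown

end BPlemmas

section MeasLemmas

variable {d : ℕ}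

/-- The configuration associated to a finite healthy set `σ`. -/
def cfgOf (σ : Finset (Site d)) : Cfg d := fun x => decide (x ∈ σ)

lemma cyl_measurableSet (Λ : Finset (Site d)) (ζ : Cfg d) : MeasurableSet (cyl d Λ ζ) := by
  have hrw : cyl d Λ ζ = ⋂ x ∈ (Λ : Set (Site d)), (fun η : Cfg d => η x) ⁻¹' {ζ x} := by
    ext η; simp [cyl]
  rw [hrw]
  exact MeasurableSet.biInter Λ.countable_toSet fun x _ =>
    (measurable_pi_apply x) (measurableSet_singleton (ζ x))

/-- `E` depends only on coordinates in `Λ`. -/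
def DepOn (E : Set (Cfg d)) (Λ : Finset (Site d)) : Prop :=
  ∀ η η' : Cfg d, (∀ x ∈ Λ, η x = η' x) → η ∈ E → η' ∈ E

lemma cfgOf_agree (Λ : Finset (Site d)) (η : Cfg d) {x : Site d} (hx : x ∈ Λ) :
    cfgOf (Λ.filter (fun y => η y = true)) x = η x := by
  unfold cfgOf
  cases hη : η x
  · simp [Finset.mem_filter, hη]
  · simp [Finset.mem_filter, hx, hη]

lemma event_eq_biUnion {E : Set (Cfg d)} {Λ : Finset (Site d)} (hE : DepOn E Λ) :
    E = ⋃ σ ∈ Λ.powerset.filter (fun σ => cfgOf σ ∈ E), cyl d Λ (cfgOf σ) := by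
  ext η
  simp only [Set.mem_iUnion, Finset.mem_filter, Finset.mem_powerset, exists_prop, cyl,
    Set.mem_setOf_eq]
  constructor
  · intro hη
    refine ⟨Λ.filter (fun y => η y = true), ⟨Finset.filter_subset _ _,
      hE η _ (fun x hx => (cfgOf_agree Λ η hx).symm) hη⟩,
      fun x hx => (cfgOf_agree Λ η hx).symm⟩
  · rintro ⟨σ, ⟨-, hσE⟩, hcyl⟩
    exact hE (cfgOf σ) η (fun x hx => (hcyl x hx).symm) hσE

lemma event_measurableSet {E : Set (Cfg d)} {Λ : Finset (Site d)} (hE : DepOn E Λ) :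
    MeasurableSet E := by
  rw [event_eq_biUnion hE]
  exact (Λ.powerset.filter _).measurableSet_biUnion fun σ _ => cyl_measurableSet Λ _

lemma measure_event {p q : ℝ} (hq0 : 0 < q) (hq1 : q < 1) (hp : p = 1 - q)
    {π : Measure (Cfg d)} (hπ : IsProd d (fun _ => p) π)
    {E : Set (Cfg d)} {Λ : Finset (Site d)} (hE : DepOn E Λ) :
    π E = ENNReal.ofReal (∑ σ ∈ Λ.powerset,
      (∏ x ∈ Λ, if x ∈ σ then p else q) * (if cfgOf σ ∈ E then (1:ℝ) else 0)) := by
  have hp0 : 0 ≤ p := by rw [hp]; linarith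
  have hq0' : (0:ℝ) ≤ q := le_of_lt hq0
  have hdisj : (↑(Λ.powerset.filter (fun σ => cfgOf σ ∈ E)) :
      Set (Finset (Site d))).PairwiseDisjoint (fun σ => cyl d Λ (cfgOf σ)) := by
    intro σ hσ σ' hσ' hne
    simp only [Finset.coe_filter, Set.mem_setOf_eq, Finset.mem_powerset] at hσ hσ'
    refine Set.disjoint_left.mpr fun η h1 h2 => ?_
    obtain ⟨x, hx⟩ := not_forall.mp (mt Finset.ext_iff.mpr hne)
    have hxΛ : x ∈ Λ := by
      by_cases hxσ : x ∈ σ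
      · exact hσ.1 hxσ
      · by_cases hxσ' : x ∈ σ'
        · exact hσ'.1 hxσ'
        · exact absurd (iff_of_false hxσ hxσ') hx
    have e1 : η x = cfgOf σ x := h1 x hxΛ
    have e2 : η x = cfgOf σ' x := h2 x hxΛ
    exact hx (decide_eq_decide.mp ((e1.symm.trans e2 : cfgOf σ x = cfgOf σ' x)))
  have hEU : π E = ∑ σ ∈ Λ.powerset.filter (fun σ => cfgOf σ ∈ E), π (cyl d Λ (cfgOf σ)) := by
    conv_lhs => rw [event_eq_biUnion hE]
    exact measure_biUnion_finset hdisj (fun σ _ => cyl_measurableSet Λ _)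
  rw [hEU]
  have hcylval : ∀ σ ∈ Λ.powerset.filter (fun σ => cfgOf σ ∈ E),
      π (cyl d Λ (cfgOf σ)) = ENNReal.ofReal (∏ x ∈ Λ, if x ∈ σ then p else q) := by
    intro σ _
    rw [hπ.2 Λ (cfgOf σ),
      ← ENNReal.ofReal_prod_of_nonneg (fun x _ => by dsimp only; split <;> [exact hp0; linarith])]
    congr 1
    refine Finset.prod_congr rfl fun x _ => ?_
    by_cases hxσ : x ∈ σ
    · rw [if_pos (by simp [cfgOf, hxσ]), if_pos hxσ]
    · rw [if_neg (by simp [cfgOf, hxσ]), if_neg hxσ]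
      linarith
  rw [Finset.sum_congr rfl hcylval,
    ← ENNReal.ofReal_sum_of_nonneg (fun σ _ => Finset.prod_nonneg fun x _ => by
      split <;> [exact hp0; exact hq0'])]
  congr 1
  rw [Finset.sum_filter]
  refine Finset.sum_congr rfl fun σ _ => ?_
  by_cases h : cfgOf σ ∈ E <;> simp [h]

lemma sum_powerset_split {M : Type*} [AddCommMonoid M] {S T : Finset (Site d)} (hST : S ⊆ T)
    (h : Finset (Site d) → M) :
    ∑ σ ∈ T.powerset, h σ
      = ∑ τ ∈ (T \ S).powerset, ∑ ρ ∈ S.powerset, h (ρ ∪ τ) := by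
  rw [← Finset.sum_product']
  refine Finset.sum_nbij' (fun σ => (σ \ S, σ ∩ S)) (fun ρτ => ρτ.2 ∪ ρτ.1) ?_ ?_ ?_ ?_ ?_
  · intro σ hσ
    rw [Finset.mem_powerset] at hσ
    rw [Finset.mem_product, Finset.mem_powerset, Finset.mem_powerset]
    exact ⟨Finset.sdiff_subset_sdiff hσ le_rfl, Finset.inter_subset_right⟩
  · intro ρτ hρτ
    rw [Finset.mem_product, Finset.mem_powerset, Finset.mem_powerset] at hρτ
    rw [Finset.mem_powerset]
    exact Finset.union_subset (hρτ.2.trans hST) (hρτ.1.trans (Finset.sdiff_subset))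
  · intro σ hσ
    dsimp only
    ext x
    simp only [Finset.mem_union, Finset.mem_inter, Finset.mem_sdiff]
    tauto
  · rintro ⟨τ, ρ⟩ hmem
    rw [Finset.mem_product, Finset.mem_powerset, Finset.mem_powerset] at hmem
    have hτ := hmem.1
    have hρ := hmem.2
    dsimp only
    have e1 : (ρ ∪ τ) \ S = τ := by
      ext x
      simp only [Finset.mem_sdiff, Finset.mem_union]
      constructor
      · rintro ⟨hx | hx, hxS⟩
        · exact absurd (hρ hx) hxS
        · exact hx
      · intro hx
        exact ⟨Or.inr hx, (Finset.mem_sdiff.mp (hτ hx)).2⟩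
    have e2 : (ρ ∪ τ) ∩ S = ρ := by
      ext x
      simp only [Finset.mem_inter, Finset.mem_union]
      constructor
      · rintro ⟨hx | hx, hxS⟩
        · exact hx
        · exact absurd hxS (Finset.mem_sdiff.mp (hτ hx)).2
      · intro hx
        exact ⟨Or.inl hx, hρ hx⟩
    rw [e1, e2]
  · intro σ hσ
    dsimp only
    congr 1
    ext x
    simp only [Finset.mem_union, Finset.mem_inter, Finset.mem_sdiff]
    tauto

end MeasLemmas


private lemma sum_insert_split {α : Type*} [DecidableEq α] {p q : ℝ} {a : α} {t : Finset α}
    (ha : a ∉ t) (h : Finset α → ℝ) :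
    ∑ σ ∈ (insert a t).powerset, (∏ x ∈ insert a t, if x ∈ σ then p else q) * h σ
      = q * (∑ σ ∈ t.powerset, (∏ x ∈ t, if x ∈ σ then p else q) * h σ)
        + p * (∑ σ ∈ t.powerset, (∏ x ∈ t, if x ∈ σ then p else q) * h (insert a σ)) := by
  rw [Finset.sum_powerset_insert ha, Finset.mul_sum, Finset.mul_sum]
  congr 1
  · refine Finset.sum_congr rfl fun σ hσ => ?_
    have haσ : a ∉ σ := fun hmem => ha (Finset.mem_powerset.mp hσ hmem)
    rw [Finset.prod_insert ha, if_neg haσ, mul_assoc]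
  · refine Finset.sum_congr rfl fun σ hσ => ?_
    rw [Finset.prod_insert ha, if_pos (Finset.mem_insert_self a σ), mul_assoc]
    congr 2
    refine Finset.prod_congr rfl fun x hx => ?_
    have hxa : x ≠ a := fun hh => ha (hh ▸ hx)
    exact if_congr (by simp [Finset.mem_insert, hxa]) rfl rfl

lemma harris {α : Type*} [DecidableEq α] {p q : ℝ} (hp : 0 ≤ p) (hq : 0 ≤ q)
    (s : Finset α) (f g : Finset α → ℝ)
    (hf0 : ∀ σ, 0 ≤ f σ) (hg0 : ∀ σ, 0 ≤ g σ)
    (hf : ∀ ρ τ : Finset α, ρ ⊆ τ → τ ⊆ s → f τ ≤ f ρ)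
    (hg : ∀ ρ τ : Finset α, ρ ⊆ τ → τ ⊆ s → g τ ≤ g ρ) :
    (∑ σ ∈ s.powerset, (∏ x ∈ s, if x ∈ σ then p else q) * f σ) *
      (∑ σ ∈ s.powerset, (∏ x ∈ s, if x ∈ σ then p else q) * g σ) ≤
    (∑ σ ∈ s.powerset, (∏ x ∈ s, if x ∈ σ then p else q)) *
      (∑ σ ∈ s.powerset, (∏ x ∈ s, if x ∈ σ then p else q) * (f σ * g σ)) := by
  induction s using Finset.induction_on generalizing f g with
  | empty => simp
  | @insert a t ha ih =>
    have hWnn : ∀ σ : Finset α, 0 ≤ ∏ x ∈ t, if x ∈ σ then p else q := fun σ =>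
      Finset.prod_nonneg fun x _ => by split <;> assumption
    have eW : (∑ σ ∈ (insert a t).powerset, (∏ x ∈ insert a t, if x ∈ σ then p else q))
        = q * (∑ σ ∈ t.powerset, (∏ x ∈ t, if x ∈ σ then p else q))
          + p * (∑ σ ∈ t.powerset, (∏ x ∈ t, if x ∈ σ then p else q)) := by
      have e := sum_insert_split (p := p) (q := q) ha (fun _ => 1)
      simpa using e
    rw [sum_insert_split ha f, sum_insert_split ha g, sum_insert_split ha (fun σ => f σ * g σ),
      eW]
    have h1 := ih f g hf0 hg0
      (fun ρ τ hρτ hτ => hf ρ τ hρτ (hτ.trans (Finset.subset_insert a t)))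
      (fun ρ τ hρτ hτ => hg ρ τ hρτ (hτ.trans (Finset.subset_insert a t)))
    have h2 := ih (fun σ => f (insert a σ)) (fun σ => g (insert a σ))
      (fun σ => hf0 _) (fun σ => hg0 _)
      (fun ρ τ hρτ hτ => hf (insert a ρ) (insert a τ) (Finset.insert_subset_insert a hρτ)
        (Finset.insert_subset_insert a hτ))
      (fun ρ τ hρτ hτ => hg (insert a ρ) (insert a τ) (Finset.insert_subset_insert a hρτ)
        (Finset.insert_subset_insert a hτ))
    have hA'A : (∑ σ ∈ t.powerset, (∏ x ∈ t, if x ∈ σ then p else q) * f (insert a σ))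
        ≤ ∑ σ ∈ t.powerset, (∏ x ∈ t, if x ∈ σ then p else q) * f σ :=
      Finset.sum_le_sum fun σ hσ => mul_le_mul_of_nonneg_left
        (hf σ (insert a σ) (Finset.subset_insert a σ)
          (Finset.insert_subset_insert a (Finset.mem_powerset.mp hσ))) (hWnn σ)
    have hB'B : (∑ σ ∈ t.powerset, (∏ x ∈ t, if x ∈ σ then p else q) * g (insert a σ))
        ≤ ∑ σ ∈ t.powerset, (∏ x ∈ t, if x ∈ σ then p else q) * g σ :=
      Finset.sum_le_sum fun σ hσ => mul_le_mul_of_nonneg_left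
        (hg σ (insert a σ) (Finset.subset_insert a σ)
          (Finset.insert_subset_insert a (Finset.mem_powerset.mp hσ))) (hWnn σ)
    have hAnn : 0 ≤ ∑ σ ∈ t.powerset, (∏ x ∈ t, if x ∈ σ then p else q) * f (insert a σ) :=
      Finset.sum_nonneg fun σ _ => mul_nonneg (hWnn σ) (hf0 _)
    have hBnn : 0 ≤ ∑ σ ∈ t.powerset, (∏ x ∈ t, if x ∈ σ then p else q) * g (insert a σ) :=
      Finset.sum_nonneg fun σ _ => mul_nonneg (hWnn σ) (hg0 _)
    nlinarith [mul_le_mul_of_nonneg_left h1 (mul_nonneg hq hq),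
      mul_le_mul_of_nonneg_left h2 (mul_nonneg hp hp),
      mul_nonneg (sub_nonneg.mpr hA'A) (sub_nonneg.mpr hB'B),
      mul_nonneg hp hq, mul_le_mul_of_nonneg_left h1 (mul_nonneg hp hq),
      mul_le_mul_of_nonneg_left h2 (mul_nonneg hp hq)]

lemma sum_weights {α : Type*} [DecidableEq α] {p q : ℝ} (hpq : p + q = 1) (s : Finset α) :
    (∑ σ ∈ s.powerset, (∏ x ∈ s, if x ∈ σ then p else q)) = 1 := by
  induction s using Finset.induction_on with
  | empty => simp
  | @insert a t ha ih =>
    have e := sum_insert_split (p := p) (q := q) ha (fun _ => 1)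
    simp only [mul_one] at e
    rw [e, ih]
    linarith

section MainProof

variable {d : ℕ}

lemma weight_split {p q : ℝ} {S T ρ τ : Finset (Site d)} (hST : S ⊆ T) (hρ : ρ ⊆ S)
    (hτ : τ ⊆ T \ S) :
    (∏ x ∈ T, if x ∈ ρ ∪ τ then p else q)
      = (∏ x ∈ S, if x ∈ ρ then p else q) * (∏ x ∈ T \ S, if x ∈ τ then p else q) := by
  calc (∏ x ∈ T, if x ∈ ρ ∪ τ then p else q)
      = ∏ x ∈ S ∪ T \ S, if x ∈ ρ ∪ τ then p else q := by
        rw [Finset.union_sdiff_of_subset hST]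
    _ = (∏ x ∈ S, if x ∈ ρ ∪ τ then p else q) * (∏ x ∈ T \ S, if x ∈ ρ ∪ τ then p else q) :=
        Finset.prod_union Finset.disjoint_sdiff
    _ = _ := by
        congr 1
        · refine Finset.prod_congr rfl fun x hx => if_congr ?_ rfl rfl
          simp only [Finset.mem_union]
          constructor
          · rintro (h | h)
            · exact h
            · exact absurd hx (Finset.mem_sdiff.mp (hτ h)).2
          · exact Or.inl
        · refine Finset.prod_congr rfl fun x hx => if_congr ?_ rfl rfl
          simp only [Finset.mem_union]
          constructor
          · rintro (h | h)
            · exact absurd (hρ h) (Finset.mem_sdiff.mp hx).2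
            · exact h
          · exact Or.inr

lemma ind_mono {P P' : Prop} (h : P' → P) :
    (if P' then (1:ℝ) else 0) ≤ if P then 1 else 0 := by
  by_cases hP' : P'
  · rw [if_pos hP', if_pos (h hP')]
  · rw [if_neg hP']
    by_cases hP : P <;> simp [hP]

lemma ind_nonneg {P : Prop} : (0:ℝ) ≤ if P then 1 else 0 := by
  by_cases hP : P <;> simp [hP]

/-- let `(c_x)` be a monotone KCM constraint family of range `r` on `ℤ^d`,
`L > N`, and `β` a configuration in the image of `BP^{Λ_L}` which is identically `0`
(infected) on `Λ_N`. Then conditioning the Bernoulli(`p`) product measure `π` on the event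
`{BP^{Λ_L}(η|_{Λ_L}) = β}` can only increase the probability that `Λ_N` is internally
emptiable: `π(BP^{Λ_N}(η|_{Λ_N}) = 0_{Λ_N} | BP^{Λ_L}(η|_{Λ_L}) = β)
≥ π(BP^{Λ_N}(η|_{Λ_N}) = 0_{Λ_N})`. -/
theorem stmt10 (d : ℕ) (q p : ℝ) (hq0 : 0 < q) (hq1 : q < 1) (hp : p = 1 - q)
    (r : ℕ) (c : Site d → Cfg d → ℝ) (hrange : HasRange d c r)
    (hc0 : ∀ x η, 0 ≤ c x η) (hmono : ConstraintMono d c)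
    (π : Measure (Cfg d)) (hπ : IsProd d (fun _ => p) π)
    (N L : ℕ) (hNL : N < L)
    (β : Cfg d) (hβim : ∃ ζ : Cfg d, BPfin d c (box d L) ζ = β)
    (hβ0 : ∀ x ∈ box d N, β x = false) :
    π {η | ∀ x ∈ box d N, BPfin d c (box d N) η x = false}
      ≤ (ProbabilityTheory.cond π {η | BPfin d c (box d L) η = β})
          {η | ∀ x ∈ box d N, BPfin d c (box d N) η x = false} := by
  have hp0 : 0 < p := by rw [hp]; linarith
  have hp0' : (0:ℝ) ≤ p := hp0.le
  have hq0' : (0:ℝ) ≤ q := hq0.le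
  have hpq : p + q = 1 := by rw [hp]; ring
  obtain ⟨S, hS⟩ : ∃ S : Finset (Site d), S = box d N := ⟨_, rfl⟩
  obtain ⟨T, hT⟩ : ∃ T : Finset (Site d), T = box d L := ⟨_, rfl⟩
  obtain ⟨A, hA⟩ : ∃ A : Set (Cfg d), A = {η | ∀ x ∈ S, BPfin d c S η x = false} := ⟨_, rfl⟩
  obtain ⟨B, hB⟩ : ∃ B : Set (Cfg d), B = {η | BPfin d c T η = β} := ⟨_, rfl⟩
  rw [← hS] at hβ0
  rw [show {η : Cfg d | ∀ x ∈ box d N, BPfin d c (box d N) η x = false} = A by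
    rw [hA, hS]]
  rw [show {η : Cfg d | BPfin d c (box d L) η = β} = B by rw [hB, hT]]
  have hST : S ⊆ T := by
    intro x hx
    rw [hS] at hx
    rw [hT]
    rw [box, Fintype.mem_piFinset] at hx
    rw [box, Fintype.mem_piFinset]
    intro i
    have h1 := hx i
    rw [Finset.mem_Icc] at h1 ⊢
    have h2 : (N:ℤ) ≤ (L:ℤ) := by exact_mod_cast hNL.le
    constructor <;> linarith [h1.1, h1.2]
  -- dependence of the events on finitely many coordinates
  have hAdepS : DepOn A S := by
    intro η η' hag hmem
    rw [hA, Set.mem_setOf_eq] at hmem ⊢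
    rwa [← BPfin_congr S hag]
  have hAdepT : DepOn A T := fun η η' hag hmem =>
    hAdepS η η' (fun x hx => hag x (hST hx)) hmem
  have hBdepT : DepOn B T := by
    intro η η' hag hmem
    rw [hB, Set.mem_setOf_eq] at hmem ⊢
    rwa [← BPfin_congr T hag]
  have hBAdepT : DepOn (B ∩ A) T := fun η η' hag hmem =>
    ⟨hBdepT η η' hag hmem.1, hAdepT η η' hag hmem.2⟩
  -- monotonicity (down-closedness) of the events
  have hcfgOf_mono : ∀ ρ ρ' : Finset (Site d), ρ ⊆ ρ' → cfgOf ρ ≤ (cfgOf ρ' : Cfg d) := by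
    intro ρ ρ' hsub x
    by_cases hx : x ∈ ρ
    · simp [cfgOf, hx, hsub hx]
    · simp [cfgOf, hx]
  have hAdown : ∀ ρ ρ' : Finset (Site d), ρ ⊆ ρ' → cfgOf ρ' ∈ A → cfgOf ρ ∈ A := by
    intro ρ ρ' hsub hmem
    rw [hA, Set.mem_setOf_eq] at hmem ⊢
    intro x hx
    have hle : BPfin d c S (cfgOf ρ) ≤ BPfin d c S (cfgOf ρ') := by
      refine iter_mono hc0 hmono S _ ?_
      intro y
      unfold extCfg
      split
      · exact hcfgOf_mono ρ ρ' hsub y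
      · exact le_rfl
    have := hle x
    rw [hmem x hx] at this
    exact le_antisymm this (Bool.false_le _)
  have hBdown : ∀ τ ρ ρ' : Finset (Site d), ρ ⊆ ρ' → ρ' ⊆ S →
      cfgOf (ρ' ∪ τ) ∈ B → cfgOf (ρ ∪ τ) ∈ B := by
    intro τ ρ ρ' hsub hρ'S hmem
    rw [hB, Set.mem_setOf_eq] at hmem ⊢
    refine squeeze hc0 hmono S T β hβ0 hmem ?_ ?_
    · intro x hxS
      have h1 : x ∉ ρ := fun h => hxS (hρ'S (hsub h))
      have h2 : x ∉ ρ' := fun h => hxS (hρ'S h)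
      simp only [cfgOf, Finset.mem_union]
      exact decide_eq_decide.mpr (by tauto)
    · exact hcfgOf_mono _ _ (Finset.union_subset_union hsub le_rfl)
  -- A-membership only depends on the S-part of the pattern
  have hAiff : ∀ ρ τ : Finset (Site d), ρ ⊆ S → τ ⊆ T \ S →
      (cfgOf (ρ ∪ τ) ∈ A ↔ cfgOf ρ ∈ A) := by
    intro ρ τ hρ hτ
    have hag : ∀ x ∈ S, cfgOf (ρ ∪ τ) x = cfgOf ρ x := by
      intro x hx
      simp only [cfgOf, Finset.mem_union]
      refine decide_eq_decide.mpr ⟨fun h => ?_, Or.inl⟩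
      rcases h with h | h
      · exact h
      · exact absurd hx (Finset.mem_sdiff.mp (hτ h)).2
    exact ⟨fun h => hAdepS _ _ hag h, fun h => hAdepS _ _ (fun x hx => (hag x hx).symm) h⟩
  -- measure computations
  have hπA := measure_event (E := A) (Λ := S) hq0 hq1 hp hπ hAdepS
  have hπB := measure_event (E := B) (Λ := T) hq0 hq1 hp hπ hBdepT
  have hπBA := measure_event (E := B ∩ A) (Λ := T) hq0 hq1 hp hπ hBAdepT
  set aS : ℝ := ∑ ρ ∈ S.powerset,
    (∏ x ∈ S, if x ∈ ρ then p else q) * (if cfgOf ρ ∈ A then (1:ℝ) else 0) with haS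
  have haS0 : 0 ≤ aS := Finset.sum_nonneg fun ρ _ =>
    mul_nonneg (Finset.prod_nonneg fun x _ => by split <;> assumption) ind_nonneg
  -- splitting the sums over T into S and T \ S parts
  have hbsplit : (∑ σ ∈ T.powerset,
      (∏ x ∈ T, if x ∈ σ then p else q) * (if cfgOf σ ∈ B then (1:ℝ) else 0))
      = ∑ τ ∈ (T \ S).powerset, (∏ x ∈ T \ S, if x ∈ τ then p else q) *
          ∑ ρ ∈ S.powerset, (∏ x ∈ S, if x ∈ ρ then p else q) *
            (if cfgOf (ρ ∪ τ) ∈ B then (1:ℝ) else 0) := by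
    rw [sum_powerset_split hST]
    refine Finset.sum_congr rfl fun τ hτ => ?_
    rw [Finset.mul_sum]
    refine Finset.sum_congr rfl fun ρ hρ => ?_
    rw [weight_split hST (Finset.mem_powerset.mp hρ) (Finset.mem_powerset.mp hτ)]
    ring
  have hcsplit : (∑ σ ∈ T.powerset,
      (∏ x ∈ T, if x ∈ σ then p else q) * (@ite ℝ (cfgOf σ ∈ B ∩ A) (Classical.propDecidable _) (1:ℝ) 0))
      = ∑ τ ∈ (T \ S).powerset, (∏ x ∈ T \ S, if x ∈ τ then p else q) *
          ∑ ρ ∈ S.powerset, (∏ x ∈ S, if x ∈ ρ then p else q) *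
            ((if cfgOf ρ ∈ A then (1:ℝ) else 0) *
              (if cfgOf (ρ ∪ τ) ∈ B then (1:ℝ) else 0)) := by
    rw [sum_powerset_split hST]
    refine Finset.sum_congr rfl fun τ hτ => ?_
    rw [Finset.mul_sum]
    refine Finset.sum_congr rfl fun ρ hρ => ?_
    rw [weight_split hST (Finset.mem_powerset.mp hρ) (Finset.mem_powerset.mp hτ)]
    have hiff := hAiff ρ τ (Finset.mem_powerset.mp hρ) (Finset.mem_powerset.mp hτ)
    have : (@ite ℝ (cfgOf (ρ ∪ τ) ∈ B ∩ A) (Classical.propDecidable _) (1:ℝ) 0)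
        = (if cfgOf ρ ∈ A then (1:ℝ) else 0) * (if cfgOf (ρ ∪ τ) ∈ B then (1:ℝ) else 0) := by
      by_cases hBm : cfgOf (ρ ∪ τ) ∈ B
      · by_cases hAm : cfgOf ρ ∈ A
        · rw [if_pos ⟨hBm, hiff.mpr hAm⟩, if_pos hAm, if_pos hBm]; ring
        · rw [if_neg (fun hin => hAm (hiff.mp hin.2)), if_neg hAm]; ring
      · rw [if_neg (fun hin => hBm hin.1), if_neg hBm]; ring
    rw [this]
    ring
  -- key real inequality, via per-slice Harris
  have hreal : aS * (∑ σ ∈ T.powerset,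
        (∏ x ∈ T, if x ∈ σ then p else q) * (if cfgOf σ ∈ B then (1:ℝ) else 0))
      ≤ ∑ σ ∈ T.powerset,
        (∏ x ∈ T, if x ∈ σ then p else q) * (@ite ℝ (cfgOf σ ∈ B ∩ A) (Classical.propDecidable _) (1:ℝ) 0) := by
    rw [hbsplit, hcsplit, Finset.mul_sum]
    refine Finset.sum_le_sum fun τ hτ => ?_
    have hWout : (0:ℝ) ≤ ∏ x ∈ T \ S, if x ∈ τ then p else q :=
      Finset.prod_nonneg fun x _ => by split <;> assumption
    have hharris := harris hp0' hq0' S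
      (fun ρ => if cfgOf ρ ∈ A then (1:ℝ) else 0)
      (fun ρ => if cfgOf (ρ ∪ τ) ∈ B then (1:ℝ) else 0)
      (fun ρ => ind_nonneg) (fun ρ => ind_nonneg)
      (fun ρ ρ' hsub _ => ind_mono (hAdown ρ ρ' hsub))
      (fun ρ ρ' hsub hρ'S => ind_mono (hBdown τ ρ ρ' hsub hρ'S))
    rw [sum_weights hpq] at hharris
    calc aS * ((∏ x ∈ T \ S, if x ∈ τ then p else q) *
          ∑ ρ ∈ S.powerset, (∏ x ∈ S, if x ∈ ρ then p else q) *
            (if cfgOf (ρ ∪ τ) ∈ B then (1:ℝ) else 0))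
        = (∏ x ∈ T \ S, if x ∈ τ then p else q) *
          (aS * ∑ ρ ∈ S.powerset, (∏ x ∈ S, if x ∈ ρ then p else q) *
            (if cfgOf (ρ ∪ τ) ∈ B then (1:ℝ) else 0)) := by ring
      _ ≤ (∏ x ∈ T \ S, if x ∈ τ then p else q) *
          ∑ ρ ∈ S.powerset, (∏ x ∈ S, if x ∈ ρ then p else q) *
            ((if cfgOf ρ ∈ A then (1:ℝ) else 0) *
              (if cfgOf (ρ ∪ τ) ∈ B then (1:ℝ) else 0)) := by
          refine mul_le_mul_of_nonneg_left ?_ hWout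
          calc aS * _ ≤ 1 * (∑ ρ ∈ S.powerset, (∏ x ∈ S, if x ∈ ρ then p else q) *
              ((if cfgOf ρ ∈ A then (1:ℝ) else 0) *
                (if cfgOf (ρ ∪ τ) ∈ B then (1:ℝ) else 0))) := hharris
            _ = _ := one_mul _
  -- positivity of π B
  obtain ⟨ζ, hζ⟩ := hβim
  have hwit : cfgOf (T.filter (fun y => ζ y = true)) ∈ B := by
    rw [hB, Set.mem_setOf_eq, hT]
    rw [BPfin_congr (box d L) (fun x hx => cfgOf_agree (box d L) ζ hx)]
    exact hζ
  have hbpos : (0:ℝ) < ∑ σ ∈ T.powerset,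
      (∏ x ∈ T, if x ∈ σ then p else q) * (if cfgOf σ ∈ B then (1:ℝ) else 0) := by
    have hmem : T.filter (fun y => ζ y = true) ∈ T.powerset :=
      Finset.mem_powerset.mpr (Finset.filter_subset _ _)
    have hterm : (0:ℝ) < (∏ x ∈ T, if x ∈ T.filter (fun y => ζ y = true) then p else q) *
        (if cfgOf (T.filter (fun y => ζ y = true)) ∈ B then (1:ℝ) else 0) := by
      rw [if_pos hwit, mul_one]
      exact Finset.prod_pos fun x _ => by split <;> assumption
    refine lt_of_lt_of_le hterm (Finset.single_le_sum
      (f := fun σ => (∏ x ∈ T, if x ∈ σ then p else q) * (if cfgOf σ ∈ B then (1:ℝ) else 0))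
      (fun σ _ => mul_nonneg
        (Finset.prod_nonneg fun x _ => by split <;> assumption) ind_nonneg) hmem)
  have hB0 : π B ≠ 0 := by
    rw [hπB]
    exact (ENNReal.ofReal_pos.mpr hbpos).ne'
  have hBtop : π B ≠ ⊤ := by rw [hπB]; exact ENNReal.ofReal_ne_top
  have hBmeas : MeasurableSet B := event_measurableSet hBdepT
  have hkey : π A * π B ≤ π (B ∩ A) := by
    rw [hπA, hπB, hπBA, ← ENNReal.ofReal_mul haS0]
    exact ENNReal.ofReal_le_ofReal hreal
  have hcond : (ProbabilityTheory.cond π B) A = (π B)⁻¹ * π (B ∩ A) :=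
    ProbabilityTheory.cond_apply hBmeas π A
  rw [hcond]
  calc π A = (π B)⁻¹ * (π A * π B) := by
        rw [mul_comm (π A), ← mul_assoc, ENNReal.inv_mul_cancel hB0 hBtop, one_mul]
    _ ≤ (π B)⁻¹ * π (B ∩ A) := mul_le_mul_right hkey _
end MainProof
end
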